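/- arXiv:1705.01586 — 6 statements merged into one kernel-verified Lean document; each statement's English description precedes it below -/
import Mathlib

section
/- Let G and H be torsion-free groups of nilpotency class at most 2. If the power graphs P(G) and P(H) are isomorphic, then the directed power graphs of G and H are isomorphic. -/
/-- The power graph of a group `G`: distinct `x, y` are adjacent iff one is a
nonzero integer power of the other. -/
def powerGraph (G : Type*) [Group G] : SimpleGraph G where
  Adj x y := x ≠ y ∧ ∃ n : ℤ, n ≠ 0 ∧ (y = x ^ n ∨ x = y ^ n)
  symm := by
    constructor
    rintro x y ⟨hxy, n, hn, h⟩
    exact ⟨hxy.symm, n, hn, h.symm⟩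
  loopless := by constructor; rintro x ⟨h, -⟩; exact h rfl

/-- There is an arc `x → y` in the directed power graph iff `x ≠ y` and `y` is a
nonzero integer power of `x`. -/
def powArc {G : Type*} [Group G] (x y : G) : Prop :=
  x ≠ y ∧ ∃ n : ℤ, n ≠ 0 ∧ y = x ^ n

set_option linter.unusedSectionVars false
set_option linter.unusedVariables false

open scoped commutatorElement

namespace PG

variable {G : Type*} [Group G]

/-- commensurability -/
def Comm (x y : G) : Prop := ∃ m n : ℤ, m ≠ 0 ∧ n ≠ 0 ∧ x ^ m = y ^ n

section basic
variable (htf : ∀ g : G, g ≠ 1 → ¬ IsOfFinOrder g)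
include htf

lemma zpow_ne_one' {x : G} (hx : x ≠ 1) {n : ℤ} (hn : n ≠ 0) : x ^ n ≠ 1 := by
  intro h
  refine htf x hx (isOfFinOrder_iff_pow_eq_one.2 ⟨n.natAbs, by positivity, ?_⟩)
  have h2 : x ^ (-n) = 1 := by rw [zpow_neg, h, inv_one]
  rcases Int.natAbs_eq n with h' | h'
  · rw [← zpow_natCast, ← h', h]
  · rw [← zpow_natCast, ← neg_neg ((n.natAbs : ℤ)), ← h', h2]

lemma zpow_inj' {x : G} (hx : x ≠ 1) {a b : ℤ} (h : x ^ a = x ^ b) : a = b := by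
  by_contra hne
  exact zpow_ne_one' htf hx (sub_ne_zero.2 hne) (by rw [zpow_sub, h, mul_inv_cancel])

lemma inv_ne_self {x : G} (hx : x ≠ 1) : x⁻¹ ≠ x := by
  intro h
  have : x ^ (2:ℤ) = 1 := by
    rw [zpow_two]; nth_rewrite 1 [← h]; exact inv_mul_cancel x
  exact zpow_ne_one' htf hx (by norm_num) this

end basic

section nil
variable (htf : ∀ g : G, g ≠ 1 → ¬ IsOfFinOrder g)
variable (hnil : commutator G ≤ Subgroup.center G)
include htf hnil

omit htf in
private lemma conj_pow_aux (x y : G) (n : ℕ) :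
    x * y ^ n * x⁻¹ = (⁅x, y⁆) ^ n * y ^ n := by
  have hc : ∀ z : G, Commute (⁅x, y⁆) z := by
    intro z
    have := hnil (Subgroup.commutator_mem_commutator (Subgroup.mem_top x) (Subgroup.mem_top y))
    exact (Subgroup.mem_center_iff.1 this z).symm
  induction n with
  | zero => simp
  | succ n ih =>
    have h1 : x * y ^ (n+1) * x⁻¹ = (x * y ^ n * x⁻¹) * (x * y * x⁻¹) := by
      group
    rw [h1, ih]
    have h2 : x * y * x⁻¹ = ⁅x, y⁆ * y := by group
    rw [h2]
    calc ⁅x, y⁆ ^ n * y ^ n * (⁅x, y⁆ * y) = ⁅x, y⁆ ^ n * (y ^ n * ⁅x, y⁆) * y := by group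
    _ = ⁅x, y⁆ ^ n * (⁅x, y⁆ * y ^ n) * y := by rw [(hc (y ^ n)).eq]
    _ = ⁅x, y⁆ ^ (n+1) * y ^ (n+1) := by rw [pow_succ, pow_succ]; group

/-- if x commutes with a nonzero power of y then x commutes with y -/
lemma commute_of_commute_pow {x y : G} {n : ℤ} (hn : n ≠ 0)
    (h : Commute x (y ^ n)) : Commute x y := by
  -- reduce to natural positive power
  have key : ∀ m : ℕ, m ≠ 0 → Commute x (y ^ m) → Commute x y := by
    intro m hm hcm
    have h1 := conj_pow_aux hnil x y m
    have h2 : x * y ^ m * x⁻¹ = y ^ m := by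
      rw [hcm.eq]; group
    rw [h2] at h1
    have h3 : (⁅x, y⁆) ^ m = 1 := by
      have h4 : (⁅x, y⁆) ^ m * y ^ m = 1 * y ^ m := by rw [one_mul, ← h1]
      exact mul_right_cancel h4
    by_cases hco : ⁅x, y⁆ = 1
    · exact commutatorElement_eq_one_iff_commute.1 hco
    · exact absurd (isOfFinOrder_iff_pow_eq_one.2 ⟨m, Nat.pos_of_ne_zero hm, h3⟩) (htf _ hco)
  rcases Int.natAbs_eq n with h' | h'
  · refine key n.natAbs (by simpa using hn) ?_
    rw [← zpow_natCast, ← h']; exact h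
  · refine key n.natAbs (by simpa using hn) ?_
    have : Commute x ((y ^ n)⁻¹) := h.inv_right
    rw [← zpow_natCast, ← neg_neg ((n.natAbs : ℤ)), ← h', zpow_neg]
    exact this

lemma commute_of_comm {x y : G} (h : Comm x y) : Commute x y := by
  obtain ⟨m, n, hm, hn, hmn⟩ := h
  have : Commute x (y ^ n) := by rw [← hmn]; exact (Commute.refl x).zpow_right m
  exact commute_of_commute_pow htf hnil hn this

end nil

/-- unique roots -/
lemma unique_root (htf : ∀ g : G, g ≠ 1 → ¬ IsOfFinOrder g)
    {x y : G} (hc : Commute x y) {n : ℤ} (hn : n ≠ 0) (h : x ^ n = y ^ n) : x = y := by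
  have h1 : (x * y⁻¹) ^ n = 1 := by
    rw [hc.inv_right.mul_zpow, inv_zpow, h, mul_inv_cancel]
  by_contra hne
  have : x * y⁻¹ ≠ 1 := by
    intro h2; exact hne (mul_inv_eq_one.1 h2)
  exact zpow_ne_one' htf this hn h1

section order
variable {G : Type*} [Group G]

/-- y is an integer power of x -/
def dvdE (a b : G) : Prop := ∃ n : ℤ, b = a ^ n

/-- strict divisibility -/
def ltE (a b : G) : Prop := dvdE a b ∧ ¬ dvdE b a

/-- the component of g -/
def K (g : G) : Set G := {x | x ≠ 1 ∧ Comm g x}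

lemma comm_refl (x : G) : Comm x x := ⟨1, 1, one_ne_zero, one_ne_zero, rfl⟩

lemma comm_symm {x y : G} (h : Comm x y) : Comm y x := by
  obtain ⟨m, n, hm, hn, h⟩ := h; exact ⟨n, m, hn, hm, h.symm⟩

lemma comm_trans {x y z : G} (h1 : Comm x y) (h2 : Comm y z) : Comm x z := by
  obtain ⟨m, n, hm, hn, h1⟩ := h1
  obtain ⟨p, q, hp, hq, h2⟩ := h2
  refine ⟨m * p, q * n, mul_ne_zero hm hp, mul_ne_zero hq hn, ?_⟩
  rw [zpow_mul, h1, ← zpow_mul, mul_comm n p, zpow_mul, h2, ← zpow_mul]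

lemma dvdE_trans {a b c : G} (h1 : dvdE a b) (h2 : dvdE b c) : dvdE a c := by
  obtain ⟨n, rfl⟩ := h1; obtain ⟨m, rfl⟩ := h2; exact ⟨n * m, (zpow_mul a n m).symm⟩

lemma dvdE_comm {a b : G} (hb : b ≠ 1) (h : dvdE a b) : Comm a b := by
  obtain ⟨n, rfl⟩ := h
  have hn : n ≠ 0 := by rintro rfl; simp at hb
  exact ⟨n, 1, hn, one_ne_zero, by simp⟩

section withtf
variable (htf : ∀ g : G, g ≠ 1 → ¬ IsOfFinOrder g)
include htf

lemma dvdE_exp_ne_zero {a b : G} (hb : b ≠ 1) {n : ℤ} (h : b = a ^ n) : n ≠ 0 := by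
  rintro rfl; rw [zpow_zero] at h; exact hb h

lemma dvdE_antisymm {a b : G} (ha : a ≠ 1) (h1 : dvdE a b) (h2 : dvdE b a) :
    b = a ∨ b = a⁻¹ := by
  obtain ⟨n, rfl⟩ := h1
  obtain ⟨m, hm⟩ := h2
  rw [← zpow_mul] at hm
  have h1' : a ^ (1:ℤ) = a ^ (n * m) := by simpa using hm
  have := zpow_inj' htf ha h1'
  have hu : n = 1 ∨ n = -1 := Int.isUnit_iff.1 (IsUnit.of_mul_eq_one (a := n) m this.symm)
  rcases hu with rfl | rfl
  · left; simp
  · right; simp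

lemma ltE_iff {a b : G} (ha : a ≠ 1) (hb : b ≠ 1) :
    ltE a b ↔ ∃ n : ℤ, 2 ≤ n.natAbs ∧ b = a ^ n := by
  constructor
  · rintro ⟨⟨n, rfl⟩, hnd⟩
    refine ⟨n, ?_, rfl⟩
    have hn0 : n ≠ 0 := dvdE_exp_ne_zero htf hb rfl
    have hn1 : n ≠ 1 := by rintro rfl; exact hnd ⟨1, by simp⟩
    have hn1' : n ≠ -1 := by
      rintro rfl
      exact hnd ⟨-1, by simp⟩
    omega
  · rintro ⟨n, hn2, rfl⟩
    refine ⟨⟨n, rfl⟩, ?_⟩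
    rintro ⟨m, hm⟩
    rw [← zpow_mul] at hm
    have h1' : a ^ (1:ℤ) = a ^ (n * m) := by simpa using hm
    have := zpow_inj' htf ha h1'
    have hu : n = 1 ∨ n = -1 := Int.isUnit_iff.1 (IsUnit.of_mul_eq_one (a := n) m this.symm)
    rcases hu with rfl | rfl <;> simp at hn2

lemma ltE_exp {a : G} (ha : a ≠ 1) {n : ℤ} (hn : 2 ≤ n.natAbs) : ltE a (a ^ n) :=
  (ltE_iff htf ha (zpow_ne_one' htf ha (by omega))).2 ⟨n, hn, rfl⟩

lemma adj_iff {x y : G} (hx : x ≠ 1) (hy : y ≠ 1) :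
    (powerGraph G).Adj x y ↔ x ≠ y ∧ (dvdE x y ∨ dvdE y x) := by
  constructor
  · rintro ⟨hne, n, hn, h | h⟩
    · exact ⟨hne, Or.inl ⟨n, h⟩⟩
    · exact ⟨hne, Or.inr ⟨n, h⟩⟩
  · rintro ⟨hne, h | h⟩
    · obtain ⟨n, rfl⟩ := h
      exact ⟨hne, n, dvdE_exp_ne_zero htf hy rfl, Or.inl rfl⟩
    · obtain ⟨n, rfl⟩ := h
      exact ⟨hne, n, dvdE_exp_ne_zero htf hx rfl, Or.inr rfl⟩

lemma one_not_adj {y : G} : ¬ (powerGraph G).Adj 1 y := by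
  rintro ⟨hne, n, hn, h | h⟩
  · rw [one_zpow] at h; exact hne h.symm
  · by_cases hy : y = 1
    · exact hne hy.symm
    · exact zpow_ne_one' htf hy hn h.symm

lemma adj_ne_one {x y : G} (hx : x ≠ 1) (h : (powerGraph G).Adj x y) : y ≠ 1 := by
  rintro rfl
  exact one_not_adj htf h.symm

lemma adj_comm {x y : G} (hx : x ≠ 1) (hy : y ≠ 1) (h : (powerGraph G).Adj x y) :
    Comm x y := by
  rcases (adj_iff htf hx hy).1 h with ⟨-, h | h⟩
  · exact dvdE_comm hy h
  · exact comm_symm (dvdE_comm hx h)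

lemma comm_iff_graph {x y : G} (hx : x ≠ 1) (hy : y ≠ 1) :
    Comm x y ↔ (x = y ∨ (powerGraph G).Adj x y ∨
      ∃ z, (powerGraph G).Adj x z ∧ (powerGraph G).Adj z y) := by
  constructor
  · intro h
    by_cases hxy : x = y
    · exact Or.inl hxy
    obtain ⟨m, n, hm, hn, hmn⟩ := h
    set z := x ^ (2 * m) with hz
    have hzy : z = y ^ (2 * n) := by
      rw [hz, mul_comm 2 m, zpow_mul, hmn, ← zpow_mul, mul_comm n 2]
    have hz1 : z ≠ 1 := zpow_ne_one' htf hx (by omega)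
    by_cases hzx : z = x
    · right; left
      refine ⟨hxy, 2 * n, by omega, Or.inr ?_⟩
      rw [← hzy, hzx]
    by_cases hzy' : z = y
    · right; left
      exact ⟨hxy, 2 * m, by omega, Or.inl (by rw [← hz, hzy'])⟩
    · right; right
      refine ⟨z, ⟨Ne.symm hzx, 2 * m, by omega, Or.inl hz⟩, ⟨hzy', 2 * n, by omega, Or.inr hzy⟩⟩
  · rintro (rfl | h | ⟨z, h1, h2⟩)
    · exact comm_refl x
    · exact adj_comm htf hx hy h
    · have hz : z ≠ 1 := adj_ne_one htf hx h1
      exact comm_trans (adj_comm htf hx hz h1) (adj_comm htf hz hy h2)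

lemma mem_K_self {g : G} (hg : g ≠ 1) : g ∈ K g := ⟨hg, comm_refl g⟩

lemma K_mem_ne_one {g x : G} (h : x ∈ K g) : x ≠ 1 := h.1

lemma K_eq_of_mem {g x : G} (h : x ∈ K g) : K x = K g := by
  ext y
  exact ⟨fun hy => ⟨hy.1, comm_trans h.2 hy.2⟩,
         fun hy => ⟨hy.1, comm_trans (comm_symm h.2) hy.2⟩⟩

lemma zpow_mem_K {g x : G} (hx : x ∈ K g) {n : ℤ} (hn : n ≠ 0) : x ^ n ∈ K g :=
  ⟨zpow_ne_one' htf hx.1 hn, comm_trans hx.2 ⟨n, 1, hn, one_ne_zero, by simp⟩⟩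

end withtf
end order

section single
variable {G : Type*} [Group G]
variable (htf : ∀ g : G, g ≠ 1 → ¬ IsOfFinOrder g)
include htf

/-- strict power implies N[x] ≠ N[y] : witness adjacent to the root only -/
lemma noTwinStrict {a : G} (ha : a ≠ 1) {n : ℤ} (hn : 2 ≤ n.natAbs) :
    ∃ z, ((powerGraph G).Adj a z) ∧ ¬(z = a ^ n ∨ (powerGraph G).Adj (a ^ n) z) := by
  obtain ⟨k, hk, hkp⟩ := Nat.exists_infinite_primes (n.natAbs + 1)
  have hn0 : n ≠ 0 := by omega
  have hk0 : (k : ℤ) ≠ 0 := Int.natCast_ne_zero.2 hkp.pos.ne'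
  refine ⟨a ^ (k:ℤ), ⟨?_, (k:ℤ), hk0, Or.inl rfl⟩, ?_⟩
  · intro h
    have h1 : a ^ (1:ℤ) = a ^ (k:ℤ) := by simpa using h
    have := zpow_inj' htf ha h1
    omega
  · rintro (h | h)
    · have := zpow_inj' htf ha h
      omega
    · rcases (adj_iff htf (zpow_ne_one' htf ha hn0) (zpow_ne_one' htf ha hk0)).1 h
        with ⟨hne, ⟨m, hm⟩ | ⟨m, hm⟩⟩
      · -- a ^ k = (a ^ n) ^ m
        rw [← zpow_mul] at hm
        have heq := zpow_inj' htf ha hm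
        have hdvd : n.natAbs ∣ k := by
          have h3 : n ∣ (k:ℤ) := ⟨m, heq⟩
          have h4 := Int.natAbs_dvd_natAbs.2 h3
          simpa using h4
        rcases Nat.Prime.eq_one_or_self_of_dvd hkp _ hdvd with h1 | h1 <;> omega
      · -- a ^ n = (a ^ k) ^ m
        rw [← zpow_mul] at hm
        have heq := zpow_inj' htf ha hm
        have hdvd : k ∣ n.natAbs := by
          have h3 : (k:ℤ) ∣ n := ⟨m, heq⟩
          have h4 := Int.natAbs_dvd_natAbs.2 h3
          simpa using h4
        have := Nat.le_of_dvd (by omega) hdvd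
        omega

/-- equal closed neighbourhoods implies inverse -/
lemma twinChar {x y : G} (hx : x ≠ 1) (hy : y ≠ 1) (hxy : x ≠ y)
    (hN : ∀ z, (z = x ∨ (powerGraph G).Adj x z) ↔ (z = y ∨ (powerGraph G).Adj y z)) :
    y = x⁻¹ := by
  have hadj : (powerGraph G).Adj x y := by
    rcases (hN y).2 (Or.inl rfl) with h | h
    · exact absurd h.symm hxy
    · exact h
  have key : ∀ u v : G, u ≠ 1 → v ≠ 1 → u ≠ v → dvdE u v →
      (∀ z, (z = u ∨ (powerGraph G).Adj u z) ↔ (z = v ∨ (powerGraph G).Adj v z)) →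
      v = u⁻¹ := by
    intro u v hu hv huv hd hN'
    obtain ⟨n, hn⟩ := hd
    have hn0 : n ≠ 0 := dvdE_exp_ne_zero htf (hn ▸ hv) hn
    by_cases h2 : 2 ≤ n.natAbs
    · exfalso
      obtain ⟨z, hz1, hz2⟩ := noTwinStrict htf hu h2
      rw [← hn] at hz2
      exact hz2 ((hN' z).1 (Or.inr hz1))
    · have : n = 1 ∨ n = -1 := by omega
      rcases this with rfl | rfl
      · rw [zpow_one] at hn; exact absurd hn.symm huv
      · rw [hn, zpow_neg_one]
  rcases (adj_iff htf hx hy).1 hadj with ⟨-, h | h⟩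
  · exact key x y hx hy hxy h hN
  · have := key y x hy hx (Ne.symm hxy) h (fun z => (hN z).symm)
    rw [this, inv_inv]

/-- closed neighbourhoods of x and x⁻¹ agree -/
lemma inv_closed_nbhd {x : G} (hx : x ≠ 1) (z : G) :
    (z = x ∨ (powerGraph G).Adj x z) ↔ (z = x⁻¹ ∨ (powerGraph G).Adj x⁻¹ z) := by
  have hxinv : x⁻¹ ≠ 1 := by simpa using hx
  have hadj : (powerGraph G).Adj x x⁻¹ :=
    ⟨(inv_ne_self htf hx).symm, -1, by norm_num, Or.inl (by rw [zpow_neg_one])⟩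
  constructor
  · rintro (rfl | h)
    · exact Or.inr hadj.symm
    · by_cases hz : z = x⁻¹
      · exact Or.inl hz
      obtain ⟨hne, n, hn, h | h⟩ := h
      · refine Or.inr ⟨Ne.symm hz, -n, by omega, Or.inl ?_⟩
        rw [h]; group
      · refine Or.inr ⟨Ne.symm hz, -n, by omega, Or.inr ?_⟩
        rw [zpow_neg, ← h]
  · rintro (rfl | h)
    · exact Or.inr hadj
    · by_cases hz : z = x
      · exact Or.inl hz
      obtain ⟨hne, n, hn, h | h⟩ := h
      · refine Or.inr ⟨Ne.symm hz, -n, by omega, Or.inl ?_⟩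
        rw [h]; group
      · refine Or.inr ⟨Ne.symm hz, -n, by omega, Or.inr ?_⟩
        rw [zpow_neg, ← h, inv_inv]

lemma pow_pow_not_adj {x : G} (hx : x ≠ 1) {n m : ℤ} (h1 : ¬ n ∣ m) (h2 : ¬ m ∣ n) :
    x ^ n ≠ x ^ m ∧ ¬ (powerGraph G).Adj (x ^ n) (x ^ m) := by
  have hm0 : m ≠ 0 := by rintro rfl; exact h1 (dvd_zero n)
  have hn0 : n ≠ 0 := by rintro rfl; exact h2 (dvd_zero m)
  have hne : x ^ n ≠ x ^ m := by
    intro h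
    exact h1 (zpow_inj' htf hx h ▸ dvd_refl n)
  refine ⟨hne, ?_⟩
  intro hadj
  rcases (adj_iff htf (zpow_ne_one' htf hx hn0) (zpow_ne_one' htf hx hm0)).1 hadj
    with ⟨-, ⟨j, hj⟩ | ⟨j, hj⟩⟩
  · rw [← zpow_mul] at hj
    exact h1 ⟨j, zpow_inj' htf hx hj⟩
  · rw [← zpow_mul] at hj
    exact h2 ⟨j, zpow_inj' htf hx hj⟩

omit htf in
lemma prime_not_dvd {n : ℤ} {k : ℕ} (hk : Nat.Prime k) (h2 : 2 ≤ n.natAbs)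
    (hlt : n.natAbs < k) : ¬ (n ∣ (k:ℤ)) ∧ ¬ ((k:ℤ) ∣ n) := by
  constructor
  · intro h
    have h3 := Int.natAbs_dvd_natAbs.2 h
    simp only [Int.natAbs_natCast] at h3
    rcases hk.eq_one_or_self_of_dvd _ h3 with h1 | h1 <;> omega
  · intro h
    have h3 := Int.natAbs_dvd_natAbs.2 h
    simp only [Int.natAbs_natCast] at h3
    have := Nat.le_of_dvd (by omega) h3
    omega

lemma K_commute {g x y : G} (hnil : commutator G ≤ Subgroup.center G)
    (hx : x ∈ K g) (hy : y ∈ K g) : Commute x y :=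
  commute_of_comm htf hnil (comm_trans (comm_symm hx.2) hy.2)

/-- if some vertex of the component is non-adjacent to u, then u has a proper root -/
lemma exists_root_of_not_universal (hnil : commutator G ≤ Subgroup.center G)
    {g u : G} (hu : u ∈ K g)
    (h : ∃ y ∈ K g, y ≠ u ∧ ¬ (powerGraph G).Adj u y) :
    ∃ d ∈ K g, ∃ e : ℤ, 2 ≤ e.natAbs ∧ u = d ^ e := by
  obtain ⟨y, hy, hyu, hnadj⟩ := h
  have hcomm : Comm u y := comm_trans (comm_symm hu.2) hy.2
  have hcommute : Commute u y := K_commute htf hnil hu hy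
  obtain ⟨m, n, hm, hn, hmn⟩ := hcomm
  -- reduce to coprime exponents
  set d0 : ℤ := (Int.gcd m n : ℤ)
  have hd0 : 0 < (Int.gcd m n : ℤ) := by
    have := Int.gcd_pos_of_ne_zero_left n hm
    exact_mod_cast this
  set m' : ℤ := m / d0 with hm'def
  set n' : ℤ := n / d0 with hn'def
  have hmm : m = d0 * m' := by
    rw [hm'def]
    rw [Int.mul_ediv_cancel']
    exact Int.gcd_dvd_left m n
  have hnn : n = d0 * n' := by
    rw [hn'def]
    rw [Int.mul_ediv_cancel']
    exact Int.gcd_dvd_right m n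
  have hm'0 : m' ≠ 0 := by rintro h0; rw [h0, mul_zero] at hmm; exact hm hmm
  have hn'0 : n' ≠ 0 := by rintro h0; rw [h0, mul_zero] at hnn; exact hn hnn
  have hpow : u ^ m' = y ^ n' := by
    have h1 : (u ^ m') ^ d0 = (y ^ n') ^ d0 := by
      rw [← zpow_mul, ← zpow_mul, mul_comm m' d0, mul_comm n' d0, ← hmm, ← hnn, hmn]
    exact unique_root htf (hcommute.zpow_zpow m' n') (by omega) h1
  -- coprimality
  have hcop : Int.gcd m' n' = 1 := Int.gcd_div_gcd_div_gcd (by exact_mod_cast hd0)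
  -- Bezout
  have hbez : (1:ℤ) = m' * Int.gcdA m' n' + n' * Int.gcdB m' n' := by
    have := Int.gcd_eq_gcd_ab m' n'
    rw [hcop] at this
    exact_mod_cast this
  set A := Int.gcdA m' n'
  set B := Int.gcdB m' n'
  set d : G := u ^ B * y ^ A with hd
  have hdu : d ^ n' = u := by
    have hc2 : Commute (u ^ B) (y ^ A) := hcommute.zpow_zpow B A
    have e1 : d ^ n' = u ^ (B * n') * y ^ (A * n') := by
      rw [hd, hc2.mul_zpow, ← zpow_mul, ← zpow_mul]
    have e2 : y ^ (A * n') = u ^ (m' * A) := by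
      rw [mul_comm A n', zpow_mul, ← hpow, ← zpow_mul]
    rw [e1, e2, ← zpow_add]
    nth_rewrite 2 [show u = u ^ (1:ℤ) by rw [zpow_one]]
    congr 1
    linear_combination -hbez
  have hd1 : d ≠ 1 := by
    intro h0
    rw [h0, one_zpow] at hdu
    exact hu.1 hdu.symm
  have hn'2 : 2 ≤ n'.natAbs := by
    by_contra h2
    have : n' = 1 ∨ n' = -1 := by omega
    have hdvd : dvdE u y := by
      rcases this with h5 | h5
      · rw [h5, zpow_one] at hpow; exact ⟨m', hpow.symm⟩
      · refine ⟨-m', ?_⟩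
        rw [h5] at hpow
        rw [zpow_neg, hpow, zpow_neg_one, inv_inv]
    exact hnadj ((adj_iff htf hu.1 hy.1).2 ⟨Ne.symm hyu, Or.inl hdvd⟩)
  refine ⟨d, ⟨hd1, comm_trans hu.2 ⟨1, n', one_ne_zero, hn'0, by rw [zpow_one, hdu]⟩⟩,
    n', hn'2, hdu.symm⟩

/-- a universal vertex generates its component -/
lemma universal_gen {g u : G} (hu : u ∈ K g)
    (huni : ∀ y ∈ K g, y ≠ u → (powerGraph G).Adj u y) :
    ∀ y ∈ K g, ∃ k : ℤ, k ≠ 0 ∧ y = u ^ k := by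
  intro y hy
  by_cases hyu : y = u
  · exact ⟨1, one_ne_zero, by rw [hyu, zpow_one]⟩
  rcases (adj_iff htf hu.1 hy.1).1 (huni y hy hyu) with ⟨-, ⟨k, hk⟩ | ⟨k, hk⟩⟩
  · exact ⟨k, dvdE_exp_ne_zero htf hy.1 hk, hk⟩
  -- u = y ^ k
  have hk0 : k ≠ 0 := dvdE_exp_ne_zero htf hu.1 hk
  by_cases h2 : 2 ≤ k.natAbs
  · exfalso
    set t : ℤ := if 0 < k then k + 1 else k - 1 with ht
    have ht0 : t ≠ 0 := by rw [ht]; split <;> omega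
    have htk : t ≠ k := by rw [ht]; split <;> omega
    set z : G := y ^ t with hz
    have hzK : z ∈ K g := zpow_mem_K htf hy ht0
    have hzu : z ≠ u := by
      rw [hz, hk]
      intro h
      have := zpow_inj' htf hy.1 h
      omega
    rcases (adj_iff htf hu.1 hzK.1).1 (huni z hzK hzu) with ⟨-, ⟨j, hj⟩ | ⟨j, hj⟩⟩
    · -- z = u ^ j = y ^ (k * j)
      rw [hk, ← zpow_mul] at hj
      have := zpow_inj' htf hy.1 hj
      -- t = k * j, so k ∣ t, but k ∣ k so k ∣ ±1
      have hdvd : k ∣ t := ⟨j, this⟩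
      have hdvd2 : k ∣ (t - k) := dvd_sub hdvd (dvd_refl k)
      have h1 : t - k = 1 ∨ t - k = -1 := by rw [ht]; split <;> omega
      have hone : k ∣ 1 := by
        rcases h1 with h1 | h1
        · rwa [h1] at hdvd2
        · rw [h1] at hdvd2; exact (dvd_neg.1 hdvd2)
      have := Int.isUnit_iff.1 (isUnit_of_dvd_one hone)
      omega
    · -- u = z ^ j : y ^ k = y ^ (t * j)
      rw [hk, hz, ← zpow_mul] at hj
      have := zpow_inj' htf hy.1 hj
      have hdvd : t ∣ k := ⟨j, this⟩
      have hdvd2 : t ∣ (k - t) := dvd_sub hdvd (dvd_refl t)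
      have h1 : k - t = 1 ∨ k - t = -1 := by rw [ht]; split <;> omega
      have hone : t ∣ 1 := by
        rcases h1 with h1 | h1
        · rwa [h1] at hdvd2
        · rw [h1] at hdvd2; exact (dvd_neg.1 hdvd2)
      have := Int.isUnit_iff.1 (isUnit_of_dvd_one hone)
      rw [ht] at this
      rcases this with h5 | h5 <;> [skip; skip] <;>
        · revert h5; split <;> omega
  · have : k = 1 ∨ k = -1 := by omega
    rcases this with rfl | rfl
    · rw [zpow_one] at hk; exact ⟨1, one_ne_zero, by rw [zpow_one, hk]⟩
    · refine ⟨-1, by norm_num, ?_⟩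
      rw [zpow_neg_one, hk, zpow_neg_one, inv_inv]

end single

section iso
variable {G H : Type*} [Group G] [Group H]
variable (htG : ∀ g : G, g ≠ 1 → ¬ IsOfFinOrder g)
variable (htH : ∀ x : H, x ≠ 1 → ¬ IsOfFinOrder x)
variable (f : powerGraph G ≃g powerGraph H)
include htG htH

lemma f_one : f 1 = 1 := by
  by_contra hw
  have hadj : (powerGraph H).Adj (f 1) ((f 1)⁻¹) :=
    ⟨(inv_ne_self htH hw).symm, -1, by norm_num, Or.inl (by rw [zpow_neg_one])⟩
  set z := (f 1)⁻¹
  have h2 : (powerGraph G).Adj (f.symm (f 1)) (f.symm z) := f.symm.map_adj_iff.2 hadj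
  rw [f.symm_apply_apply] at h2
  exact one_not_adj htG h2

lemma f_ne_one {x : G} (hx : x ≠ 1) : f x ≠ 1 := by
  intro h
  exact hx (f.injective (h.trans (f_one htG htH f).symm))

lemma f_inv {x : G} (hx : x ≠ 1) : f x⁻¹ = (f x)⁻¹ := by
  have hxi : x⁻¹ ≠ 1 := by simpa using hx
  refine twinChar htH (f_ne_one htG htH f hx) (f_ne_one htG htH f hxi)
      (fun h => inv_ne_self htG hx ((f.injective h).symm)) ?_
  intro w
  obtain ⟨v, rfl⟩ := f.surjective w
  have base := inv_closed_nbhd htG hx v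
  constructor
  · rintro (h | h)
    · rcases base.1 (Or.inl (f.injective h)) with h' | h'
      · exact Or.inl (congrArg f h')
      · exact Or.inr (f.map_adj_iff.2 h')
    · rcases base.1 (Or.inr (f.map_adj_iff.1 h)) with h' | h'
      · exact Or.inl (congrArg f h')
      · exact Or.inr (f.map_adj_iff.2 h')
  · rintro (h | h)
    · rcases base.2 (Or.inl (f.injective h)) with h' | h'
      · exact Or.inl (congrArg f h')
      · exact Or.inr (f.map_adj_iff.2 h')
    · rcases base.2 (Or.inr (f.map_adj_iff.1 h)) with h' | h'
      · exact Or.inl (congrArg f h')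
      · exact Or.inr (f.map_adj_iff.2 h')

lemma f_comm {x y : G} (hx : x ≠ 1) (hy : y ≠ 1) :
    Comm x y ↔ Comm (f x) (f y) := by
  rw [comm_iff_graph htG hx hy, comm_iff_graph htH (f_ne_one htG htH f hx) (f_ne_one htG htH f hy)]
  constructor
  · rintro (rfl | h | ⟨z, h1, h2⟩)
    · exact Or.inl rfl
    · exact Or.inr (Or.inl (f.map_adj_iff.2 h))
    · exact Or.inr (Or.inr ⟨f z, f.map_adj_iff.2 h1, f.map_adj_iff.2 h2⟩)
  · rintro (h | h | ⟨w, h1, h2⟩)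
    · exact Or.inl (f.injective h)
    · exact Or.inr (Or.inl (f.map_adj_iff.1 h))
    · refine Or.inr (Or.inr ⟨f.symm w, ?_, ?_⟩)
      · have := f.symm.map_adj_iff.2 h1
        rwa [f.symm_apply_apply] at this
      · have := f.symm.map_adj_iff.2 h2
        rwa [f.symm_apply_apply] at this

lemma f_K_image {g : G} (hg : g ≠ 1) : f '' K g = K (f g) := by
  ext w
  constructor
  · rintro ⟨y, ⟨hy1, hy2⟩, rfl⟩
    exact ⟨f_ne_one htG htH f hy1, (f_comm htG htH f hg hy1).1 hy2⟩
  · rintro ⟨hw1, hw2⟩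
    have hsw : f.symm w ≠ 1 := by
      intro h
      apply hw1
      have := congrArg f h
      rwa [f.apply_symm_apply, f_one htG htH f] at this
    refine ⟨f.symm w, ⟨hsw, ?_⟩, f.apply_symm_apply w⟩
    have : Comm (f g) (f (f.symm w)) := by rwa [f.apply_symm_apply]
    exact (f_comm htG htH f hg hsw).2 this

/-- for a strict edge, f transports it one way or the other, exclusively -/
lemma ltE_image_cases {a b : G} (ha : a ≠ 1) (hb : b ≠ 1) (h : ltE a b) :
    ltE (f a) (f b) ∨ ltE (f b) (f a) := by
  have hab : a ≠ b := by
    rintro rfl; exact h.2 h.1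
  have hfa := f_ne_one htG htH f ha
  have hfb := f_ne_one htG htH f hb
  have hadj : (powerGraph G).Adj a b := (adj_iff htG ha hb).2 ⟨hab, Or.inl h.1⟩
  have hfadj := f.map_adj_iff.2 hadj
  rcases (adj_iff htH hfa hfb).1 hfadj with ⟨hfne, hd | hd⟩
  · by_cases hd' : dvdE (f b) (f a)
    · exfalso
      rcases dvdE_antisymm htH hfa hd hd' with h1 | h1
      · exact hfne h1.symm
      · rw [← f_inv htG htH f ha] at h1
        have : b = a⁻¹ := f.injective h1
        subst this
        exact h.2 ⟨-1, by rw [zpow_neg_one, inv_inv]⟩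
    · exact Or.inl ⟨hd, hd'⟩
  · by_cases hd' : dvdE (f a) (f b)
    · exfalso
      rcases dvdE_antisymm htH hfb hd hd' with h1 | h1
      · exact hfne h1
      · rw [← f_inv htG htH f hb] at h1
        have : a = b⁻¹ := f.injective h1
        subst this
        exact h.2 ⟨-1, by rw [zpow_neg_one]⟩
    · exact Or.inr ⟨hd, hd'⟩

lemma forcing_up {x y w : G} (hx : x ≠ 1) (hy : y ≠ 1) (hw : w ≠ 1)
    (h1 : ltE x y) (h2 : ltE x w) (hne : y ≠ w) (hnadj : ¬ (powerGraph G).Adj y w) :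
    (ltE (f x) (f y) ↔ ltE (f x) (f w)) := by
  have key : ∀ u v : G, u ≠ 1 → v ≠ 1 → ltE x u → ltE x v → u ≠ v →
      ¬ (powerGraph G).Adj u v → ltE (f x) (f u) → ltE (f x) (f v) := by
    intro u v hu hv hxu hxv huv hnadj' hP
    rcases ltE_image_cases htG htH f hx hv hxv with h | h
    · exact h
    · exfalso
      have hdv : dvdE (f v) (f u) := dvdE_trans h.1 hP.1
      have hfuv : f u ≠ f v := fun hh => huv (f.injective hh)
      have : (powerGraph H).Adj (f v) (f u) :=
        (adj_iff htH (f_ne_one htG htH f hv) (f_ne_one htG htH f hu)).2 ⟨hfuv.symm, Or.inl hdv⟩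
      exact hnadj' (f.map_adj_iff.1 this.symm)
  exact ⟨key y w hy hw h1 h2 hne hnadj,
    key w y hw hy h2 h1 hne.symm (fun h => hnadj h.symm)⟩

lemma forcing_down {x z y : G} (hx : x ≠ 1) (hz : z ≠ 1) (hy : y ≠ 1)
    (h1 : ltE x y) (h2 : ltE z y) (hne : x ≠ z) (hnadj : ¬ (powerGraph G).Adj x z) :
    (ltE (f x) (f y) ↔ ltE (f z) (f y)) := by
  have key : ∀ u v : G, u ≠ 1 → v ≠ 1 → ltE u y → ltE v y → u ≠ v →
      ¬ (powerGraph G).Adj u v → ltE (f u) (f y) → ltE (f v) (f y) := by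
    intro u v hu hv huy hvy huv hnadj' hP
    rcases ltE_image_cases htG htH f hv hy hvy with h | h
    · exact h
    · exfalso
      have hdv : dvdE (f u) (f v) := dvdE_trans hP.1 h.1
      have hfuv : f u ≠ f v := fun hh => huv (f.injective hh)
      have : (powerGraph H).Adj (f u) (f v) :=
        (adj_iff htH (f_ne_one htG htH f hu) (f_ne_one htG htH f hv)).2 ⟨hfuv, Or.inl hdv⟩
      exact hnadj' (f.map_adj_iff.1 this)
  exact ⟨key x z hx hz h1 h2 hne hnadj,
    key z x hz hx h2 h1 hne.symm (fun h => hnadj h.symm)⟩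

/-- orientation marker: is the edge from x to x² preserved by f -/
def Vor (f : powerGraph G ≃g powerGraph H) (x : G) : Prop := ltE (f x) (f (x ^ (2:ℤ)))

lemma up_edge_V {x : G} (hx : x ≠ 1) {n : ℤ} (hn : 2 ≤ n.natAbs) :
    (ltE (f x) (f (x ^ n)) ↔ Vor f x) := by
  obtain ⟨k, hk, hkp⟩ := Nat.exists_infinite_primes (n.natAbs + 3)
  have hk2 : 2 ≤ ((k:ℤ)).natAbs := by simpa using hkp.two_le
  have hd1 := prime_not_dvd hkp hn (by omega)
  have hd2 := prime_not_dvd hkp (n := 2) (by norm_num) (by omega)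
  have hna1 := pow_pow_not_adj htG hx hd1.1 hd1.2
  have hna2 := pow_pow_not_adj htG hx hd2.2 hd2.1
  have e1 : ltE (f x) (f (x ^ n)) ↔ ltE (f x) (f (x ^ (k:ℤ))) :=
    forcing_up htG htH f hx (zpow_ne_one' htG hx (by omega)) (zpow_ne_one' htG hx (by omega))
      (ltE_exp htG hx hn) (ltE_exp htG hx hk2) hna1.1 hna1.2
  have e2 : ltE (f x) (f (x ^ (k:ℤ))) ↔ ltE (f x) (f (x ^ (2:ℤ))) :=
    forcing_up htG htH f hx (zpow_ne_one' htG hx (by omega)) (zpow_ne_one' htG hx (by norm_num))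
      (ltE_exp htG hx hk2) (ltE_exp htG hx (by norm_num))
      hna2.1 hna2.2
  exact e1.trans e2

lemma V_step {x d : G} (hx : x ≠ 1) (hd : d ≠ 1) {n e : ℤ} (hn : 2 ≤ n.natAbs)
    (he : 2 ≤ e.natAbs) (hxd : x = d ^ e) : (Vor f x ↔ Vor f (x ^ n)) := by
  have henNA : 4 ≤ (e * n).natAbs := by
    rw [Int.natAbs_mul]; nlinarith
  obtain ⟨s, hs, hsp⟩ := Nat.exists_infinite_primes ((e*n).natAbs + e.natAbs + 3)
  have hs2 : 2 ≤ ((s:ℤ)).natAbs := by simpa using hsp.two_le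
  have hs0 : (s:ℤ) ≠ 0 := by omega
  have hn0 : n ≠ 0 := by omega
  have hsnNA : 2 ≤ ((s:ℤ) * n).natAbs := by
    rw [Int.natAbs_mul]
    nlinarith
  set w : G := x ^ n with hwdef
  set y : G := x ^ ((s:ℤ) * n) with hydef
  set z : G := d ^ (s:ℤ) with hzdef
  have hw1 : w ≠ 1 := zpow_ne_one' htG hx hn0
  have hy1 : y ≠ 1 := zpow_ne_one' htG hx (mul_ne_zero hs0 hn0)
  have hz1 : z ≠ 1 := zpow_ne_one' htG hd hs0
  have hyw : y = w ^ (s:ℤ) := by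
    rw [hydef, hwdef, ← zpow_mul, mul_comm]
  have hyz : y = z ^ (e * n) := by
    rw [hydef, hzdef, hxd, ← zpow_mul, ← zpow_mul]
    congr 1
    ring
  -- edges
  have hE1 : ltE x y := by
    rw [hydef]
    exact ltE_exp htG hx hsnNA
  have hE2 : ltE w y := by
    rw [hyw]; exact ltE_exp htG hw1 hs2
  have hE3 : ltE z y := by
    rw [hyz]; exact ltE_exp htG hz1 (by omega)
  -- nonadjacency z,x (as powers of d: s vs e)
  have hdx := prime_not_dvd hsp he (by omega)
  have hnax := pow_pow_not_adj htG hd (n := (s:ℤ)) (m := e) hdx.2 hdx.1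
  have hzx_ne : x ≠ z := by rw [hxd, hzdef]; exact fun h => hnax.1 h.symm
  have hzx_nadj : ¬ (powerGraph G).Adj x z := by
    rw [hxd, hzdef]; exact fun h => hnax.2 h.symm
  -- nonadjacency z,w (as powers of d: s vs e*n)
  have hwd : w = d ^ (e * n) := by rw [hwdef, hxd, ← zpow_mul]
  have hdw := prime_not_dvd hsp (n := e * n) (by omega) (by omega)
  have hnaw := pow_pow_not_adj htG hd (n := (s:ℤ)) (m := e * n) hdw.2 hdw.1
  have hzw_ne : w ≠ z := by rw [hwd, hzdef]; exact fun h => hnaw.1 h.symm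
  have hzw_nadj : ¬ (powerGraph G).Adj w z := by
    rw [hwd, hzdef]; exact fun h => hnaw.2 h.symm
  -- chain
  have c1 : ltE (f x) (f y) ↔ Vor f x := by
    rw [hydef]
    exact up_edge_V htG htH f hx hsnNA
  have c2 : ltE (f x) (f y) ↔ ltE (f z) (f y) :=
    forcing_down htG htH f hx hz1 hy1 hE1 hE3 hzx_ne hzx_nadj
  have c3 : ltE (f w) (f y) ↔ ltE (f z) (f y) :=
    forcing_down htG htH f hw1 hz1 hy1 hE2 hE3 hzw_ne hzw_nadj
  have c4 : ltE (f w) (f y) ↔ Vor f w := by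
    rw [hyw]
    exact up_edge_V htG htH f hw1 hs2
  rw [← c1, c2, ← c3, c4]

lemma V_const (hnilG : commutator G ≤ Subgroup.center G) {g : G}
    (hNU : ∀ u ∈ K g, ∃ y ∈ K g, y ≠ u ∧ ¬ (powerGraph G).Adj u y)
    {x : G} (hg : g ≠ 1) (hx : x ∈ K g) : (Vor f x ↔ Vor f g) := by
  have hgK : g ∈ K g := mem_K_self htG hg
  obtain ⟨dx, hdx, ex, hex, hxe⟩ := exists_root_of_not_universal htG hnilG hx (hNU x hx)
  obtain ⟨dg, hdg, eg, heg, hge⟩ := exists_root_of_not_universal htG hnilG hgK (hNU g hgK)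
  obtain ⟨m, n, hm, hn, hmn⟩ := hx.2
  -- g ^ m = x ^ n ; common upper element c = g ^ (2m) = x ^ (2n)
  have hkey : x ^ ((2:ℤ) * n) = g ^ ((2:ℤ) * m) := by
    rw [mul_comm (2:ℤ) n, mul_comm (2:ℤ) m, zpow_mul, zpow_mul, hmn]
  have h1 : Vor f x ↔ Vor f (x ^ ((2:ℤ) * n)) :=
    V_step htG htH f hx.1 hdx.1 (by rw [Int.natAbs_mul]; simp; omega) hex hxe
  have h2 : Vor f g ↔ Vor f (g ^ ((2:ℤ) * m)) :=
    V_step htG htH f hg hdg.1 (by rw [Int.natAbs_mul]; simp; omega) heg hge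
  rw [h1, h2, hkey]

end iso

section psi
variable {G : Type*} [Group G]

open scoped Classical in
/-- rational coordinate of x relative to base g : m/n where x^n = g^m -/
noncomputable def psi (g x : G) : ℚ :=
  if h : ∃ p : ℤ × ℤ, p.2 ≠ 0 ∧ x ^ p.2 = g ^ p.1 then
    ((h.choose.1 : ℚ) / (h.choose.2 : ℚ)) else 0

variable (htf : ∀ g : G, g ≠ 1 → ¬ IsOfFinOrder g)
include htf

lemma psi_spec {g x : G} (hg : g ≠ 1) {m n : ℤ} (hn : n ≠ 0) (h : x ^ n = g ^ m) :
    psi g x = (m : ℚ) / (n : ℚ) := by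
  have hex : ∃ p : ℤ × ℤ, p.2 ≠ 0 ∧ x ^ p.2 = g ^ p.1 := ⟨(m, n), hn, h⟩
  rw [psi, dif_pos hex]
  obtain ⟨hn', h'⟩ := hex.choose_spec
  set m' := hex.choose.1
  set n' := hex.choose.2
  -- cross-multiply
  have hcross : g ^ (m' * n) = g ^ (m * n') := by
    have e1 : (x ^ n') ^ n = (x ^ n) ^ n' := by
      rw [← zpow_mul, ← zpow_mul, mul_comm]
    rw [h', h] at e1
    rw [← zpow_mul, ← zpow_mul] at e1
    exact e1
  have heq := zpow_inj' htf hg hcross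
  rw [div_eq_div_iff (by exact_mod_cast hn') (by exact_mod_cast hn)]
  exact_mod_cast heq

lemma psi_mem_spec {g x : G} (hg : g ≠ 1) (hx : x ∈ K g) :
    ∃ m n : ℤ, m ≠ 0 ∧ n ≠ 0 ∧ x ^ n = g ^ m ∧ psi g x = (m : ℚ) / (n : ℚ) := by
  obtain ⟨m, n, hm, hn, hmn⟩ := hx.2
  exact ⟨m, n, hm, hn, hmn.symm, psi_spec htf hg hn hmn.symm⟩

lemma psi_ne_zero {g x : G} (hg : g ≠ 1) (hx : x ∈ K g) : psi g x ≠ 0 := by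
  obtain ⟨m, n, hm, hn, -, hspec⟩ := psi_mem_spec htf hg hx
  rw [hspec]
  exact div_ne_zero (by exact_mod_cast hm) (by exact_mod_cast hn)

lemma psi_inj (hnil : commutator G ≤ Subgroup.center G) {g x y : G} (hg : g ≠ 1)
    (hx : x ∈ K g) (hy : y ∈ K g) (h : psi g x = psi g y) : x = y := by
  obtain ⟨m, n, hm, hn, hxe, hxs⟩ := psi_mem_spec htf hg hx
  obtain ⟨p, q, hp, hq, hye, hys⟩ := psi_mem_spec htf hg hy
  rw [hxs, hys, div_eq_div_iff (by exact_mod_cast hn) (by exact_mod_cast hq)] at h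
  have hcross : m * q = p * n := by exact_mod_cast h
  have e1 : x ^ (n * q) = y ^ (n * q) := by
    have a1 : x ^ (n * q) = g ^ (m * q) := by rw [zpow_mul, hxe, ← zpow_mul]
    have a2 : y ^ (n * q) = g ^ (p * n) := by
      rw [mul_comm n q, zpow_mul, hye, ← zpow_mul]
    rw [a1, a2, hcross]
  exact unique_root htf (K_commute htf hnil hx hy) (mul_ne_zero hn hq) e1

lemma psi_zpow {g x : G} (hg : g ≠ 1) (hx : x ∈ K g) {k : ℤ} (hk : k ≠ 0) :
    psi g (x ^ k) = (k : ℚ) * psi g x := by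
  obtain ⟨m, n, hm, hn, hxe, hxs⟩ := psi_mem_spec htf hg hx
  have h1 : (x ^ k) ^ n = g ^ (k * m) := by
    rw [← zpow_mul, mul_comm k n, zpow_mul, hxe, ← zpow_mul, mul_comm m k]
  rw [psi_spec htf hg hn h1, hxs]
  push_cast
  ring

lemma psi_pow_iff (hnil : commutator G ≤ Subgroup.center G) {g x y : G} (hg : g ≠ 1)
    (hx : x ∈ K g) (hy : y ∈ K g) (k : ℤ) :
    y = x ^ k ↔ psi g y = (k : ℚ) * psi g x := by
  constructor
  · rintro rfl
    have hk : k ≠ 0 := by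
      rintro rfl
      rw [zpow_zero] at hy
      exact hy.1 rfl
    exact psi_zpow htf hg hx hk
  · intro h
    have hk : k ≠ 0 := by
      rintro rfl
      rw [Int.cast_zero, zero_mul] at h
      exact psi_ne_zero htf hg hy h
    refine psi_inj htf hnil hg hy (zpow_mem_K htf hx hk) ?_
    rw [h, psi_zpow htf hg hx hk]

end psi

section matching
variable {G H : Type*} [Group G] [Group H]
variable (htG : ∀ g : G, g ≠ 1 → ¬ IsOfFinOrder g)
variable (htH : ∀ x : H, x ≠ 1 → ¬ IsOfFinOrder x)
variable (hnilG : commutator G ≤ Subgroup.center G)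
variable (hnilH : commutator H ≤ Subgroup.center H)
variable (f : powerGraph G ≃g powerGraph H)
include htG htH hnilG hnilH

/-- from matching rational coordinate images, build an arc-preserving bijection -/
lemma match_bij {g : G} (hg : g ≠ 1)
    (hsame : psi g '' (K g) = psi (f g) '' (K (f g))) :
    ∃ ψ : G → H, Set.BijOn ψ (K g) (f '' (K g)) ∧
      ∀ a ∈ K g, ∀ b ∈ K g, (powArc a b ↔ powArc (ψ a) (ψ b)) := by
  have hfg : f g ≠ 1 := f_ne_one htG htH f hg
  have himg : f '' (K g) = K (f g) := f_K_image htG htH f hg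
  classical
  set ψ : G → H := fun x =>
    if h : ∃ y, y ∈ K (f g) ∧ psi (f g) y = psi g x then h.choose else 1 with hψ
  have hspec : ∀ x ∈ K g, ψ x ∈ K (f g) ∧ psi (f g) (ψ x) = psi g x := by
    intro x hx
    have hmem : psi g x ∈ psi (f g) '' (K (f g)) := by
      rw [← hsame]; exact ⟨x, hx, rfl⟩
    obtain ⟨y, hy, hyx⟩ := hmem
    have hex : ∃ y, y ∈ K (f g) ∧ psi (f g) y = psi g x := ⟨y, hy, hyx⟩
    rw [hψ]
    simp only [dif_pos hex]
    exact hex.choose_spec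
  refine ⟨ψ, ⟨?_, ?_, ?_⟩, ?_⟩
  · intro x hx
    rw [himg]
    exact (hspec x hx).1
  · intro x hx x' hx' h
    have e1 := (hspec x hx).2
    have e2 := (hspec x' hx').2
    rw [h] at e1
    exact psi_inj htG hnilG hg hx hx' (e1.symm.trans e2)
  · intro w hw
    rw [himg] at hw
    have hmem : psi (f g) w ∈ psi g '' (K g) := by
      rw [hsame]; exact ⟨w, hw, rfl⟩
    obtain ⟨x, hx, hxw⟩ := hmem
    refine ⟨x, hx, ?_⟩
    have := (hspec x hx).2
    rw [hxw] at this
    exact psi_inj htH hnilH hfg ((hspec x hx).1) hw this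
  · intro a ha b hb
    have hψa := hspec a ha
    have hψb := hspec b hb
    constructor
    · rintro ⟨hne, k, hk, hbk⟩
      refine ⟨?_, k, hk, ?_⟩
      · intro h
        apply hne
        have e1 : psi g a = psi g b := by
          rw [← hψa.2, ← hψb.2, h]
        exact psi_inj htG hnilG hg ha hb e1
      · rw [(psi_pow_iff htH hnilH hfg hψa.1 hψb.1 k), hψa.2, hψb.2]
        exact (psi_pow_iff htG hnilG hg ha hb k).1 hbk
    · rintro ⟨hne, k, hk, hbk⟩
      refine ⟨?_, k, hk, ?_⟩
      · rintro rfl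
        exact hne rfl
      · rw [(psi_pow_iff htG hnilG hg ha hb k)]
        rw [(psi_pow_iff htH hnilH hfg hψa.1 hψb.1 k), hψa.2, hψb.2] at hbk
        exact hbk
end matching

section images
variable {G : Type*} [Group G]
variable (htf : ∀ g : G, g ≠ 1 → ¬ IsOfFinOrder g)
include htf

lemma psi_image_universal {g u : G} (hu : u ∈ K g)
    (huni : ∀ y ∈ K g, y ≠ u → (powerGraph G).Adj u y) :
    psi u '' (K g) = {q : ℚ | ∃ k : ℤ, k ≠ 0 ∧ q = (k:ℚ)} := by
  ext q
  constructor
  · rintro ⟨y, hy, rfl⟩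
    obtain ⟨k, hk0, hyk⟩ := universal_gen htf hu huni y hy
    refine ⟨k, hk0, ?_⟩
    have : y ^ (1:ℤ) = u ^ k := by rw [zpow_one, hyk]
    rw [psi_spec htf hu.1 one_ne_zero this]
    simp
  · rintro ⟨k, hk0, rfl⟩
    refine ⟨u ^ k, zpow_mem_K htf hu hk0, ?_⟩
    have : (u ^ k) ^ (1:ℤ) = u ^ k := by rw [zpow_one]
    rw [psi_spec htf hu.1 one_ne_zero this]
    simp

lemma psi_image_divisible {g : G} (hg : g ≠ 1)
    (hdiv : ∀ n : ℕ, 1 ≤ n → ∃ t ∈ K g, t ^ (n:ℤ) = g) :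
    psi g '' (K g) = {q : ℚ | q ≠ 0} := by
  ext q
  constructor
  · rintro ⟨y, hy, rfl⟩
    exact psi_ne_zero htf hg hy
  · intro hq
    obtain ⟨t, ht, hte⟩ := hdiv q.den q.den_pos
    have hden : ((q.den:ℤ)) ≠ 0 := by exact_mod_cast q.den_pos.ne'
    have hnum : q.num ≠ 0 := Rat.num_ne_zero.2 hq
    refine ⟨t ^ q.num, zpow_mem_K htf ht hnum, ?_⟩
    have h1 : (t ^ q.num) ^ ((q.den:ℤ)) = g ^ q.num := by
      rw [← zpow_mul, mul_comm, zpow_mul, hte]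
    rw [psi_spec htf hg hden h1]
    exact_mod_cast Rat.num_div_den q

end images

section cases
variable {G H : Type*} [Group G] [Group H]
variable (htG : ∀ g : G, g ≠ 1 → ¬ IsOfFinOrder g)
variable (htH : ∀ x : H, x ≠ 1 → ¬ IsOfFinOrder x)
variable (hnilG : commutator G ≤ Subgroup.center G)
variable (f : powerGraph G ≃g powerGraph H)
include htG htH hnilG

lemma pres_arcs {g : G} (hg : g ≠ 1)
    (hNU : ∀ u ∈ K g, ∃ y ∈ K g, y ≠ u ∧ ¬ (powerGraph G).Adj u y)
    (hP : Vor f g) :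
    ∀ a ∈ K g, ∀ b ∈ K g, (powArc a b ↔ powArc (f a) (f b)) := by
  have presAll : ∀ a ∈ K g, ∀ (n : ℤ), 2 ≤ n.natAbs → ltE (f a) (f (a ^ n)) := by
    intro a ha n hn
    rw [up_edge_V htG htH f ha.1 hn, V_const htG htH f hnilG hNU hg ha]
    exact hP
  intro a ha b hb
  have fa1 : f a ≠ 1 := f_ne_one htG htH f ha.1
  have fb1 : f b ≠ 1 := f_ne_one htG htH f hb.1
  constructor
  · rintro ⟨hne, k, hk, hbk⟩
    by_cases h2 : 2 ≤ k.natAbs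
    · have hlt : ltE (f a) (f b) := by
        have := presAll a ha k h2
        rwa [← hbk] at this
      obtain ⟨n, hn2, hfb⟩ := (ltE_iff htH fa1 fb1).1 hlt
      refine ⟨?_, n, by omega, hfb⟩
      intro h
      exact hlt.2 ⟨1, by rw [zpow_one, h]⟩
    · have hk1 : k = 1 ∨ k = -1 := by omega
      rcases hk1 with rfl | rfl
      · rw [zpow_one] at hbk; exact absurd hbk.symm hne
      · rw [zpow_neg_one] at hbk
        refine ⟨?_, -1, by norm_num, ?_⟩
        · rw [hbk, f_inv htG htH f ha.1]
          exact (inv_ne_self htH fa1).symm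
        · rw [hbk, f_inv htG htH f ha.1, zpow_neg_one]
  · rintro ⟨hne, k, hk, hbk⟩
    have hane : a ≠ b := fun h => hne (by rw [h])
    by_cases h2 : 2 ≤ k.natAbs
    · have hlt : ltE (f a) (f b) := (ltE_iff htH fa1 fb1).2 ⟨k, h2, hbk⟩
      have hadj : (powerGraph G).Adj a b :=
        f.map_adj_iff.1 ((adj_iff htH fa1 fb1).2 ⟨hne, Or.inl hlt.1⟩)
      rcases (adj_iff htG ha.1 hb.1).1 hadj with ⟨-, ⟨j, hj⟩ | ⟨j, hj⟩⟩
      · exact ⟨hane, j, dvdE_exp_ne_zero htG hb.1 hj, hj⟩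
      · have hj0 : j ≠ 0 := dvdE_exp_ne_zero htG ha.1 hj
        by_cases hj2 : 2 ≤ j.natAbs
        · exfalso
          have := presAll b hb j hj2
          rw [← hj] at this
          exact this.2 hlt.1
        · have hj1 : j = 1 ∨ j = -1 := by omega
          rcases hj1 with rfl | rfl
          · rw [zpow_one] at hj; exact absurd hj hane
          · rw [zpow_neg_one] at hj
            refine ⟨hane, -1, by norm_num, ?_⟩
            rw [zpow_neg_one, hj, inv_inv]
    · have hk0 : k ≠ 0 := hk
      have hk1 : k = 1 ∨ k = -1 := by omega
      rcases hk1 with rfl | rfl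
      · rw [zpow_one] at hbk; exact absurd hbk.symm hne
      · rw [zpow_neg_one, ← f_inv htG htH f ha.1] at hbk
        have hba : b = a⁻¹ := f.injective hbk
        refine ⟨hane, -1, by norm_num, by rw [zpow_neg_one, hba]⟩

end cases

section revsec
variable {G H : Type*} [Group G] [Group H]
variable (htG : ∀ g : G, g ≠ 1 → ¬ IsOfFinOrder g)
variable (htH : ∀ x : H, x ≠ 1 → ¬ IsOfFinOrder x)
include htG htH

/-- In the orientation-reversed situation, every element of the component has
a p-th root for every prime p. -/
lemma rev_root {g : G} {h : H} (hg : g ≠ 1) (hh : h ≠ 1)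
    (u : G → H) (v : H → G)
    (hvu : ∀ x, v (u x) = x) (huv : ∀ y, u (v y) = y)
    (huK : ∀ x ∈ K g, u x ∈ K h) (hvK : ∀ y ∈ K h, v y ∈ K g)
    (hvinv : ∀ y ∈ K h, v (y⁻¹) = (v y)⁻¹)
    (hRev : ∀ a ∈ K g, ∀ b ∈ K g, ltE a b → ltE (u b) (u a))
    (hRevInv : ∀ a ∈ K h, ∀ b ∈ K h, ltE a b → ltE (v b) (v a)) :
    ∀ x ∈ K g, ∀ p : ℕ, Nat.Prime p → ∃ t ∈ K g, t ^ ((p:ℕ):ℤ) = x := by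
  intro x hx p hp
  have hx1 : x ≠ 1 := hx.1
  have hp2 : 2 ≤ ((p:ℤ)).natAbs := by simpa using hp.two_le
  have hp0 : ((p:ℤ)) ≠ 0 := by omega
  set y : G := x ^ ((p:ℤ)) with hydef
  have hyK : y ∈ K g := zpow_mem_K htG hx hp0
  have hy1 : y ≠ 1 := hyK.1
  have hxy : ltE x y := ltE_exp htG hx1 hp2
  -- no strict middle between x and y
  have hnomid : ∀ w ∈ K g, ¬ (ltE x w ∧ ltE w y) := by
    rintro w hw ⟨h1, h2⟩
    obtain ⟨a, ha2, rfl⟩ := (ltE_iff htG hx1 hw.1).1 h1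
    obtain ⟨b, hb2, hab⟩ := (ltE_iff htG hw.1 hy1).1 h2
    rw [hydef, ← zpow_mul] at hab
    have heq := zpow_inj' htG hx1 hab
    -- p = a * b with |a|,|b| ≥ 2 : impossible for prime p
    have hnat : p = a.natAbs * b.natAbs := by
      have := congrArg Int.natAbs heq
      rwa [Int.natAbs_mul, Int.natAbs_natCast] at this
    rcases (Nat.Prime.eq_one_or_self_of_dvd hp a.natAbs ⟨b.natAbs, hnat⟩) with h' | h'
    · omega
    · have : b.natAbs = 1 := by
        have hppos : 0 < p := hp.pos
        have : a.natAbs * b.natAbs = a.natAbs * 1 := by omega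
        exact Nat.eq_of_mul_eq_mul_left (by omega) this
      omega
  -- the image edge
  have hY : u y ∈ K h := huK y hyK
  have hX : u x ∈ K h := huK x hx
  have hfyx : ltE (u y) (u x) := hRev x hx y hyK hxy
  obtain ⟨n₀, hn₀2, hfx⟩ := (ltE_iff htH hY.1 hX.1).1 hfyx
  have hn₀0 : n₀ ≠ 0 := by omega
  -- |n₀| is prime
  have hn₀p : Nat.Prime n₀.natAbs := by
    by_contra hcomp
    set r := n₀.natAbs.minFac with hrdef
    have hr : Nat.Prime r := Nat.minFac_prime (by omega)
    have hrd : r ∣ n₀.natAbs := Nat.minFac_dvd _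
    have hrdz : ((r:ℕ):ℤ) ∣ n₀ := (Int.natCast_dvd_natCast.2 hrd).trans (Int.natAbs_dvd.2 dvd_rfl)
    set d₀ : ℤ := n₀ / ((r:ℕ):ℤ) with hd₀def
    have hdr : n₀ = d₀ * ((r:ℕ):ℤ) := (Int.ediv_mul_cancel hrdz).symm
    have hnatmul : n₀.natAbs = d₀.natAbs * r := by
      have := congrArg Int.natAbs hdr
      rwa [Int.natAbs_mul, Int.natAbs_natCast] at this
    have hd₀2 : 2 ≤ d₀.natAbs := by
      by_contra h'
      have h0 : d₀.natAbs = 0 ∨ d₀.natAbs = 1 := by omega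
      rcases h0 with h0 | h0
      · rw [h0, zero_mul] at hnatmul; omega
      · rw [h0, one_mul] at hnatmul
        exact hcomp (by rw [hnatmul]; exact hr)
    set V : H := (u y) ^ d₀ with hVdef
    have hd₀0 : d₀ ≠ 0 := by omega
    have hVK : V ∈ K h := zpow_mem_K htH hY hd₀0
    have hmid1 : ltE (u y) V := ltE_exp htH hY.1 hd₀2
    have hmid2 : ltE V (u x) := by
      refine (ltE_iff htH hVK.1 hX.1).2 ⟨((r:ℕ):ℤ), by simpa using hr.two_le, ?_⟩
      rw [hVdef, ← zpow_mul, ← hdr, hfx]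
    have hp1 := hRevInv (u y) hY V hVK hmid1
    have hp2' := hRevInv V hVK (u x) hX hmid2
    rw [hvu] at hp1 hp2'
    exact hnomid (v V) (hvK V hVK) ⟨hp2', hp1⟩
  set r : ℕ := n₀.natAbs with hrdef
  -- the deep element u = (u y) ^ (n₀ * r * r) pulled back
  set e₀ : ℤ := n₀ * ((r:ℕ):ℤ) * ((r:ℕ):ℤ) with he₀def
  have hr2 : 2 ≤ r := hn₀p.two_le
  have he₀natAbs : e₀.natAbs = r * r * r := by
    rw [he₀def, Int.natAbs_mul, Int.natAbs_mul, Int.natAbs_natCast, ← hrdef]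
  have he₀2 : 2 ≤ e₀.natAbs := by rw [he₀natAbs]; nlinarith
  have he₀0 : e₀ ≠ 0 := by omega
  set U : H := (u y) ^ e₀ with hUdef
  have hUK : U ∈ K h := zpow_mem_K htH hY he₀0
  have hYU : ltE (u y) U := ltE_exp htH hY.1 he₀2
  have hXU : ltE (u x) U := by
    refine (ltE_iff htH hX.1 hUK.1).2 ⟨((r:ℕ):ℤ) * ((r:ℕ):ℤ), ?_, ?_⟩
    · rw [Int.natAbs_mul, Int.natAbs_natCast]; nlinarith
    · rw [hUdef, hfx, ← zpow_mul, he₀def, mul_assoc]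
  set t : G := v U with htdef
  have htK : t ∈ K g := hvK U hUK
  have hut : u t = U := by rw [htdef, huv]
  have htx : ltE t x := by
    have := hRevInv (u x) hX U hUK hXU
    rwa [hvu, ← htdef] at this
  have hty : ltE t y := by
    have := hRevInv (u y) hY U hUK hYU
    rwa [hvu, ← htdef] at this
  obtain ⟨δ, hδ2, hxδ⟩ := (ltE_iff htG htK.1 hx1).1 htx
  have hδ0 : δ ≠ 0 := by omega
  set c : ℤ := δ * ((p:ℕ):ℤ) with hcdef
  have hyc : y = t ^ c := by rw [hydef, hxδ, ← zpow_mul]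
  have hc0 : c ≠ 0 := mul_ne_zero hδ0 hp0
  have hcabs0 : c.natAbs ≠ 0 := by omega
  -- decompose |c| = p^α * μ
  set α : ℕ := c.natAbs.factorization p with hα
  set μ : ℕ := c.natAbs / p ^ α with hμ
  have hfac : p ^ α * μ = c.natAbs := Nat.ordProj_mul_ordCompl_eq_self c.natAbs p
  have hpnμ : ¬ p ∣ μ := Nat.not_dvd_ordCompl hp hcabs0
  have hpc : p ∣ c.natAbs := by
    rw [hcdef, Int.natAbs_mul, Int.natAbs_natCast]
    exact dvd_mul_left p δ.natAbs
  have hα1 : 1 ≤ α := (hp.factorization_pos_of_dvd hcabs0 hpc)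
  -- the middle transport claim
  have hmidtrans : ∀ w ∈ K g, ltE t w → ltE w y →
      ∃ m : ℤ, 2 ≤ m.natAbs ∧ m ∣ e₀ ∧ u w = (u y) ^ m := by
    intro w hw htw hwy
    have h1 := hRev w hw y hyK hwy
    obtain ⟨m, hm2, hum⟩ := (ltE_iff htH hY.1 (huK w hw).1).1 h1
    have h2 := hRev t htK w hw htw
    rw [hut] at h2
    obtain ⟨j, hj2, hUj⟩ := (ltE_iff htH (huK w hw).1 hUK.1).1 h2
    rw [hum, ← zpow_mul] at hUj
    rw [hUdef] at hUj
    have := zpow_inj' htH hY.1 hUj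
    exact ⟨m, hm2, ⟨j, this⟩, hum⟩
  by_cases hμ1 : μ = 1
  · -- c = ± p ^ α : extract the root
    have hcp : c.natAbs = p ^ α := by rw [hμ1, mul_one] at hfac; omega
    have hδp : δ.natAbs * p = p ^ α := by
      rw [← hcp, hcdef, Int.natAbs_mul, Int.natAbs_natCast]
    have hα2 : 2 ≤ α := by
      by_contra h'
      have : α = 1 := by omega
      rw [this, pow_one] at hδp
      have : δ.natAbs = 1 := by
        have := Nat.eq_of_mul_eq_mul_right hp.pos (hδp.trans (one_mul p).symm)
        exact this
      omega
    have hδabs : δ.natAbs = p ^ (α - 1) := by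
      have : δ.natAbs * p = p ^ (α - 1) * p := by
        rw [hδp, ← pow_succ]
        congr 1
        omega
      exact Nat.eq_of_mul_eq_mul_right hp.pos this
    have hpδ : ((p:ℕ):ℤ) ∣ δ := by
      have h9 : p ∣ δ.natAbs := by
        rw [hδabs]
        exact dvd_pow_self p (by omega)
      exact (Int.natCast_dvd_natCast.2 h9).trans (Int.natAbs_dvd.2 dvd_rfl)
    set δ' : ℤ := δ / ((p:ℕ):ℤ) with hδ'
    have hδ'p : δ' * ((p:ℕ):ℤ) = δ := Int.ediv_mul_cancel hpδ
    have hδ'0 : δ' ≠ 0 := by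
      intro h'
      rw [h', zero_mul] at hδ'p
      exact hδ0 hδ'p.symm
    refine ⟨t ^ δ', zpow_mem_K htG htK hδ'0, ?_⟩
    rw [← zpow_mul, hδ'p, ← hxδ]
  · -- μ ≥ 2 : contradiction
    exfalso
    have hμ2 : 2 ≤ μ := by
      rcases Nat.eq_zero_or_pos μ with h' | h'
      · rw [h', mul_zero] at hfac; omega
      · have h9 : μ ≠ 1 := hμ1
        omega
    have hpα2 : 2 ≤ p ^ α := by
      calc 2 ≤ p := hp.two_le
      _ = p ^ 1 := (pow_one p).symm
      _ ≤ p ^ α := Nat.pow_le_pow_right hp.pos hα1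
    have hdvdc : (((p ^ α : ℕ)):ℤ) ∣ c := by
      have h9 : p ^ α ∣ c.natAbs := ⟨μ, hfac.symm⟩
      exact (Int.natCast_dvd_natCast.2 h9).trans (Int.natAbs_dvd.2 dvd_rfl)
    set c₂ : ℤ := c / (((p ^ α : ℕ)):ℤ) with hc₂
    have hc₂p : c₂ * (((p ^ α : ℕ)):ℤ) = c := Int.ediv_mul_cancel hdvdc
    have hc₂abs : c₂.natAbs = μ := by
      have h1 : c₂.natAbs * (p ^ α) = c.natAbs := by
        have := congrArg Int.natAbs hc₂p
        rwa [Int.natAbs_mul, Int.natAbs_natCast] at this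
      have h2 : μ * p ^ α = c₂.natAbs * p ^ α := by
        rw [mul_comm μ (p^α), hfac, ← h1]
      exact (Nat.eq_of_mul_eq_mul_right (by omega) h2).symm
    have hc₂2 : 2 ≤ c₂.natAbs := by omega
    have hc₂0 : c₂ ≠ 0 := by omega
    set w₁ : G := t ^ (((p ^ α : ℕ)):ℤ) with hw₁
    set w₂ : G := t ^ c₂ with hw₂
    have hw₁K : w₁ ∈ K g := zpow_mem_K htG htK (by positivity)
    have hw₂K : w₂ ∈ K g := zpow_mem_K htG htK hc₂0
    have htw₁ : ltE t w₁ := ltE_exp htG htK.1 (by rw [Int.natAbs_natCast]; exact hpα2)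
    have htw₂ : ltE t w₂ := ltE_exp htG htK.1 hc₂2
    have hw₁y : ltE w₁ y := by
      refine (ltE_iff htG hw₁K.1 hy1).2 ⟨c₂, hc₂2, ?_⟩
      rw [hyc, hw₁, ← zpow_mul, mul_comm, hc₂p]
    have hw₂y : ltE w₂ y := by
      refine (ltE_iff htG hw₂K.1 hy1).2 ⟨(((p ^ α : ℕ)):ℤ), by rw [Int.natAbs_natCast]; exact hpα2, ?_⟩
      rw [hyc, hw₂, ← zpow_mul, hc₂p]
    obtain ⟨m₁, hm₁2, hm₁d, hum₁⟩ := hmidtrans w₁ hw₁K htw₁ hw₁y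
    obtain ⟨m₂, hm₂2, hm₂d, hum₂⟩ := hmidtrans w₂ hw₂K htw₂ hw₂y
    -- m₁, m₂ are ± powers of r
    have hpowform : ∀ m : ℤ, 2 ≤ m.natAbs → m ∣ e₀ → ∃ β, 1 ≤ β ∧ β ≤ 3 ∧ m.natAbs = r ^ β := by
      intro m hm2 hmd
      have h1 : m.natAbs ∣ r ^ 3 := by
        have := Int.natAbs_dvd_natAbs.2 hmd
        rw [he₀natAbs] at this
        have h3 : r * r * r = r ^ 3 := by ring
        rwa [h3] at this
      obtain ⟨β, hβ3, hβe⟩ := (Nat.dvd_prime_pow hn₀p).1 h1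
      refine ⟨β, ?_, hβ3, hβe⟩
      rcases Nat.eq_zero_or_pos β with h' | h'
      · rw [h', pow_zero] at hβe; omega
      · omega
    obtain ⟨β₁, hβ₁1, hβ₁3, hβ₁e⟩ := hpowform m₁ hm₁2 hm₁d
    obtain ⟨β₂, hβ₂1, hβ₂3, hβ₂e⟩ := hpowform m₂ hm₂2 hm₂d
    -- key arithmetic contradictions
    have hcontra1 : ¬ (((p ^ α:ℕ)):ℤ) ∣ c₂ := by
      intro hdd
      have := Int.natAbs_dvd_natAbs.2 hdd
      rw [Int.natAbs_natCast, hc₂abs] at this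
      exact hpnμ (dvd_trans (dvd_pow_self p (by omega)) this)
    have hcontra2 : ¬ c₂ ∣ (((p ^ α:ℕ)):ℤ) := by
      intro hdd
      have h1 := Int.natAbs_dvd_natAbs.2 hdd
      rw [Int.natAbs_natCast, hc₂abs] at h1
      obtain ⟨i, hi3, hie⟩ := (Nat.dvd_prime_pow hp).1 h1
      have hi1 : 1 ≤ i := by
        rcases Nat.eq_zero_or_pos i with h' | h'
        · rw [h', pow_zero] at hie; omega
        · omega
      exact hpnμ (hie ▸ dvd_pow_self p (by omega))
    have hne12 : w₁ ≠ w₂ := by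
      intro h'
      rw [hw₁, hw₂] at h'
      have := zpow_inj' htG htK.1 h'
      exact hcontra1 (this ▸ dvd_refl _)
    -- compare m₁ m₂
    rcases Nat.le_total β₁ β₂ with hββ | hββ
    · by_cases hβeq : β₁ = β₂
      · -- m₂ = ± m₁
        have habs : m₁.natAbs = m₂.natAbs := by rw [hβ₁e, hβ₂e, hβeq]
        have : m₂ = m₁ ∨ m₂ = -m₁ := by omega
        rcases this with h' | h'
        · -- u w₁ = u w₂
          apply hne12
          have : u w₁ = u w₂ := by rw [hum₁, hum₂, h']
          have := congrArg v this
          rwa [hvu, hvu] at this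
        · -- u w₂ = (u w₁)⁻¹, so w₂ = w₁⁻¹
          have huw : u w₂ = (u w₁)⁻¹ := by
            rw [hum₁, hum₂, h', zpow_neg]
          have hw₂w₁ : w₂ = w₁⁻¹ := by
            have hw₁Kh : u w₁ ∈ K h := huK w₁ hw₁K
            have h3 : v ((u w₁)⁻¹) = (v (u w₁))⁻¹ := hvinv (u w₁) hw₁Kh
            have h2 := congrArg v huw
            rw [hvu, h3, hvu] at h2
            exact h2
          rw [hw₁, hw₂] at hw₂w₁
          rw [← zpow_neg] at hw₂w₁
          have := zpow_inj' htG htK.1 hw₂w₁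
          apply hcontra1
          rw [this]
          exact ⟨-1, by ring⟩
      · -- β₁ < β₂ : m₁ ∣ m₂ strictly
        have hβlt : β₁ < β₂ := by omega
        have hdvd : m₁ ∣ m₂ := by
          refine Int.natAbs_dvd_natAbs.1 ?_
          rw [hβ₁e, hβ₂e]
          exact pow_dvd_pow r hββ
        obtain ⟨j, hj⟩ := hdvd
        have hj2 : 2 ≤ j.natAbs := by
          have : m₂.natAbs = m₁.natAbs * j.natAbs := by
            rw [hj, Int.natAbs_mul]
          rw [hβ₁e, hβ₂e] at this
          by_contra h'
          have h0 : j.natAbs = 0 ∨ j.natAbs = 1 := by omega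
          rcases h0 with h0 | h0
          · rw [h0, mul_zero] at this
            have hpos : 0 < r ^ β₂ := by positivity
            omega
          · rw [h0, mul_one] at this
            have := Nat.pow_right_injective hr2 this.symm
            omega
        -- ltE (u w₁) (u w₂)
        have hlt : ltE (u w₁) (u w₂) := by
          refine (ltE_iff htH (huK w₁ hw₁K).1 (huK w₂ hw₂K).1).2 ⟨j, hj2, ?_⟩
          rw [hum₁, hum₂, ← zpow_mul, ← hj]
        have := hRevInv (u w₁) (huK w₁ hw₁K) (u w₂) (huK w₂ hw₂K) hlt
        rw [hvu, hvu] at this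
        -- ltE w₂ w₁ : w₁ = w₂ ^ k
        obtain ⟨k, hk2, hk⟩ := (ltE_iff htG hw₂K.1 hw₁K.1).1 this
        rw [hw₁, hw₂, ← zpow_mul] at hk
        have := zpow_inj' htG htK.1 hk
        exact hcontra2 ⟨k, this⟩
    · -- symmetric : β₂ ≤ β₁
      by_cases hβeq : β₁ = β₂
      · -- same as before, reuse by symmetry? just redo
        have habs : m₁.natAbs = m₂.natAbs := by rw [hβ₁e, hβ₂e, hβeq]
        have : m₂ = m₁ ∨ m₂ = -m₁ := by omega
        rcases this with h' | h'
        · apply hne12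
          have : u w₁ = u w₂ := by rw [hum₁, hum₂, h']
          have := congrArg v this
          rwa [hvu, hvu] at this
        · have huw : u w₂ = (u w₁)⁻¹ := by
            rw [hum₁, hum₂, h', zpow_neg]
          have hw₂w₁ : w₂ = w₁⁻¹ := by
            have hw₁Kh : u w₁ ∈ K h := huK w₁ hw₁K
            have h3 : v ((u w₁)⁻¹) = (v (u w₁))⁻¹ := hvinv (u w₁) hw₁Kh
            have h2 := congrArg v huw
            rw [hvu, h3, hvu] at h2
            exact h2
          rw [hw₁, hw₂] at hw₂w₁
          rw [← zpow_neg] at hw₂w₁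
          have := zpow_inj' htG htK.1 hw₂w₁
          apply hcontra1
          rw [this]
          exact ⟨-1, by ring⟩
      · have hβlt : β₂ < β₁ := by omega
        have hdvd : m₂ ∣ m₁ := by
          refine Int.natAbs_dvd_natAbs.1 ?_
          rw [hβ₁e, hβ₂e]
          exact pow_dvd_pow r hββ
        obtain ⟨j, hj⟩ := hdvd
        have hj2 : 2 ≤ j.natAbs := by
          have : m₁.natAbs = m₂.natAbs * j.natAbs := by
            rw [hj, Int.natAbs_mul]
          rw [hβ₁e, hβ₂e] at this
          by_contra h'
          have h0 : j.natAbs = 0 ∨ j.natAbs = 1 := by omega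
          rcases h0 with h0 | h0
          · rw [h0, mul_zero] at this
            have hpos : 0 < r ^ β₁ := by positivity
            omega
          · rw [h0, mul_one] at this
            have := Nat.pow_right_injective hr2 this
            omega
        have hlt : ltE (u w₂) (u w₁) := by
          refine (ltE_iff htH (huK w₂ hw₂K).1 (huK w₁ hw₁K).1).2 ⟨j, hj2, ?_⟩
          rw [hum₁, hum₂, ← zpow_mul, ← hj]
        have := hRevInv (u w₂) (huK w₂ hw₂K) (u w₁) (huK w₁ hw₁K) hlt
        rw [hvu, hvu] at this
        obtain ⟨k, hk2, hk⟩ := (ltE_iff htG hw₁K.1 hw₂K.1).1 this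
        rw [hw₁, hw₂, ← zpow_mul] at hk
        have := zpow_inj' htG htK.1 hk
        exact hcontra1 ⟨k, this⟩

end revsec

section divall
variable {G : Type*} [Group G]
variable (htf : ∀ g : G, g ≠ 1 → ¬ IsOfFinOrder g)
include htf

lemma div_all {g : G} (hg : g ≠ 1)
    (hroot : ∀ x ∈ K g, ∀ p : ℕ, Nat.Prime p → ∃ t ∈ K g, t ^ ((p:ℕ):ℤ) = x) :
    ∀ n : ℕ, 1 ≤ n → ∃ t ∈ K g, t ^ (n:ℤ) = g := by
  suffices hS : ∀ n : ℕ, 1 ≤ n → ∀ x ∈ K g, ∃ t ∈ K g, t ^ (n:ℤ) = x by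
    intro n hn; exact hS n hn g (mem_K_self htf hg)
  intro n
  induction n using Nat.strong_induction_on with
  | _ n ih =>
    intro hn x hx
    by_cases h1 : n = 1
    · exact ⟨x, hx, by rw [h1]; simp⟩
    · have h2 : 2 ≤ n := by omega
      have hpf : n.minFac.Prime := Nat.minFac_prime h1
      set m := n / n.minFac with hm
      have hmn : m * n.minFac = n := Nat.div_mul_cancel (Nat.minFac_dvd n)
      have hm1 : 1 ≤ m := Nat.div_pos (Nat.minFac_le (by omega)) hpf.pos
      have hmlt : m < n := Nat.div_lt_self (by omega) hpf.two_le
      obtain ⟨t₁, ht₁K, ht₁⟩ := ih m hmlt hm1 x hx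
      obtain ⟨t, htK, ht⟩ := hroot t₁ ht₁K n.minFac hpf
      refine ⟨t, htK, ?_⟩
      have hcast : (n:ℤ) = ((n.minFac : ℕ):ℤ) * ((m:ℕ):ℤ) := by
        have h3 : n.minFac * m = n := by rw [mul_comm]; exact hmn
        exact_mod_cast h3.symm
      rw [hcast, zpow_mul, ht, ht₁]

end divall

section goodsec
variable {G H : Type*} [Group G] [Group H]
variable (htG : ∀ g : G, g ≠ 1 → ¬ IsOfFinOrder g)
variable (htH : ∀ x : H, x ≠ 1 → ¬ IsOfFinOrder x)
variable (hnilG : commutator G ≤ Subgroup.center G)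
variable (hnilH : commutator H ≤ Subgroup.center H)
variable (f : powerGraph G ≃g powerGraph H)
include htG htH hnilG hnilH

lemma f_mem_K {g x : G} (hg : g ≠ 1) (hx : x ∈ K g) : f x ∈ K (f g) := by
  rw [← f_K_image htG htH f hg]
  exact ⟨x, hx, rfl⟩

lemma fsymm_mem_K {g : G} (hg : g ≠ 1) {y : H} (hy : y ∈ K (f g)) : f.symm y ∈ K g := by
  rw [← f_K_image htG htH f hg] at hy
  obtain ⟨z, hz, hzy⟩ := hy
  have : f.symm y = z := by rw [← hzy, f.symm_apply_apply]
  rwa [this]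

lemma revAll {g : G} (hg : g ≠ 1)
    (hNU : ∀ u ∈ K g, ∃ y ∈ K g, y ≠ u ∧ ¬ (powerGraph G).Adj u y)
    (hR : ¬ Vor f g) :
    ∀ a ∈ K g, ∀ b ∈ K g, ltE a b → ltE (f b) (f a) := by
  intro a ha b hb hab
  obtain ⟨n, hn2, hbe⟩ := (ltE_iff htG ha.1 hb.1).1 hab
  rcases ltE_image_cases htG htH f ha.1 hb.1 hab with h | h
  · exfalso
    apply hR
    rw [← V_const htG htH f hnilG hNU hg ha, ← up_edge_V htG htH f ha.1 hn2, ← hbe]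
    exact h
  · exact h

lemma rev_inv {g : G} (hg : g ≠ 1)
    (hNU : ∀ u ∈ K g, ∃ y ∈ K g, y ≠ u ∧ ¬ (powerGraph G).Adj u y)
    (hR : ¬ Vor f g) :
    ∀ a ∈ K (f g), ∀ b ∈ K (f g), ltE a b → ltE (f.symm b) (f.symm a) := by
  intro a haK b hbK hab
  have ha' : f.symm a ∈ K g := fsymm_mem_K htG htH hnilG hnilH f hg haK
  have hb' : f.symm b ∈ K g := fsymm_mem_K htG htH hnilG hnilH f hg hbK
  have hfa : f (f.symm a) = a := f.apply_symm_apply a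
  have hfb : f (f.symm b) = b := f.apply_symm_apply b
  have hne : a ≠ b := by
    rintro rfl
    exact hab.2 ⟨1, (zpow_one a).symm⟩
  have hne' : f.symm a ≠ f.symm b := fun h => hne (by rw [← hfa, ← hfb, h])
  have hadjH : (powerGraph H).Adj a b := (adj_iff htH haK.1 hbK.1).2 ⟨hne, Or.inl hab.1⟩
  have hadjG : (powerGraph G).Adj (f.symm a) (f.symm b) := f.symm.map_adj_iff.2 hadjH
  have hcase : ∀ j : ℤ, f.symm b = (f.symm a) ^ j → False := by
    intro j hj
    have hj0 : j ≠ 0 := dvdE_exp_ne_zero htG hb'.1 hj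
    by_cases hj2 : 2 ≤ j.natAbs
    · have hltG : ltE (f.symm a) (f.symm b) := (ltE_iff htG ha'.1 hb'.1).2 ⟨j, hj2, hj⟩
      have := revAll htG htH hnilG hnilH f hg hNU hR _ ha' _ hb' hltG
      rw [hfa, hfb] at this
      exact this.2 hab.1
    · have : j = 1 ∨ j = -1 := by omega
      rcases this with rfl | rfl
      · rw [zpow_one] at hj; exact hne' (hj.symm)
      · rw [zpow_neg_one] at hj
        have : b = a⁻¹ := by
          rw [← hfb, hj, f_inv htG htH f ha'.1, hfa]
        exact hab.2 ⟨-1, by rw [this, zpow_neg_one, inv_inv]⟩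
  rcases (adj_iff htG ha'.1 hb'.1).1 hadjG with ⟨-, ⟨j, hj⟩ | ⟨j, hj⟩⟩
  · exact absurd hj (fun h => hcase j h)
  · have hj0 : j ≠ 0 := dvdE_exp_ne_zero htG ha'.1 hj
    by_cases hj2 : 2 ≤ j.natAbs
    · exact (ltE_iff htG hb'.1 ha'.1).2 ⟨j, hj2, hj⟩
    · exfalso
      have : j = 1 ∨ j = -1 := by omega
      rcases this with rfl | rfl
      · rw [zpow_one] at hj; exact hne' hj
      · rw [zpow_neg_one] at hj
        exact hcase (-1) (by rw [zpow_neg_one, hj, inv_inv])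

lemma fsymm_inv {g : G} (hg : g ≠ 1) :
    ∀ y ∈ K (f g), f.symm (y⁻¹) = (f.symm y)⁻¹ := by
  intro y hy
  have hx : f.symm y ∈ K g := fsymm_mem_K htG htH hnilG hnilH f hg hy
  have h1 : f ((f.symm y)⁻¹) = y⁻¹ := by
    rw [f_inv htG htH f hx.1, f.apply_symm_apply]
  rw [← h1, f.symm_apply_apply]

lemma rev_good {g : G} (hg : g ≠ 1)
    (hNU : ∀ u ∈ K g, ∃ y ∈ K g, y ≠ u ∧ ¬ (powerGraph G).Adj u y)
    (hR : ¬ Vor f g) :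
    psi g '' (K g) = psi (f g) '' (K (f g)) := by
  have hfg : f g ≠ 1 := f_ne_one htG htH f hg
  have hRev := revAll htG htH hnilG hnilH f hg hNU hR
  have hRevInv := rev_inv htG htH hnilG hnilH f hg hNU hR
  have hrootG : ∀ x ∈ K g, ∀ p : ℕ, Nat.Prime p → ∃ t ∈ K g, t ^ ((p:ℕ):ℤ) = x :=
    rev_root htG htH hg hfg f f.symm (fun x => f.symm_apply_apply x)
      (fun y => f.apply_symm_apply y)
      (fun x hx => f_mem_K htG htH hnilG hnilH f hg hx)
      (fun y hy => fsymm_mem_K htG htH hnilG hnilH f hg hy)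
      (fsymm_inv htG htH hnilG hnilH f hg) hRev hRevInv
  have hrootH : ∀ x ∈ K (f g), ∀ p : ℕ, Nat.Prime p → ∃ t ∈ K (f g), t ^ ((p:ℕ):ℤ) = x :=
    rev_root htH htG hfg hg f.symm f (fun y => f.apply_symm_apply y)
      (fun x => f.symm_apply_apply x)
      (fun y hy => fsymm_mem_K htG htH hnilG hnilH f hg hy)
      (fun x hx => f_mem_K htG htH hnilG hnilH f hg hx)
      (fun x hx => f_inv htG htH f hx.1) hRevInv hRev
  rw [psi_image_divisible htG hg (div_all htG hg hrootG),
    psi_image_divisible htH hfg (div_all htH hfg hrootH)]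

lemma good_K (g : G) (hg : g ≠ 1) :
    ∃ ψ : G → H, Set.BijOn ψ (K g) (f '' (K g)) ∧
      ∀ a ∈ K g, ∀ b ∈ K g, (powArc a b ↔ powArc (ψ a) (ψ b)) := by
  by_cases hU : ∃ u ∈ K g, ∀ y ∈ K g, y ≠ u → (powerGraph G).Adj u y
  · obtain ⟨u, huK, huni⟩ := hU
    have hu1 : u ≠ 1 := huK.1
    have hKeq : K u = K g := K_eq_of_mem htG huK
    rw [← hKeq]
    have hfu1 : f u ≠ 1 := f_ne_one htG htH f hu1
    have huniu : ∀ y ∈ K u, y ≠ u → (powerGraph G).Adj u y := by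
      intro y hy; rw [hKeq] at hy; exact huni y hy
    have hfuni : ∀ y ∈ K (f u), y ≠ f u → (powerGraph H).Adj (f u) y := by
      intro y hy hyne
      rw [← f_K_image htG htH f hu1] at hy
      obtain ⟨z, hz, rfl⟩ := hy
      exact f.map_adj_iff.2 (huniu z hz (fun h => hyne (by rw [h])))
    have hsame : psi u '' (K u) = psi (f u) '' (K (f u)) := by
      rw [psi_image_universal htG (mem_K_self htG hu1) huniu,
        psi_image_universal htH (mem_K_self htH hfu1) hfuni]
    exact match_bij htG htH hnilG hnilH f hu1 hsame
  · push_neg at hU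
    have hNU : ∀ u ∈ K g, ∃ y ∈ K g, y ≠ u ∧ ¬ (powerGraph G).Adj u y := by
      intro u hu
      obtain ⟨y, hy, hcond⟩ := hU u hu
      exact ⟨y, hy, hcond⟩
    by_cases hP : Vor f g
    · exact ⟨f, Set.InjOn.bijOn_image (f.injective.injOn),
        pres_arcs htG htH hnilG f hg hNU hP⟩
    · exact match_bij htG htH hnilG hnilH f hg (rev_good htG htH hnilG hnilH f hg hNU hP)

end goodsec

section final
variable {G H : Type*} [Group G] [Group H]

theorem main (htG : ∀ g : G, g ≠ 1 → ¬ IsOfFinOrder g)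
    (htH : ∀ x : H, x ≠ 1 → ¬ IsOfFinOrder x)
    (hnilG : commutator G ≤ Subgroup.center G)
    (hnilH : commutator H ≤ Subgroup.center H)
    (f : powerGraph G ≃g powerGraph H) :
    ∃ e : G ≃ H, ∀ x y : G, powArc x y ↔ powArc (e x) (e y) := by
  classical
  set P : Set G → (G → H) → Prop := fun S ψ =>
    Set.BijOn ψ S (f '' S) ∧ ∀ a ∈ S, ∀ b ∈ S, (powArc a b ↔ powArc (ψ a) (ψ b)) with hP
  set ψfor : Set G → (G → H) := fun S =>
    if h : ∃ ψ, P S ψ then h.choose else (fun _ => 1) with hψ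
  have hψfor : ∀ g : G, g ≠ 1 → P (K g) (ψfor (K g)) := by
    intro g hg
    have hex : ∃ ψ, P (K g) ψ := good_K htG htH hnilG hnilH f g hg
    rw [hψ]
    simp only [dif_pos hex]
    exact hex.choose_spec
  set eF : G → H := fun x => if x = 1 then 1 else ψfor (K x) x with heF
  have he1 : eF 1 = 1 := by rw [heF]; simp
  have heFne : ∀ x : G, x ≠ 1 → eF x = ψfor (K x) x := by
    intro x hx; rw [heF]; simp [hx]
  have heK : ∀ x : G, x ≠ 1 → eF x ∈ K (f x) := by
    intro x hx
    have h1 := (hψfor x hx).1.mapsTo (mem_K_self htG hx)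
    rw [f_K_image htG htH f hx] at h1
    rw [heFne x hx]
    exact h1
  have hene : ∀ x : G, x ≠ 1 → eF x ≠ 1 := fun x hx => (heK x hx).1
  have hKK : ∀ x y : G, y ≠ 1 → Comm x y → K x = K y := by
    intro x y hy hc
    exact (K_eq_of_mem htG (⟨hy, hc⟩ : y ∈ K x)).symm
  have hinj : Function.Injective eF := by
    intro x y hxy
    by_cases hx : x = 1
    · subst hx
      by_cases hy : y = 1
      · rw [hy]
      · exact absurd (by rw [← hxy, he1]) (hene y hy)
    · by_cases hy : y = 1
      · exact absurd (by rw [hxy, hy, he1]) (hene x hx)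
      · by_cases hc : Comm x y
        · have hK := hKK x y hy hc
          refine (hψfor x hx).1.injOn (mem_K_self htG hx) ?_ ?_
          · rw [hK]; exact mem_K_self htG hy
          · rw [← heFne x hx]
            have hy2 : ψfor (K x) y = eF y := by rw [heFne y hy, hK]
            rw [hy2]
            exact hxy
        · exfalso
          have h1 := heK x hx
          have h2 := heK y hy
          rw [hxy] at h1
          exact hc ((f_comm htG htH f hx hy).2 (comm_trans h1.2 (comm_symm h2.2)))
  have hsurj : Function.Surjective eF := by
    intro w
    by_cases hw : w = 1
    · exact ⟨1, by rw [he1, hw]⟩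
    · have hx₀1 : f.symm w ≠ 1 := by
        intro h
        apply hw
        have := congrArg f h
        rwa [f.apply_symm_apply, f_one htG htH f] at this
      have hwK : w ∈ f '' (K (f.symm w)) :=
        ⟨f.symm w, mem_K_self htG hx₀1, f.apply_symm_apply w⟩
      obtain ⟨a, haK, ha⟩ := (hψfor (f.symm w) hx₀1).1.surjOn hwK
      have ha1 : a ≠ 1 := haK.1
      refine ⟨a, ?_⟩
      rw [heFne a ha1, K_eq_of_mem htG haK]
      exact ha
  have harcs : ∀ x y : G, powArc x y ↔ powArc (eF x) (eF y) := by
    intro x y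
    by_cases hx : x = 1
    · subst hx
      constructor
      · rintro ⟨hne, n, hn, hyn⟩
        rw [one_zpow] at hyn
        exact absurd hyn.symm hne
      · rintro ⟨hne, n, hn, hyn⟩
        rw [he1, one_zpow] at hyn
        rw [he1] at hne
        exact absurd hyn.symm hne
    · by_cases hy : y = 1
      · subst hy
        constructor
        · rintro ⟨hne, n, hn, hyn⟩
          exact absurd hyn.symm (zpow_ne_one' htG hx hn)
        · rintro ⟨hne, n, hn, hyn⟩
          rw [he1] at hyn
          exact absurd hyn.symm (zpow_ne_one' htH (hene x hx) hn)
      · by_cases hc : Comm x y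
        · have hK := hKK x y hy hc
          have := (hψfor x hx).2 x (mem_K_self htG hx) y (by rw [hK]; exact mem_K_self htG hy)
          rw [heFne x hx, heFne y hy, ← hK]
          exact this
        · constructor
          · rintro ⟨hne, n, hn, hyn⟩
            exact absurd (⟨n, 1, hn, one_ne_zero, by rw [zpow_one, ← hyn]⟩ : Comm x y) hc
          · rintro ⟨hne, n, hn, hyn⟩
            exfalso
            apply hc
            apply (f_comm htG htH f hx hy).2
            have h1 := heK x hx
            have h2 := heK y hy
            have hce : Comm (eF x) (eF y) := ⟨n, 1, hn, one_ne_zero, by rw [zpow_one, ← hyn]⟩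
            exact comm_trans h1.2 (comm_trans hce (comm_symm h2.2))
  exact ⟨Equiv.ofBijective eF ⟨hinj, hsurj⟩, harcs⟩

end final

end PG

/-- If `G` and `H` are torsion-free groups of nilpotency class at most 2 with
isomorphic power graphs, then their directed power graphs are isomorphic. -/
theorem stmt_1 (G H : Type*) [Group G] [Group H]
    (hGtf : ∀ g : G, g ≠ 1 → ¬ IsOfFinOrder g)
    (hHtf : ∀ x : H, x ≠ 1 → ¬ IsOfFinOrder x)
    (hGnil : commutator G ≤ Subgroup.center G)
    (hHnil : commutator H ≤ Subgroup.center H)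
    (h : Nonempty (powerGraph G ≃g powerGraph H)) :
    ∃ e : G ≃ H, ∀ x y : G, powArc x y ↔ powArc (e x) (e y) := by
  obtain ⟨f⟩ := h
  exact PG.main hGtf hHtf hGnil hHnil f
end

section
/- Let G be a torsion-free group in which every non-identity element lies in a unique maximal cyclic subgroup. Then for any group H, every graph isomorphism f : P(G) → P(H) is also an isomorphism of directed power graphs, i.e. for all x, y ∈ G there is an arc x → y in the directed power graph of G if and only if there is an arc f(x) → f(y) in the directed power graph of H. -/
/-- A maximal cyclic subgroup: a cyclic subgroup not properly contained in any
cyclic subgroup. -/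
def IsMaxCyclic {G : Type*} [Group G] (C : Subgroup G) : Prop :=
  IsCyclic C ∧ ∀ D : Subgroup G, IsCyclic D → C ≤ D → C = D

section Aux

variable {K : Type*} [Group K]

/-- Closed neighborhood in the power graph. -/
def nb (u : K) : Set K := {z | z = u ∨ (powerGraph K).Adj u z}

lemma zpowInjTF (hK : ∀ g : K, g ≠ 1 → ¬ IsOfFinOrder g) {u : K} (hu : u ≠ 1) :
    Function.Injective fun n : ℤ => u ^ n :=
  injective_zpow_iff_not_isOfFinOrder.mpr (hK u hu)

lemma not_adj_one (hK : ∀ g : K, g ≠ 1 → ¬ IsOfFinOrder g) (z : K) :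
    ¬ (powerGraph K).Adj 1 z := by
  rintro ⟨hne, n, hn, h | h⟩
  · exact hne (by simpa using h.symm)
  · have hz : z ≠ 1 := fun hz => hne hz.symm
    exact hn (zpowInjTF hK hz (show z ^ n = z ^ (0 : ℤ) by rw [zpow_zero]; exact h.symm))

lemma infDiff (hK : ∀ g : K, g ≠ 1 → ¬ IsOfFinOrder g) {u v : K} (hu : u ≠ 1)
    {m : ℤ} (hm : 2 ≤ m.natAbs) (hv : v = u ^ m) :
    {z | z ∈ nb u ∧ z ∉ nb v}.Infinite := by
  have hinj := zpowInjTF hK hu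
  have hprimes : {p : ℕ | p.Prime ∧ m.natAbs < p}.Infinite := by
    refine (Nat.infinite_setOf_prime.diff (Set.finite_Iic m.natAbs)).mono ?_
    rintro p ⟨hp1, hp2⟩
    exact ⟨hp1, by simpa using hp2⟩
  have hiOn : Set.InjOn (fun p : ℕ => u ^ (p : ℤ)) {p : ℕ | p.Prime ∧ m.natAbs < p} :=
    fun a _ b _ hab => Nat.cast_injective (hinj hab)
  refine (hprimes.image hiOn).mono ?_
  rintro _ ⟨p, ⟨hp, hplt⟩, rfl⟩
  have hp0 : (p : ℤ) ≠ 0 := by exact_mod_cast hp.pos.ne'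
  have hneu : u ≠ u ^ (p : ℤ) := by
    intro h
    have h1 : u ^ (1 : ℤ) = u ^ (p : ℤ) := by rwa [zpow_one]
    have := hinj h1
    omega
  constructor
  · exact Or.inr ⟨hneu, p, hp0, Or.inl rfl⟩
  · rintro (h | ⟨hne', k, hk, h | h⟩)
    · rw [hv] at h
      have := hinj h
      omega
    · rw [hv, ← zpow_mul] at h
      have hpk : (p : ℤ) = m * k := hinj h
      have hdvd : m.natAbs ∣ p := by
        have : m ∣ (p : ℤ) := Dvd.intro k hpk.symm
        have h2 : m.natAbs ∣ (p : ℤ).natAbs := Int.natAbs_dvd_natAbs.mpr this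
        simpa using h2
      rcases (Nat.Prime.eq_one_or_self_of_dvd hp _ hdvd) with h1 | h1 <;> omega
    · rw [hv, ← zpow_mul] at h
      have hmk : m = (p : ℤ) * k := hinj h
      have hdvd : p ∣ m.natAbs := by
        have : (p : ℤ) ∣ m := Dvd.intro k hmk.symm
        have h2 : (p : ℤ).natAbs ∣ m.natAbs := Int.natAbs_dvd_natAbs.mpr this
        simpa using h2
      have := Nat.le_of_dvd (by omega) hdvd
      omega

lemma invChar (hK : ∀ g : K, g ≠ 1 → ¬ IsOfFinOrder g) {u v : K} (hu : u ≠ 1)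
    (hadj : (powerGraph K).Adj u v) (hnb : ∀ z, z ∈ nb u ↔ z ∈ nb v) : v = u⁻¹ := by
  obtain ⟨hne, n, hn, h | h⟩ := hadj
  · have h1 : n = 1 ∨ n = -1 ∨ 2 ≤ n.natAbs := by omega
    rcases h1 with rfl | rfl | h2
    · have hvu : v = u := by simpa using h
      exact absurd hvu.symm hne
    · rw [h, zpow_neg_one]
    · obtain ⟨z, hz1, hz2⟩ := (infDiff hK hu h2 h).nonempty
      exact absurd ((hnb z).mp hz1) hz2
  · have hv1 : v ≠ 1 := by
      rintro rfl
      rw [one_zpow] at h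
      exact hu h
    have h1 : n = 1 ∨ n = -1 ∨ 2 ≤ n.natAbs := by omega
    rcases h1 with rfl | rfl | h2
    · have huv : u = v := by simpa using h
      exact absurd huv hne
    · rw [zpow_neg_one] at h
      rw [h, inv_inv]
    · obtain ⟨z, hz1, hz2⟩ := (infDiff hK hv1 h2 h).nonempty
      exact absurd ((hnb z).mpr hz1) hz2

lemma nb_inv_aux {u : K} : ∀ z : K, z ∈ nb u → z ∈ nb u⁻¹ := by
  rintro z (rfl | ⟨hne, k, hk, h | h⟩)
  · by_cases hc : z = z⁻¹
    · exact Or.inl hc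
    · exact Or.inr ⟨fun he => hc he.symm, -1, by norm_num, Or.inl (by simp)⟩
  · by_cases hc : z = u⁻¹
    · exact Or.inl hc
    · refine Or.inr ⟨fun he => hc he.symm, -k, neg_ne_zero.mpr hk, Or.inl ?_⟩
      rw [h, zpow_neg, inv_zpow, inv_inv]
  · by_cases hc : z = u⁻¹
    · exact Or.inl hc
    · refine Or.inr ⟨fun he => hc he.symm, -k, neg_ne_zero.mpr hk, Or.inr ?_⟩
      rw [zpow_neg, ← h]

lemma nb_inv {u : K} (z : K) : z ∈ nb u ↔ z ∈ nb u⁻¹ := by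
  constructor
  · exact nb_inv_aux z
  · intro h
    have := nb_inv_aux (u := u⁻¹) z h
    rwa [inv_inv] at this

lemma doubleArc (hK : ∀ g : K, g ≠ 1 → ¬ IsOfFinOrder g) {u v : K} (hu : u ≠ 1)
    (h1 : powArc u v) (h2 : powArc v u) : v = u⁻¹ := by
  obtain ⟨hne, a, ha, hva⟩ := h1
  obtain ⟨-, b, hb, hub⟩ := h2
  have hab : u ^ (a * b) = u ^ (1 : ℤ) := by rw [zpow_mul, ← hva, ← hub, zpow_one]
  have := zpowInjTF hK hu hab
  rcases Int.mul_eq_one_iff_eq_one_or_neg_one.mp this with ⟨rfl, -⟩ | ⟨rfl, -⟩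
  · have huv : v = u := by simpa using hva
    exact absurd huv.symm hne
  · rw [hva, zpow_neg_one]

end Aux

section GSide

variable {G : Type*} [Group G]

lemma roots_finite (hGtf : ∀ g : G, g ≠ 1 → ¬ IsOfFinOrder g)
    (hG : ∀ g : G, g ≠ 1 → ∃! C : Subgroup G, IsMaxCyclic C ∧ g ∈ C)
    {y : G} (hy : y ≠ 1) :
    {z : G | ∃ k : ℤ, k ≠ 0 ∧ y = z ^ k}.Finite := by
  obtain ⟨C, ⟨hCmc, hyC⟩, huniq⟩ := hG y hy
  haveI := hCmc.1
  obtain ⟨c₀, hc₀⟩ := IsCyclic.exists_generator (α := ↥C)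
  set c : G := (c₀ : G) with hc
  obtain ⟨b, hb⟩ := hc₀ ⟨y, hyC⟩
  have hcb : c ^ b = y := by
    have h' := congrArg (Subtype.val : ↥C → G) hb
    simpa [hc] using h'
  have hc1 : c ≠ 1 := by
    intro hc1
    apply hy
    rw [← hcb, hc1, one_zpow]
  have hb0 : b ≠ 0 := by
    rintro rfl
    rw [zpow_zero] at hcb
    exact hy hcb.symm
  have hinj := zpowInjTF hGtf hc1
  apply Set.Finite.subset ((Set.finite_Icc (-|b|) |b|).image (fun d : ℤ => c ^ d))
  rintro z ⟨k, hk, hzk⟩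
  have hz1 : z ≠ 1 := by
    rintro rfl
    rw [one_zpow] at hzk
    exact hy hzk
  obtain ⟨D, ⟨hDmc, hzD⟩, -⟩ := hG z hz1
  have hyD : y ∈ D := by rw [hzk]; exact zpow_mem hzD k
  have hDC : D = C := huniq D ⟨hDmc, hyD⟩
  have hzC : z ∈ C := hDC ▸ hzD
  obtain ⟨d, hd⟩ := hc₀ ⟨z, hzC⟩
  have hcd : c ^ d = z := by
    have h' := congrArg (Subtype.val : ↥C → G) hd
    simpa [hc] using h'
  have hdk : c ^ (d * k) = c ^ b := by rw [zpow_mul, hcd, ← hzk, hcb]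
  have hdb : d * k = b := hinj hdk
  have habs : |d| ≤ |b| :=
    Int.le_of_dvd (abs_pos.mpr hb0) ((abs_dvd _ _).mpr ((dvd_abs _ _).mpr ⟨k, hdb.symm⟩))
  exact ⟨d, Set.mem_Icc.mpr (abs_le.mp habs), hcd⟩

lemma finDiff (hGtf : ∀ g : G, g ≠ 1 → ¬ IsOfFinOrder g)
    (hG : ∀ g : G, g ≠ 1 → ∃! C : Subgroup G, IsMaxCyclic C ∧ g ∈ C)
    {x y : G} (hx : x ≠ 1) (hxy : x ≠ y) {n : ℤ} (hn : n ≠ 0) (hyx : y = x ^ n) :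
    {z : G | z ∈ nb y ∧ z ∉ nb x}.Finite := by
  have hy1 : y ≠ 1 := by
    intro h
    exact hn (zpowInjTF hGtf hx (show x ^ n = x ^ (0 : ℤ) by
      rw [zpow_zero, ← hyx]; exact h))
  apply Set.Finite.subset (roots_finite hGtf hG hy1)
  rintro z ⟨hz1, hz2⟩
  rcases hz1 with rfl | ⟨hne, k, hk, h | h⟩
  · exact absurd (Or.inr ⟨hxy, n, hn, Or.inl hyx⟩) hz2
  · exfalso
    apply hz2
    by_cases hzx : z = x
    · exact Or.inl hzx
    · exact Or.inr ⟨fun he => hzx he.symm, n * k, mul_ne_zero hn hk,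
        Or.inl (by rw [h, hyx, ← zpow_mul])⟩
  · exact ⟨k, hk, h⟩

end GSide

/-- If `G` is a torsion-free group in which every non-identity element lies in a
unique maximal cyclic subgroup, then every power graph isomorphism from `P(G)` to
`P(H)` is an isomorphism of directed power graphs. -/
theorem stmt_2 (G H : Type*) [Group G] [Group H]
    (hGtf : ∀ g : G, g ≠ 1 → ¬ IsOfFinOrder g)
    (hG : ∀ g : G, g ≠ 1 → ∃! C : Subgroup G, IsMaxCyclic C ∧ g ∈ C)
    (f : powerGraph G ≃g powerGraph H) :
    ∀ x y : G, powArc x y ↔ powArc (f x) (f y) := by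
  have hmapadj : ∀ a b : G, (powerGraph H).Adj (f a) (f b) ↔ (powerGraph G).Adj a b :=
    fun a b => f.map_adj_iff
  -- f maps 1 to 1
  have hf1 : f 1 = 1 := by
    by_cases hsq : (f 1) ^ (2 : ℤ) = f 1
    · have h2 : f 1 * f 1 = f 1 * 1 := by
        rw [mul_one]
        have := hsq
        rw [show (2 : ℤ) = 1 + 1 by norm_num, zpow_add, zpow_one] at this
        exact this
      exact mul_left_cancel h2
    · exfalso
      have hadj : (powerGraph H).Adj (f 1) ((f 1) ^ (2 : ℤ)) :=
        ⟨fun he => hsq he.symm, 2, by norm_num, Or.inl rfl⟩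
      have hadj' : (powerGraph G).Adj 1 (f.symm ((f 1) ^ (2 : ℤ))) :=
        (hmapadj 1 (f.symm ((f 1) ^ (2 : ℤ)))).mp (by rwa [f.apply_symm_apply])
      exact not_adj_one hGtf _ hadj'
  -- H is torsion-free
  have hH : ∀ h : H, h ≠ 1 → ¬ IsOfFinOrder h := by
    intro h hh hfin
    obtain ⟨n, hn, hpow⟩ := hfin.exists_pow_eq_one
    have hadj : (powerGraph H).Adj 1 h :=
      ⟨fun he => hh he.symm, n, by exact_mod_cast hn.ne',
        Or.inr (by rw [zpow_natCast, hpow])⟩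
    have hadj' : (powerGraph G).Adj 1 (f.symm h) := by
      refine (hmapadj 1 (f.symm h)).mp ?_
      rwa [hf1, f.apply_symm_apply]
    exact not_adj_one hGtf _ hadj'
  -- neighborhood transfer
  have hnbf : ∀ (a z : G), f z ∈ nb (f a) ↔ z ∈ nb a := by
    intro a z
    constructor
    · rintro (h | h)
      · exact Or.inl (f.injective h)
      · exact Or.inr ((hmapadj a z).mp h)
    · rintro (rfl | h)
      · exact Or.inl rfl
      · exact Or.inr ((hmapadj a z).mpr h)
  -- the key forward implication
  have key : ∀ a b : G, a ≠ 1 → powArc a b → powArc (f a) (f b) := by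
    intro a b ha hab
    obtain ⟨hne, n, hn, hba⟩ := hab
    have hb1 : b ≠ 1 := by
      intro h
      exact hn (zpowInjTF hGtf ha (show a ^ n = a ^ (0 : ℤ) by
        rw [zpow_zero, ← hba]; exact h))
    have hfa1 : f a ≠ 1 := fun h => ha (f.injective (h.trans hf1.symm))
    have hadjG : (powerGraph G).Adj a b := ⟨hne, n, hn, Or.inl hba⟩
    have hadjH : (powerGraph H).Adj (f a) (f b) := (hmapadj a b).mpr hadjG
    have hn1 : n = 1 ∨ n = -1 ∨ 2 ≤ n.natAbs := by omega
    rcases hn1 with rfl | rfl | hn2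
    · have hab' : b = a := by simpa using hba
      exact absurd hab'.symm hne
    · -- b = a⁻¹, inverse pair
      have hbinv : b = a⁻¹ := by rw [hba, zpow_neg_one]
      have hnbG : ∀ z : G, z ∈ nb a ↔ z ∈ nb b := by
        intro z
        rw [hbinv]
        exact nb_inv z
      have hnbH : ∀ z : H, z ∈ nb (f a) ↔ z ∈ nb (f b) := by
        intro z
        have h0 := hnbG (f.symm z)
        rw [← hnbf a (f.symm z), ← hnbf b (f.symm z), f.apply_symm_apply] at h0
        exact h0
      have hinv := invChar hH hfa1 hadjH hnbH
      exact ⟨fun h => hne (f.injective h), -1, by norm_num, by rw [hinv, zpow_neg_one]⟩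
    · -- proper power
      obtain ⟨hfne, m, hm, hc | hc⟩ := hadjH
      · exact ⟨hfne, m, hm, hc⟩
      · have hm1 : m = 1 ∨ m = -1 ∨ 2 ≤ m.natAbs := by omega
        rcases hm1 with rfl | rfl | hm2
        · have hcc : f a = f b := by simpa using hc
          exact absurd hcc hfne
        · exact ⟨hfne, -1, by norm_num, by rw [hc, zpow_neg_one, zpow_neg_one, inv_inv]⟩
        · exfalso
          have hfb1 : f b ≠ 1 := fun h => hb1 (f.injective (h.trans hf1.symm))
          have hinf := infDiff hH hfb1 hm2 hc
          have hfin : {z : G | z ∈ nb b ∧ z ∉ nb a}.Finite :=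
            finDiff hGtf hG ha hne hn hba
          have hsub : {z : H | z ∈ nb (f b) ∧ z ∉ nb (f a)} ⊆
              f '' {z : G | z ∈ nb b ∧ z ∉ nb a} := by
            rintro z ⟨h1, h2⟩
            refine ⟨f.symm z, ⟨?_, ?_⟩, f.apply_symm_apply z⟩
            · exact (hnbf b (f.symm z)).mp (by rwa [f.apply_symm_apply])
            · intro hmem
              apply h2
              rw [← f.apply_symm_apply z]
              exact (hnbf a (f.symm z)).mpr hmem
          exact hinf ((hfin.image f).subset hsub)
  -- main statement
  intro x y
  by_cases hxy : x = y
  · subst hxy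
    constructor <;> (rintro ⟨hne, -⟩; exact absurd rfl hne)
  by_cases hx1 : x = 1
  · subst hx1
    constructor
    · rintro ⟨hne, n, hn, h⟩
      rw [one_zpow] at h
      exact absurd h.symm hne
    · rw [hf1]
      rintro ⟨hne, n, hn, h⟩
      rw [one_zpow] at h
      exact absurd h.symm hne
  constructor
  · exact key x y hx1
  · intro hfxy
    obtain ⟨hfne, m, hm, hfba⟩ := hfxy
    have hadjG : (powerGraph G).Adj x y :=
      (hmapadj x y).mp ⟨hfne, m, hm, Or.inl hfba⟩
    obtain ⟨hnexy, k, hk, h | h⟩ := hadjG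
    · exact ⟨hnexy, k, hk, h⟩
    · -- x = y ^ k : use key in the other direction, then doubleArc
      have hy1 : y ≠ 1 := by
        rintro rfl
        rw [one_zpow] at h
        exact hx1 h
      have hyx : powArc y x := ⟨Ne.symm hnexy, k, hk, h⟩
      have h2 := key y x hy1 hyx
      have hfx1 : f x ≠ 1 := fun hh => hx1 (f.injective (hh.trans hf1.symm))
      have hinvH : f y = (f x)⁻¹ := doubleArc hH hfx1 ⟨hfne, m, hm, hfba⟩ h2
      have hnbG : ∀ z : G, z ∈ nb x ↔ z ∈ nb y := by
        intro z
        rw [← hnbf x z, ← hnbf y z, hinvH]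
        exact nb_inv (f z)
      have hinv := invChar hGtf hx1 ⟨hnexy, k, hk, Or.inr h⟩ hnbG
      exact ⟨hnexy, -1, by norm_num, by rw [hinv, zpow_neg_one]⟩
end

section
/- Let H be a group such that the power graph P(H) is isomorphic to the power graph P(ℚ) of the additive group of rational numbers. Then the directed power graphs of ℚ and H are isomorphic. Moreover, every graph isomorphism f : P(ℚ) → P(H) either preserves all orientations (for all x, y ∈ ℚ, an arc x → y in the directed power graph of ℚ implies an arc f(x) → f(y) in that of H) or reverses all orientations (for all x, y ∈ ℚ, an arc x → y implies an arc f(y) → f(x)). -/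
/-- The power graph of an additive group `G`: distinct `x, y` are adjacent iff
one is a nonzero integer multiple of the other. -/
def addPowerGraph (G : Type*) [AddGroup G] : SimpleGraph G where
  Adj x y := x ≠ y ∧ ∃ n : ℤ, n ≠ 0 ∧ (y = n • x ∨ x = n • y)
  symm := by
    constructor
    rintro x y ⟨hxy, n, hn, h⟩
    exact ⟨hxy.symm, n, hn, h.symm⟩
  loopless := by constructor; rintro x ⟨h, -⟩; exact h rfl

/-- There is an arc `x → y` in the directed power graph of an additive group iff
`x ≠ y` and `y` is a nonzero integer multiple of `x`. -/
def addPowArc {G : Type*} [AddGroup G] (x y : G) : Prop :=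
  x ≠ y ∧ ∃ n : ℤ, n ≠ 0 ∧ y = n • x

namespace Stmt3Aux

/-! ### Integer helpers -/

lemma int_dvd_abs_le {a b : ℤ} (h : a ∣ b) (hb : b ≠ 0) : |a| ≤ |b| :=
  Int.le_of_dvd (abs_pos.mpr hb) ((abs_dvd _ _).mpr ((dvd_abs _ _).mpr h))

lemma two_le_abs {n : ℤ} (h0 : n ≠ 0) (h1 : n ≠ 1) (h2 : n ≠ -1) : 2 ≤ |n| := by
  rcases abs_cases n with ⟨h, _⟩ | ⟨h, _⟩ <;> omega

/-- A witness `m` incomparable with `n` under divisibility. -/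
lemma helper_incomp {n : ℤ} (h : 2 ≤ |n|) :
    ∃ m : ℤ, m ≠ 0 ∧ m ≠ 1 ∧ m ≠ n ∧ ¬ m ∣ n ∧ ¬ n ∣ m := by
  rcases abs_cases n with ⟨h1, h2⟩ | ⟨h1, h2⟩
  · -- n ≥ 2
    have hn2 : 2 ≤ n := by omega
    refine ⟨n + 1, by omega, by omega, by omega, ?_, ?_⟩
    · intro hd
      have := Int.le_of_dvd (by omega) hd
      omega
    · intro hd
      have h1' : n ∣ 1 := by
        have := dvd_sub hd (dvd_refl n)
        simpa using this
      have := int_dvd_abs_le h1' one_ne_zero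
      rw [abs_of_nonneg (by omega : (0:ℤ) ≤ n)] at this
      simp at this
      omega
  · -- n ≤ -2
    have hn2 : n ≤ -2 := by omega
    refine ⟨n - 1, by omega, by omega, by omega, ?_, ?_⟩
    · intro hd
      have hle := int_dvd_abs_le hd (by omega : n ≠ 0)
      rw [abs_of_nonpos (by omega : n - 1 ≤ 0), abs_of_nonpos (by omega : n ≤ 0)] at hle
      omega
    · intro hd
      have h1' : n ∣ 1 := by
        have := dvd_sub (dvd_refl n) hd
        simpa using this
      have := int_dvd_abs_le h1' one_ne_zero
      rw [abs_of_nonpos (by omega : n ≤ 0)] at this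
      simp at this
      omega

lemma incomp_mul_add_one {m m' : ℤ} (hm : 2 ≤ |m|) (hm' : 2 ≤ |m'|) :
    2 ≤ |m * m' + 1| ∧ ¬ m ∣ (m * m' + 1) ∧ ¬ (m * m' + 1) ∣ m := by
  have habs : |m * m'| = |m| * |m'| := abs_mul m m'
  have h4 : 4 ≤ |m * m'| := by nlinarith
  have htri : |m * m'| ≤ |m * m' + 1| + 1 := by
    have := abs_add_le (m * m' + 1) (-1)
    simp at this
    calc |m * m'| = |m * m' + 1 + -1| := by ring_nf
    _ ≤ |m * m' + 1| + 1 := by simpa using this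
  refine ⟨by omega, ?_, ?_⟩
  · intro hd
    have h1' : m ∣ 1 := by
      have := dvd_sub hd (dvd_mul_right m m')
      simpa using this
    have := int_dvd_abs_le h1' one_ne_zero
    simp at this
    omega
  · intro hd
    have hm0 : m ≠ 0 := by
      intro h; rw [h] at hm; simp at hm
    have hle := int_dvd_abs_le hd hm0
    -- |m*m'+1| ≥ |m|*|m'| - 1 ≥ 2|m| - 1 > |m|
    have : |m| * |m'| ≤ |m| + 1 := by omega
    nlinarith

/-! ### Basic graph lemmas -/

lemma addPowerGraph_adj {G : Type*} [AddGroup G] {x y : G} :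
    (addPowerGraph G).Adj x y ↔ (x ≠ y ∧ ∃ n : ℤ, n ≠ 0 ∧ (y = n • x ∨ x = n • y)) :=
  Iff.rfl

lemma powerGraph_adj {G : Type*} [Group G] {x y : G} :
    (powerGraph G).Adj x y ↔ (x ≠ y ∧ ∃ n : ℤ, n ≠ 0 ∧ (y = x ^ n ∨ x = y ^ n)) :=
  Iff.rfl

/-! ### ℚ-side lemmas -/

lemma q_zero_isolated (y : ℚ) : ¬ (addPowerGraph ℚ).Adj 0 y := by
  rintro ⟨hne, n, hn, h | h⟩
  · exact hne (by rw [h, smul_zero])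
  · rcases smul_eq_zero.mp h.symm with h' | h'
    · exact hn (by exact_mod_cast h')
    · exact hne h'.symm

lemma q_arc_adj {x y : ℚ} (h : addPowArc x y) : (addPowerGraph ℚ).Adj x y := by
  obtain ⟨hne, n, hn, hy⟩ := h
  exact ⟨hne, n, hn, Or.inl hy⟩

lemma q_adj_arc {x y : ℚ} (h : (addPowerGraph ℚ).Adj x y) :
    addPowArc x y ∨ addPowArc y x := by
  obtain ⟨hne, n, hn, hy | hy⟩ := h
  · exact Or.inl ⟨hne, n, hn, hy⟩
  · exact Or.inr ⟨hne.symm, n, hn, hy⟩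

lemma q_arc_left_ne_zero {x y : ℚ} (h : addPowArc x y) : x ≠ 0 := by
  obtain ⟨hne, n, hn, hy⟩ := h
  rintro rfl
  rw [smul_zero] at hy
  exact hne hy.symm

lemma q_arc_right_ne_zero {x y : ℚ} (h : addPowArc x y) : y ≠ 0 := by
  obtain ⟨hne, n, hn, hy⟩ := h
  have hx := q_arc_left_ne_zero ⟨hne, n, hn, hy⟩
  rw [hy]
  simp [hx, hn]

lemma q_adj_ne_zero {x y : ℚ} (h : (addPowerGraph ℚ).Adj x y) : x ≠ 0 := by
  rcases q_adj_arc h with h' | h'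
  · exact q_arc_left_ne_zero h'
  · exact q_arc_right_ne_zero h'

lemma q_smul_cancel {t : ℚ} (ht : t ≠ 0) {a b : ℤ} (h : a • t = b • t) : a = b := by
  have h' : (a : ℚ) * t = (b : ℚ) * t := by
    simpa [zsmul_eq_mul] using h
  exact_mod_cast mul_right_cancel₀ ht h'

lemma q_smul_ne {t : ℚ} (ht : t ≠ 0) {m : ℤ} (hm : m ≠ 1) : t ≠ m • t := by
  intro h
  have : (1 : ℤ) • t = m • t := by rwa [one_smul]
  exact hm (q_smul_cancel ht this).symm

lemma q_arc_smul {t : ℚ} (ht : t ≠ 0) {m : ℤ} (hm0 : m ≠ 0) (hm1 : m ≠ 1) :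
    addPowArc t (m • t) :=
  ⟨q_smul_ne ht hm1, m, hm0, rfl⟩

lemma q_nadj_smul {t : ℚ} (ht : t ≠ 0) {a b : ℤ} (hab : ¬ a ∣ b) (hba : ¬ b ∣ a) :
    ¬ (addPowerGraph ℚ).Adj (a • t) (b • t) := by
  rintro ⟨hne, n, hn, h | h⟩
  · rw [smul_smul] at h
    exact hab ⟨n, by rw [q_smul_cancel ht h]; ring⟩
  · rw [smul_smul] at h
    exact hba ⟨n, by rw [q_smul_cancel ht h]; ring⟩

/-- The easy twin lemma in ℚ: `x` and `-x` have the same neighbours. -/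
lemma q_twin_aux {x z : ℚ} (h : (addPowerGraph ℚ).Adj z x) (hz : z ≠ -x) :
    (addPowerGraph ℚ).Adj z (-x) := by
  obtain ⟨hne, n, hn, hc | hc⟩ := h
  · exact ⟨hz, -n, neg_ne_zero.mpr hn, Or.inl (by rw [neg_smul, ← hc])⟩
  · exact ⟨hz, -n, neg_ne_zero.mpr hn, Or.inr (by rw [neg_smul, smul_neg, neg_neg, ← hc])⟩

lemma q_twin (x z : ℚ) (hzx : z ≠ x) (hzx' : z ≠ -x) :
    (addPowerGraph ℚ).Adj z x ↔ (addPowerGraph ℚ).Adj z (-x) := by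
  constructor
  · intro h; exact q_twin_aux h hzx'
  · intro h
    have := q_twin_aux h (by rwa [neg_neg])
    rwa [neg_neg] at this

/-- In ℚ, an adjacent pair of closed twins must be a `{x, -x}` pair (auxiliary,
assuming the arc goes `x → y`). -/
lemma q_twins_aux {x y : ℚ} (hx : x ≠ 0) (hxy : x ≠ y) {n : ℤ} (hn : n ≠ 0)
    (h : y = n • x)
    (tw : ∀ z, z ≠ x → z ≠ y → ((addPowerGraph ℚ).Adj z x ↔ (addPowerGraph ℚ).Adj z y)) :
    y = -x := by
  have hn1 : n ≠ 1 := by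
    rintro rfl
    rw [one_smul] at h
    exact hxy h.symm
  by_contra hyneg
  have hnm1 : n ≠ -1 := by
    rintro rfl
    apply hyneg
    rw [h, neg_smul, one_smul]
  have h2 : 2 ≤ |n| := two_le_abs hn hn1 hnm1
  obtain ⟨m, hm0, hm1, hmn, hmdvd, hndvd⟩ := helper_incomp h2
  set z := m • x with hz
  have hzx : z ≠ x := (q_smul_ne hx hm1).symm
  have hzy : z ≠ y := by
    rw [h]
    intro hcon
    exact hmn (q_smul_cancel hx hcon)
  have hadjzx : (addPowerGraph ℚ).Adj z x := ⟨hzx, m, hm0, Or.inr rfl⟩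
  have hadjzy := (tw z hzx hzy).mp hadjzx
  obtain ⟨hne, k, hk, hc | hc⟩ := hadjzy
  · -- y = k • z : n • x = (k*m) • x
    rw [h, hz, smul_smul] at hc
    exact hmdvd ⟨k, by rw [q_smul_cancel hx hc]; ring⟩
  · -- z = k • y : m • x = (k*n) • x
    rw [h, hz, smul_smul] at hc
    exact hndvd ⟨k, by rw [q_smul_cancel hx hc]; ring⟩

lemma q_twins_eq_neg {x y : ℚ} (hadj : (addPowerGraph ℚ).Adj x y)
    (tw : ∀ z, z ≠ x → z ≠ y → ((addPowerGraph ℚ).Adj z x ↔ (addPowerGraph ℚ).Adj z y)) :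
    y = -x := by
  have hx : x ≠ 0 := q_adj_ne_zero hadj
  have hy : y ≠ 0 := q_adj_ne_zero hadj.symm
  obtain ⟨hxy, n, hn, hc | hc⟩ := hadj
  · exact q_twins_aux hx hxy hn hc tw
  · have := q_twins_aux hy (Ne.symm hxy) hn hc
      (fun z h1 h2 => (tw z h2 h1).symm)
    rw [this, neg_neg]

/-! ### H-side lemmas (torsion-free group) -/

section HSide

variable {H : Type*} [Group H]

lemma h_arc_adj {a b : H} (h : powArc a b) : (powerGraph H).Adj a b := by
  obtain ⟨hne, n, hn, hb⟩ := h
  exact ⟨hne, n, hn, Or.inl hb⟩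

lemma h_adj_arc {a b : H} (h : (powerGraph H).Adj a b) : powArc a b ∨ powArc b a := by
  obtain ⟨hne, n, hn, hb | hb⟩ := h
  · exact Or.inl ⟨hne, n, hn, hb⟩
  · exact Or.inr ⟨hne.symm, n, hn, hb⟩

lemma h_arc_chain {a b c : H} (h1 : powArc a b) (h2 : powArc b c) (hac : a ≠ c) :
    (powerGraph H).Adj a c := by
  obtain ⟨_, n, hn, hb⟩ := h1
  obtain ⟨_, m, hm, hc⟩ := h2
  exact ⟨hac, n * m, mul_ne_zero hn hm, Or.inl (by rw [hc, hb, ← zpow_mul])⟩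

variable (tf : ∀ a : H, a ≠ 1 → ∀ n : ℤ, n ≠ 0 → a ^ n ≠ 1)

include tf in
lemma h_pow_cancel {a : H} (ha : a ≠ 1) {m n : ℤ} (h : a ^ m = a ^ n) : m = n := by
  by_contra hne
  have hmn : m - n ≠ 0 := sub_ne_zero.mpr hne
  apply tf a ha (m - n) hmn
  rw [zpow_sub, h]
  simp

include tf in
lemma h_both_arcs {a b : H} (h1 : powArc a b) (h2 : powArc b a) : b = a⁻¹ := by
  obtain ⟨hne, n, hn, hb⟩ := h1
  obtain ⟨hne', m, hm, ha⟩ := h2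
  have ha1 : a ≠ 1 := by
    rintro rfl
    rw [one_zpow] at hb
    exact hne hb.symm
  have : a ^ (1 : ℤ) = a ^ (n * m) := by
    rw [zpow_one, zpow_mul, ← hb, ← ha]
  have h1nm : 1 = n * m := h_pow_cancel tf ha1 this
  rcases Int.mul_eq_one_iff_eq_one_or_neg_one.mp h1nm.symm with ⟨hn1, _⟩ | ⟨hn1, _⟩
  · rw [hn1, zpow_one] at hb
    exact absurd hb.symm hne
  · rw [hn1] at hb
    rw [hb, zpow_neg_one]

/-- Easy twin lemma in a group: `a` and `a⁻¹` have the same neighbours. -/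
lemma h_twin_aux {a z : H} (h : (powerGraph H).Adj z a) (hz : z ≠ a⁻¹) :
    (powerGraph H).Adj z a⁻¹ := by
  obtain ⟨hne, n, hn, hc | hc⟩ := h
  · exact ⟨hz, -n, neg_ne_zero.mpr hn, Or.inl (by rw [zpow_neg, ← hc])⟩
  · exact ⟨hz, -n, neg_ne_zero.mpr hn, Or.inr (by rw [zpow_neg, inv_zpow, inv_inv, ← hc])⟩

lemma h_twin_inv (a : H) (z : H) (hza : z ≠ a) (hza' : z ≠ a⁻¹) :
    (powerGraph H).Adj z a ↔ (powerGraph H).Adj z a⁻¹ := by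
  constructor
  · intro h; exact h_twin_aux h hza'
  · intro h
    have := h_twin_aux h (by rwa [inv_inv])
    rwa [inv_inv] at this

include tf in
lemma h_twins_aux {a b : H} (ha : a ≠ 1) (hab : a ≠ b) {n : ℤ} (hn : n ≠ 0)
    (h : b = a ^ n)
    (tw : ∀ z, z ≠ a → z ≠ b → ((powerGraph H).Adj z a ↔ (powerGraph H).Adj z b)) :
    b = a⁻¹ := by
  have hn1 : n ≠ 1 := by
    rintro rfl
    rw [zpow_one] at h
    exact hab h.symm
  by_contra hbinv
  have hnm1 : n ≠ -1 := by
    rintro rfl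
    exact hbinv (by rw [h, zpow_neg_one])
  have h2 : 2 ≤ |n| := two_le_abs hn hn1 hnm1
  obtain ⟨m, hm0, hm1, hmn, hmdvd, hndvd⟩ := helper_incomp h2
  set z := a ^ m with hz
  have hzx : z ≠ a := by
    intro hcon
    have : a ^ m = a ^ (1 : ℤ) := by rw [← hz, hcon, zpow_one]
    exact hm1 (h_pow_cancel tf ha this)
  have hzy : z ≠ b := by
    rw [h]
    intro hcon
    exact hmn (h_pow_cancel tf ha hcon)
  have hadjza : (powerGraph H).Adj z a := ⟨hzx, m, hm0, Or.inr rfl⟩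
  have hadjzb := (tw z hzx hzy).mp hadjza
  obtain ⟨hne, k, hk, hc | hc⟩ := hadjzb
  · -- b = z ^ k : a^n = a^(m*k)
    rw [h, hz, ← zpow_mul] at hc
    exact hmdvd ⟨k, h_pow_cancel tf ha hc⟩
  · -- z = b ^ k : a^m = a^(n*k)
    rw [h, hz, ← zpow_mul] at hc
    exact hndvd ⟨k, h_pow_cancel tf ha hc⟩

include tf in
lemma h_twins_eq_inv {a b : H} (hadj : (powerGraph H).Adj a b)
    (tw : ∀ z, z ≠ a → z ≠ b → ((powerGraph H).Adj z a ↔ (powerGraph H).Adj z b)) :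
    b = a⁻¹ := by
  obtain ⟨hab, n, hn, hc | hc⟩ := hadj
  · have ha1 : a ≠ 1 := by
      rintro rfl
      rw [one_zpow] at hc
      exact hab hc.symm
    exact h_twins_aux tf ha1 hab hn hc tw
  · have hb1 : b ≠ 1 := by
      rintro rfl
      rw [one_zpow] at hc
      exact hab hc
    have := h_twins_aux tf hb1 (Ne.symm hab) hn hc
      (fun z h1 h2 => (tw z h2 h1).symm)
    rw [this, inv_inv]

end HSide

/-! ### The abstract orientation-propagation machinery over ℚ -/

section Core

variable (G : ℚ → ℚ → Prop)
  (P1 : ∀ x y : ℚ, (addPowerGraph ℚ).Adj x y → G x y ∨ G y x)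
  (P2 : ∀ x y z : ℚ, G x y → G y z → x ≠ z → (addPowerGraph ℚ).Adj x z)

include P1 P2 in
lemma step_in {x y z : ℚ} (hxy : addPowArc x y) (hzy : addPowArc z y)
    (hxz : x ≠ z) (hnadj : ¬ (addPowerGraph ℚ).Adj x z) (hG : G x y) : G z y := by
  rcases P1 z y (q_arc_adj hzy) with h | h
  · exact h
  · exact absurd (P2 x y z hG h hxz) hnadj

include P1 P2 in
lemma step_out {x y z : ℚ} (hyx : addPowArc y x) (hyz : addPowArc y z)
    (hxz : x ≠ z) (hnadj : ¬ (addPowerGraph ℚ).Adj x z) (hG : G y x) : G y z := by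
  rcases P1 y z (q_arc_adj hyz) with h | h
  · exact h
  · exact absurd ((P2 z y x h hG (Ne.symm hxz)).symm) hnadj

include P1 P2 in
lemma multiplier_change {t : ℚ} (ht : t ≠ 0) {m m' : ℤ} (hm : 2 ≤ |m|) (hm' : 2 ≤ |m'|)
    (h : G t (m • t)) : G t (m' • t) := by
  obtain ⟨hk2, hmk, hkm⟩ := incomp_mul_add_one hm hm'
  obtain ⟨hk2'', hm'k'', hkm''⟩ := incomp_mul_add_one hm' hm
  have hkeq : m' * m + 1 = m * m' + 1 := by ring
  rw [hkeq] at hm'k'' hkm''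
  have hm0 : m ≠ 0 := by intro hcon; rw [hcon] at hm; simp at hm
  have hm1 : m ≠ 1 := by intro hcon; rw [hcon] at hm; simp at hm
  have hm'0 : m' ≠ 0 := by intro hcon; rw [hcon] at hm'; simp at hm'
  have hm'1 : m' ≠ 1 := by intro hcon; rw [hcon] at hm'; simp at hm'
  have hk0 : m * m' + 1 ≠ 0 := by
    rcases abs_cases (m * m' + 1) with ⟨h1, _⟩ | ⟨h1, _⟩ <;> omega
  have hk1 : m * m' + 1 ≠ 1 := by
    rcases abs_cases (m * m' + 1) with ⟨h1, _⟩ | ⟨h1, _⟩ <;> omega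
  have hmk' : m ≠ m * m' + 1 := by
    intro hcon
    exact hmk (by rw [← hcon])
  have hm'k' : m' ≠ m * m' + 1 := by
    intro hcon
    exact hm'k'' (by rw [← hcon])
  have s1 : G t ((m * m' + 1) • t) :=
    step_out G P1 P2 (q_arc_smul ht hm0 hm1) (q_arc_smul ht hk0 hk1)
      (fun hcon => hmk' (q_smul_cancel ht hcon)) (q_nadj_smul ht hmk hkm) h
  exact step_out G P1 P2 (q_arc_smul ht hk0 hk1) (q_arc_smul ht hm'0 hm'1)
      (fun hcon => hm'k' (q_smul_cancel ht hcon).symm)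
      (q_nadj_smul ht hkm'' hm'k'') s1

include P1 P2 in
lemma point_move {t : ℚ} (ht : t ≠ 0) {c d : ℤ} (hcd : ¬ c ∣ d) (hdc : ¬ d ∣ c)
    (h : G t (c • t)) : G (((c : ℚ) / (d : ℚ)) * t) (d • (((c : ℚ) / (d : ℚ)) * t)) := by
  have hc0 : c ≠ 0 := fun hcon => hdc (hcon ▸ dvd_zero d)
  have hd0 : d ≠ 0 := fun hcon => hcd (hcon ▸ dvd_zero c)
  have hc1 : c ≠ 1 := fun hcon => hcd (hcon ▸ one_dvd d)
  have hd1 : d ≠ 1 := fun hcon => hdc (hcon ▸ one_dvd c)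
  have hcQ : (c : ℚ) ≠ 0 := Int.cast_ne_zero.mpr hc0
  have hdQ : (d : ℚ) ≠ 0 := Int.cast_ne_zero.mpr hd0
  set z := ((c : ℚ) / (d : ℚ)) * t with hzdef
  have hz0 : z ≠ 0 := mul_ne_zero (div_ne_zero hcQ hdQ) ht
  have key1 : c • t = d • z := by
    rw [hzdef]
    simp only [zsmul_eq_mul]
    field_simp
  have arc1 : addPowArc t (c • t) := q_arc_smul ht hc0 hc1
  have hne2 : z ≠ c • t := by
    intro hcon
    rw [hzdef, zsmul_eq_mul] at hcon
    have h' : (c : ℚ) / d = (c : ℚ) := mul_right_cancel₀ ht hcon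
    have h'' : (c : ℚ) = c * d := (div_eq_iff hdQ).mp h'
    have : (d : ℚ) = 1 := by
      field_simp at h''
      tauto
    exact hd1 (by exact_mod_cast this)
  have arc2 : addPowArc z (c • t) := ⟨hne2, d, hd0, key1⟩
  have hxz : t ≠ z := by
    intro hcon
    rw [hzdef] at hcon
    have h' : (1 : ℚ) * t = ((c : ℚ) / d) * t := by rw [one_mul]; exact hcon
    have h'' : (1 : ℚ) = (c : ℚ) / d := mul_right_cancel₀ ht h'
    have h3 : (c : ℚ) = 1 * d := (div_eq_iff hdQ).mp h''.symm
    rw [one_mul] at h3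
    have h4 : c = d := by exact_mod_cast h3
    exact hcd (by rw [h4])
  have hnadj : ¬ (addPowerGraph ℚ).Adj t z := by
    rintro ⟨hne, k, hk, hcase | hcase⟩
    · -- z = k • t
      rw [hzdef, zsmul_eq_mul] at hcase
      have h' : (c : ℚ) / d = (k : ℚ) := mul_right_cancel₀ ht hcase
      have h'' : (c : ℚ) = k * d := (div_eq_iff hdQ).mp h'
      have : c = k * d := by exact_mod_cast h''
      exact hdc ⟨k, by rw [this]; ring⟩
    · -- t = k • z
      rw [hzdef, zsmul_eq_mul] at hcase
      have h' : (1 : ℚ) * t = ((k : ℚ) * ((c : ℚ) / d)) * t := by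
        rw [one_mul, mul_assoc]
        exact hcase
      have h'' : (1 : ℚ) = (k : ℚ) * ((c : ℚ) / d) := mul_right_cancel₀ ht h'
      rw [mul_div_assoc'] at h''
      have h3 : (1 : ℚ) * d = (k : ℚ) * c := (eq_div_iff hdQ).mp h''
      rw [one_mul] at h3
      have h4 : d = k * c := by exact_mod_cast h3
      exact hcd ⟨k, by rw [h4]; ring⟩
  have hstep := step_in G P1 P2 arc1 arc2 hxz hnadj h
  rwa [key1] at hstep

include P1 P2 in
lemma base_move {t t' : ℚ} (ht : t ≠ 0) (ht' : t' ≠ 0)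
    (h : ∃ m : ℤ, 2 ≤ |m| ∧ G t (m • t)) :
    ∃ m' : ℤ, 2 ≤ |m'| ∧ G t' (m' • t') := by
  obtain ⟨m, hm, hG⟩ := h
  set ρ : ℚ := t' / t with hρdef
  have hρ : ρ ≠ 0 := div_ne_zero ht' ht
  set a : ℤ := ρ.num with hadef
  set b : ℤ := (ρ.den : ℤ) with hbdef
  have ha : a ≠ 0 := Rat.num_ne_zero.mpr hρ
  have hbpos : 0 < b := by
    rw [hbdef]
    exact_mod_cast ρ.pos
  have hb : b ≠ 0 := ne_of_gt hbpos
  have habt : t' = ((a : ℚ) / (b : ℚ)) * t := by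
    have h1 : ((a : ℚ) / (b : ℚ)) = ρ := by
      rw [hadef, hbdef]
      exact_mod_cast Rat.num_div_den ρ
    rw [h1, hρdef, div_mul_cancel₀ _ ht]
  set N : ℤ := 4 * |a * b| + 1 with hNdef
  have habs1 : 1 ≤ |a| := by
    have := abs_pos.mpr ha; omega
  have habs2 : 1 ≤ |b| := by
    have := abs_pos.mpr hb; omega
  have hab_abs : |a * b| = |a| * |b| := abs_mul a b
  have hNpos : 0 < N := by
    have : 1 ≤ |a * b| := by nlinarith
    omega
  have hNodd : ¬ (2 : ℤ) ∣ N := by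
    rintro ⟨e, he⟩
    omega
  have h2a : 2 ≤ |2 * a| := by
    rw [abs_mul]
    simp only [abs_two]
    nlinarith
  have h2b : 2 ≤ |2 * b| := by
    rw [abs_mul]
    simp only [abs_two]
    nlinarith
  -- step A: change multiplier to 2a
  have hGA : G t ((2 * a) • t) := multiplier_change G P1 P2 ht hm h2a hG
  -- step B: move base point to (2a/N) t, multiplier N
  have hnd1 : ¬ (2 * a) ∣ N := fun hd => hNodd (dvd_trans ⟨a, rfl⟩ hd)
  have hnd2 : ¬ N ∣ (2 * a) := by
    intro hd
    have hle := int_dvd_abs_le hd (by positivity)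
    rw [abs_mul, abs_two] at hle
    rw [abs_of_pos hNpos] at hle
    nlinarith
  have hGB := point_move G P1 P2 ht hnd1 hnd2 hGA
  set z1 : ℚ := ((2 * a : ℤ) : ℚ) / ((N : ℤ) : ℚ) * t with hz1def
  have hz1ne : z1 ≠ 0 := by
    rw [hz1def]
    apply mul_ne_zero _ ht
    apply div_ne_zero
    · push_cast
      exact mul_ne_zero two_ne_zero (Int.cast_ne_zero.mpr ha)
    · exact_mod_cast ne_of_gt hNpos
  -- step C: move base point to (N/(2b)) z1 = t', multiplier 2b
  have hnd3 : ¬ N ∣ (2 * b) := by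
    intro hd
    have hle := int_dvd_abs_le hd (by positivity)
    rw [abs_mul, abs_two] at hle
    rw [abs_of_pos hNpos] at hle
    nlinarith
  have hnd4 : ¬ (2 * b) ∣ N := fun hd => hNodd (dvd_trans ⟨b, rfl⟩ hd)
  have hGC := point_move G P1 P2 hz1ne hnd3 hnd4 hGB
  have hz2eq : ((N : ℚ) / ((2 * b : ℤ) : ℚ)) * z1 = t' := by
    rw [hz1def, habt]
    have hNQ : (N : ℚ) ≠ 0 := by exact_mod_cast ne_of_gt hNpos
    have hbQ : (b : ℚ) ≠ 0 := Int.cast_ne_zero.mpr hb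
    push_cast
    field_simp
  rw [hz2eq] at hGC
  exact ⟨2 * b, h2b, hGC⟩

include P1 P2 in
lemma core_prop (base : G 1 2) :
    ∀ x y : ℚ, addPowArc x y → y ≠ -x → G x y := by
  intro x y harc hny
  obtain ⟨hxy, n, hn, hy⟩ := harc
  have hx : x ≠ 0 := q_arc_left_ne_zero ⟨hxy, n, hn, hy⟩
  have hn1 : n ≠ 1 := by
    rintro rfl
    rw [one_smul] at hy
    exact hxy hy.symm
  have hnm1 : n ≠ -1 := by
    rintro rfl
    apply hny
    rw [hy, neg_smul, one_smul]
  have hn2 : 2 ≤ |n| := two_le_abs hn hn1 hnm1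
  have base' : G 1 ((2 : ℤ) • (1 : ℚ)) := by
    have : ((2 : ℤ) • (1 : ℚ)) = 2 := by norm_num
    rwa [this]
  obtain ⟨m', hm', hG'⟩ := base_move G P1 P2 one_ne_zero hx
    ⟨2, by norm_num, base'⟩
  have hGn : G x (n • x) := multiplier_change G P1 P2 hx hm' hn2 hG'
  rwa [← hy] at hGn

end Core

/-! ### Putting things together with the isomorphism -/

section WithIso

variable {H : Type*} [Group H]

lemma f_zero_isolated (f : addPowerGraph ℚ ≃g powerGraph H) (b : H) :
    ¬ (powerGraph H).Adj (f 0) b := by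
  intro hb
  have hb' : (powerGraph H).Adj (f 0) (f (f.symm b)) := by
    rwa [RelIso.apply_symm_apply]
  exact q_zero_isolated _ (f.map_adj_iff.mp hb')

lemma f_zero_eq_one (f : addPowerGraph ℚ ≃g powerGraph H) : f 0 = 1 := by
  by_contra hg
  set g := f 0 with hgdef
  have h2 : g ^ (2 : ℤ) = g * g := by
    rw [show (2 : ℤ) = 1 + 1 by norm_num, zpow_add, zpow_one]
  have hne : g ≠ g * g := by
    intro hcon
    apply hg
    have : g * 1 = g * g := by rw [mul_one]; exact hcon
    exact (mul_left_cancel this).symm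
  exact f_zero_isolated f (g * g) ⟨hne, 2, two_ne_zero, Or.inl h2.symm⟩

lemma h_tf (f : addPowerGraph ℚ ≃g powerGraph H) :
    ∀ a : H, a ≠ 1 → ∀ n : ℤ, n ≠ 0 → a ^ n ≠ 1 := by
  intro a ha n hn h1
  have hadj : (powerGraph H).Adj 1 a := ⟨Ne.symm ha, n, hn, Or.inr h1.symm⟩
  rw [← f_zero_eq_one f] at hadj
  exact f_zero_isolated f a hadj

/-- For `x ≠ 0`, `f x` and `f (-x)` form a mutual-arc (inverse) pair in `H`. -/
lemma twin_both (f : addPowerGraph ℚ ≃g powerGraph H) {x : ℚ} (hx : x ≠ 0) :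
    powArc (f x) (f (-x)) ∧ powArc (f (-x)) (f x) := by
  have tf := h_tf f
  have hne : x ≠ -x := by
    intro h
    apply hx
    linarith [h]
  have hadjQ : (addPowerGraph ℚ).Adj x (-x) :=
    ⟨hne, -1, by norm_num, Or.inl (by simp)⟩
  have hadjH : (powerGraph H).Adj (f x) (f (-x)) := f.map_adj_iff.mpr hadjQ
  have tw : ∀ w, w ≠ f x → w ≠ f (-x) →
      ((powerGraph H).Adj w (f x) ↔ (powerGraph H).Adj w (f (-x))) := by
    intro w h1 h2
    have hw : w = f (f.symm w) := (RelIso.apply_symm_apply f w).symm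
    rw [hw] at h1 h2 ⊢
    rw [f.map_adj_iff, f.map_adj_iff]
    exact q_twin x (f.symm w) (fun hc => h1 (by rw [hc])) (fun hc => h2 (by rw [hc]))
  have hinv : f (-x) = (f x)⁻¹ := h_twins_eq_inv tf hadjH tw
  have hfne : f x ≠ f (-x) := fun hcon => hne (f.injective hcon)
  refine ⟨⟨hfne, -1, by norm_num, ?_⟩, ⟨hfne.symm, -1, by norm_num, ?_⟩⟩
  · rw [hinv, zpow_neg_one]
  · rw [hinv, zpow_neg_one, inv_inv]

/-- The global dichotomy: any isomorphism preserves or reverses all arcs. -/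
lemma dichotomy (f : addPowerGraph ℚ ≃g powerGraph H) :
    (∀ x y : ℚ, addPowArc x y → powArc (f x) (f y)) ∨
    (∀ x y : ℚ, addPowArc x y → powArc (f y) (f x)) := by
  have tf := h_tf f
  have hAdj12 : (addPowerGraph ℚ).Adj 1 2 :=
    ⟨by norm_num, 2, by norm_num, Or.inl (by norm_num)⟩
  rcases h_adj_arc (f.map_adj_iff.mpr hAdj12) with hp | hp
  · left
    intro x y harc
    by_cases hny : y = -x
    · subst hny
      exact (twin_both f (q_arc_left_ne_zero harc)).1
    · refine core_prop (fun u v => powArc (f u) (f v)) ?_ ?_ hp x y harc hny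
      · intro u v h
        exact h_adj_arc (f.map_adj_iff.mpr h)
      · intro u v w g1 g2 huw
        exact f.map_adj_iff.mp (h_arc_chain g1 g2 (fun hc => huw (f.injective hc)))
  · right
    intro x y harc
    by_cases hny : y = -x
    · subst hny
      exact (twin_both f (q_arc_left_ne_zero harc)).2
    · refine core_prop (fun u v => powArc (f v) (f u)) ?_ ?_ hp x y harc hny
      · intro u v h
        exact (h_adj_arc (f.map_adj_iff.mpr h)).symm
      · intro u v w g1 g2 huw
        have := h_arc_chain g2 g1 (fun hc => huw (f.injective hc).symm)
        exact (f.map_adj_iff.mp this).symm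

lemma back_of_preserve (f : addPowerGraph ℚ ≃g powerGraph H)
    (hp : ∀ x y : ℚ, addPowArc x y → powArc (f x) (f y)) :
    ∀ x y : ℚ, powArc (f x) (f y) → addPowArc x y := by
  have tf := h_tf f
  intro x y hxy
  have hadjQ : (addPowerGraph ℚ).Adj x y := f.map_adj_iff.mp (h_arc_adj hxy)
  rcases q_adj_arc hadjQ with h | h
  · exact h
  · -- both arcs in H: twins
    have hyx' := hp y x h
    have hinv : f y = (f x)⁻¹ := h_both_arcs tf hxy hyx'
    have tw : ∀ z, z ≠ x → z ≠ y →
        ((addPowerGraph ℚ).Adj z x ↔ (addPowerGraph ℚ).Adj z y) := by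
      intro z h1 h2
      rw [← f.map_adj_iff, ← f.map_adj_iff, hinv]
      exact h_twin_inv (f x) (f z) (fun hc => h1 (f.injective hc))
        (by rw [← hinv]; exact fun hc => h2 (f.injective hc))
    have hyneg : y = -x := q_twins_eq_neg hadjQ tw
    exact ⟨hadjQ.ne, -1, by norm_num, by rw [hyneg]; simp⟩

lemma back_of_reverse (f : addPowerGraph ℚ ≃g powerGraph H)
    (hp : ∀ x y : ℚ, addPowArc x y → powArc (f y) (f x)) :
    ∀ x y : ℚ, powArc (f y) (f x) → addPowArc x y := by
  have tf := h_tf f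
  intro x y hyx
  have hadjQ : (addPowerGraph ℚ).Adj x y :=
    (f.map_adj_iff.mp (h_arc_adj hyx)).symm
  rcases q_adj_arc hadjQ with h | h
  · exact h
  · -- h : addPowArc y x, so also powArc (f x) (f y): both arcs
    have hxy' := hp y x h
    have hinv : f x = (f y)⁻¹ := h_both_arcs tf hyx hxy'
    have tw : ∀ z, z ≠ y → z ≠ x →
        ((addPowerGraph ℚ).Adj z y ↔ (addPowerGraph ℚ).Adj z x) := by
      intro z h1 h2
      rw [← f.map_adj_iff, ← f.map_adj_iff, hinv]
      exact h_twin_inv (f y) (f z) (fun hc => h1 (f.injective hc))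
        (by rw [← hinv]; exact fun hc => h2 (f.injective hc))
    have hxneg : x = -y := q_twins_eq_neg hadjQ.symm tw
    have hyneg : y = -x := by rw [hxneg, neg_neg]
    exact ⟨hadjQ.ne, -1, by norm_num, by rw [hyneg]; simp⟩

lemma q_inv_arc {x y : ℚ} (h : addPowArc x y) : addPowArc y⁻¹ x⁻¹ := by
  have hx : x ≠ 0 := q_arc_left_ne_zero h
  have hy : y ≠ 0 := q_arc_right_ne_zero h
  obtain ⟨hne, n, hn, hyy⟩ := h
  have hnQ : (n : ℚ) ≠ 0 := Int.cast_ne_zero.mpr hn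
  refine ⟨fun heq => hne (inv_injective heq).symm, n, hn, ?_⟩
  rw [zsmul_eq_mul, hyy, zsmul_eq_mul, mul_inv]
  field_simp

end WithIso

end Stmt3Aux

open Stmt3Aux in
/-- If the power graph of a group `H` is isomorphic to the power graph of `ℚ`,
then their directed power graphs are isomorphic; moreover every power graph
isomorphism `f : P(ℚ) → P(H)` preserves all orientations or reverses all
orientations. -/
theorem stmt_3 (H : Type*) [Group H]
    (h : Nonempty (addPowerGraph ℚ ≃g powerGraph H)) :
    (∃ e : ℚ ≃ H, ∀ x y : ℚ, addPowArc x y ↔ powArc (e x) (e y)) ∧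
      ∀ f : addPowerGraph ℚ ≃g powerGraph H,
        (∀ x y : ℚ, addPowArc x y → powArc (f x) (f y)) ∨
        (∀ x y : ℚ, addPowArc x y → powArc (f y) (f x)) := by
  constructor
  · obtain ⟨f⟩ := h
    rcases dichotomy f with hp | hp
    · exact ⟨f.toEquiv, fun x y => ⟨fun h' => hp x y h', fun h' => back_of_preserve f hp x y h'⟩⟩
    · refine ⟨(⟨fun q => q⁻¹, fun q => q⁻¹, fun q => inv_inv q, fun q => inv_inv q⟩ :
        ℚ ≃ ℚ).trans f.toEquiv, fun x y => ?_⟩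
      simp only [Equiv.trans_apply, Equiv.coe_fn_mk]
      constructor
      · intro h'
        exact hp y⁻¹ x⁻¹ (q_inv_arc h')
      · intro h'
        have h2 := back_of_reverse f hp y⁻¹ x⁻¹ h'
        have h3 := q_inv_arc h2
        rwa [inv_inv, inv_inv] at h3
  · intro f
    exact dichotomy f
end

section
/- Let G be a torsion-free group, H a group, and f : P(G) → P(H) a graph isomorphism. Let z ∈ G with z ≠ 1. Then the subgraph of P(G) induced on the in-neighbourhood I_G(z) is isomorphic to the subgraph of P(H) induced on I_H(f(z)), and the subgraph of P(G) induced on the out-neighbourhood O_G(z) is isomorphic to the subgraph of P(H) induced on O_H(f(z)). -/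
/-- The out-neighbourhood of `x` in the directed power graph. -/
def outSet {G : Type*} [Group G] (x : G) : Set G := {y | powArc x y}

/-- The in-neighbourhood of `x` in the directed power graph. -/
def inSet {G : Type*} [Group G] (x : G) : Set G := {y | powArc y x}

section Basic
variable {K : Type*} [Group K] {u w x y : K}

lemma adj_iff : (powerGraph K).Adj x y ↔ powArc x y ∨ powArc y x := by
  constructor
  · rintro ⟨hne, n, hn, h | h⟩
    · exact Or.inl ⟨hne, n, hn, h⟩
    · exact Or.inr ⟨hne.symm, n, hn, h⟩
  · rintro (⟨hne, n, hn, h⟩ | ⟨hne, n, hn, h⟩)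
    · exact ⟨hne, n, hn, Or.inl h⟩
    · exact ⟨hne.symm, n, hn, Or.inr h⟩

lemma zpowInj (hu : ¬ IsOfFinOrder u) {a b : ℤ} (h : u ^ a = u ^ b) : a = b :=
  injective_zpow_iff_not_isOfFinOrder.2 hu h

lemma finOrder_of_zpow_eq_one {k : ℤ} (hk : k ≠ 0) (h : x ^ k = 1) : IsOfFinOrder x := by
  have : x ^ (k.natAbs : ℕ) = 1 := by
    rcases Int.natAbs_eq k with h' | h'
    · rw [← zpow_natCast, ← h', h]
    · rw [← zpow_natCast, ← neg_neg (k.natAbs : ℤ), ← h', zpow_neg, h, inv_one]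
  exact isOfFinOrder_iff_pow_eq_one.2 ⟨k.natAbs, by positivity, this⟩

lemma zpow_ne_one (hu : ¬ IsOfFinOrder u) {k : ℤ} (hk : k ≠ 0) : u ^ k ≠ 1 :=
  fun h => hu (finOrder_of_zpow_eq_one hk h)

lemma ne_inv (hu : ¬ IsOfFinOrder u) : u ≠ u⁻¹ := by
  intro h
  have h2 : u ^ (2:ℤ) = 1 := by
    have : u * u⁻¹ = 1 := mul_inv_cancel u
    calc u ^ (2:ℤ) = u * u := by rw [show (2:ℤ) = 1 + 1 by ring, zpow_add, zpow_one]
    _ = u * u⁻¹ := by nth_rewrite 2 [h]; rfl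
    _ = 1 := mul_inv_cancel u
  exact hu (finOrder_of_zpow_eq_one (by norm_num) h2)

lemma finOrder_of_adj (h : (powerGraph K).Adj x y) (hx : IsOfFinOrder x) :
    IsOfFinOrder y := by
  obtain ⟨-, n, hn, h | h⟩ := h
  · subst h; exact hx.zpow
  · obtain ⟨m, hm, hxm⟩ := isOfFinOrder_iff_pow_eq_one.1 hx
    apply finOrder_of_zpow_eq_one (k := n * m) (mul_ne_zero hn (by exact_mod_cast hm.ne'))
    rw [zpow_mul, ← h, zpow_natCast, hxm]

lemma inv_mem_outSet (hu : ¬ IsOfFinOrder u) : u⁻¹ ∈ outSet u :=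
  ⟨(ne_inv hu), -1, by norm_num, by group⟩

lemma inv_mem_inSet (hu : ¬ IsOfFinOrder u) : u⁻¹ ∈ inSet u :=
  ⟨(ne_inv hu).symm, -1, by norm_num, by group⟩

lemma eq_inv_of_mem_both (hu : ¬ IsOfFinOrder u) (h1 : y ∈ inSet u) (h2 : y ∈ outSet u) :
    y = u⁻¹ := by
  obtain ⟨hne1, a, ha, hya⟩ := h1
  obtain ⟨hne2, b, hb, hyb⟩ := h2
  have h' : u ^ (1:ℤ) = u ^ (b * a) := by
    rw [zpow_one, zpow_mul, ← hyb, ← hya]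
  have hab : b * a = 1 := (zpowInj hu h').symm
  rcases Int.mul_eq_one_iff_eq_one_or_neg_one.1 hab with ⟨hb1, -⟩ | ⟨hb1, -⟩
  · exact absurd (by rw [hyb, hb1, zpow_one]) hne2.symm
  · rw [hyb, hb1, zpow_neg, zpow_one]

/-- powers of a fixed infinite-order element: adjacency is divisibility. -/
lemma adj_zpow (hu : ¬ IsOfFinOrder u) {a b : ℤ} (ha : a ≠ 0) (hb : b ≠ 0) :
    (powerGraph K).Adj (u ^ a) (u ^ b) ↔ a ≠ b ∧ (a ∣ b ∨ b ∣ a) := by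
  constructor
  · rintro ⟨hne, n, hn, h | h⟩
    · refine ⟨fun hab => hne (by rw [hab]), Or.inl ?_⟩
      have : u ^ b = u ^ (a * n) := by rw [zpow_mul, h]
      exact ⟨n, (zpowInj hu this)⟩
    · refine ⟨fun hab => hne (by rw [hab]), Or.inr ?_⟩
      have : u ^ a = u ^ (b * n) := by rw [zpow_mul, h]
      exact ⟨n, (zpowInj hu this)⟩
  · rintro ⟨hab, ⟨n, hn⟩ | ⟨n, hn⟩⟩
    · refine ⟨fun h => hab (zpowInj hu h), n, ?_, Or.inl (by rw [← zpow_mul, ← hn])⟩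
      rintro rfl; rw [mul_zero] at hn; exact hb hn
    · refine ⟨fun h => hab (zpowInj hu h), n, ?_, Or.inr (by rw [← zpow_mul, ← hn])⟩
      rintro rfl; rw [mul_zero] at hn; exact ha hn

/-- in-elements and out-elements are always adjacent. -/
lemma adj_of_in_out (hx : x ∈ inSet u) (hy : y ∈ outSet u) (hne : x ≠ y) :
    (powerGraph K).Adj x y := by
  obtain ⟨-, a, ha, hua⟩ := hx
  obtain ⟨-, b, hb, hyb⟩ := hy
  exact ⟨hne, a * b, mul_ne_zero ha hb, Or.inl (by rw [zpow_mul, ← hua, hyb])⟩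

lemma mem_outSet_iff (hu : ¬ IsOfFinOrder u) :
    y ∈ outSet u ↔ ∃ b : ℤ, b ≠ 0 ∧ b ≠ 1 ∧ y = u ^ b := by
  constructor
  · rintro ⟨hne, b, hb, rfl⟩
    exact ⟨b, hb, fun h => hne (by rw [h, zpow_one]), rfl⟩
  · rintro ⟨b, hb0, hb1, rfl⟩
    exact ⟨fun h => hb1 (zpowInj hu (by rw [← h, zpow_one])).symm, b, hb0, rfl⟩

lemma zpow_eq_inv_iff (hu : ¬ IsOfFinOrder u) {b : ℤ} : u ^ b = u⁻¹ ↔ b = -1 := by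
  constructor
  · intro h
    exact zpowInj hu (by rw [h, zpow_neg, zpow_one])
  · rintro rfl; rw [zpow_neg, zpow_one]

lemma mem_outSetMinus_iff (hu : ¬ IsOfFinOrder u) :
    y ∈ outSet u \ {u⁻¹} ↔ ∃ b : ℤ, b ≠ 0 ∧ b ≠ 1 ∧ b ≠ -1 ∧ y = u ^ b := by
  rw [Set.mem_diff, mem_outSet_iff hu]
  constructor
  · rintro ⟨⟨b, h0, h1, rfl⟩, hne⟩
    refine ⟨b, h0, h1, ?_, rfl⟩
    intro h; exact hne ((zpow_eq_inv_iff hu).2 h)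
  · rintro ⟨b, h0, h1, hm1, rfl⟩
    exact ⟨⟨b, h0, h1, rfl⟩, fun h => hm1 ((zpow_eq_inv_iff hu).1 h)⟩

end Basic

section CT
variable {K : Type*} [Group K] {u w x y : K}

/-- Closed twins in the power graph. -/
def CT (x w : K) : Prop :=
  x ≠ w ∧ (powerGraph K).Adj x w ∧
    ∀ t, t ≠ x → t ≠ w → ((powerGraph K).Adj x t ↔ (powerGraph K).Adj w t)

lemma ct_inv (hx : x ≠ x⁻¹) : CT x x⁻¹ := by
  refine ⟨hx, ⟨hx, -1, by norm_num, Or.inl (by rw [zpow_neg, zpow_one])⟩, ?_⟩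
  intro t htx htxi
  constructor
  · rintro ⟨hne, n, hn, h | h⟩
    · exact ⟨htxi.symm, -n, neg_ne_zero.2 hn, Or.inl (by rw [h]; group)⟩
    · exact ⟨htxi.symm, -n, neg_ne_zero.2 hn, Or.inr (by rw [zpow_neg, ← h])⟩
  · rintro ⟨hne, n, hn, h | h⟩
    · exact ⟨htx.symm, -n, neg_ne_zero.2 hn, Or.inl (by rw [h]; group)⟩
    · exact ⟨htx.symm, -n, neg_ne_zero.2 hn, Or.inr (by rw [zpow_neg, ← h, inv_inv])⟩

/-- For infinite-order `u`, the unique closed twin of `u` is `u⁻¹`. -/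
lemma ct_unique (hu : ¬ IsOfFinOrder u) (h : CT u w) : w = u⁻¹ := by
  obtain ⟨hne, hadj, hiff⟩ := h
  rcases adj_iff.1 hadj with ⟨-, n, hn, hw⟩ | ⟨-, n, hn, hw⟩
  · -- w = u ^ n
    have hn1 : n ≠ 1 := by rintro rfl; rw [zpow_one] at hw; exact hne hw.symm
    by_cases hnm1 : n = -1
    · rw [hw, hnm1, zpow_neg, zpow_one]
    exfalso
    have hna : 2 ≤ n.natAbs := by omega
    obtain ⟨p, hple, hp⟩ := Nat.exists_infinite_primes (n.natAbs + 1)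
    have hpn : (p : ℤ) ≠ n := by
      intro h'; have := congrArg Int.natAbs h'; simp at this; omega
    have hadjup : (powerGraph K).Adj u (u ^ (p:ℤ)) := by
      refine ⟨fun h' => ?_, p, by exact_mod_cast hp.ne_zero, Or.inl rfl⟩
      have := zpowInj hu (a := 1) (b := p) (by rw [zpow_one, ← h'])
      have := hp.one_lt; omega
    have htne1 : u ^ (p:ℤ) ≠ u := fun h' => hadjup.ne' h'
    have htne2 : u ^ (p:ℤ) ≠ w := by
      rw [hw]; intro h'; exact hpn (zpowInj hu h')
    have := (hiff _ htne1 htne2).1 hadjup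
    rw [hw] at this
    rcases (adj_zpow hu (by omega) (by exact_mod_cast hp.ne_zero)).1 this
      with ⟨-, hd | hd⟩
    · have := Int.natAbs_dvd_natAbs.2 hd
      simp at this
      rcases (Nat.Prime.eq_one_or_self_of_dvd hp _ this) with h' | h' <;> omega
    · have h2 := Int.natAbs_dvd_natAbs.2 hd
      simp at h2
      have := Nat.le_of_dvd (by omega) h2
      omega
  · -- u = w ^ n
    have hwu : ¬ IsOfFinOrder w := by
      intro h'
      exact hu (by rw [hw]; exact h'.zpow)
    have hn1 : n ≠ 1 := by rintro rfl; rw [zpow_one] at hw; exact hne hw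
    by_cases hnm1 : n = -1
    · subst hnm1
      rw [zpow_neg, zpow_one] at hw
      rw [hw, inv_inv]
    exfalso
    have hna : 2 ≤ n.natAbs := by omega
    obtain ⟨p, hple, hp⟩ := Nat.exists_infinite_primes (n.natAbs + 1)
    have hpn : (p : ℤ) ≠ n := by
      intro h'; have := congrArg Int.natAbs h'; simp at this; omega
    have hadjwp : (powerGraph K).Adj w (w ^ (p:ℤ)) := by
      refine ⟨fun h' => ?_, p, by exact_mod_cast hp.ne_zero, Or.inl rfl⟩
      have := zpowInj hwu (a := 1) (b := p) (by rw [zpow_one, ← h'])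
      have := hp.one_lt; omega
    have htne2 : w ^ (p:ℤ) ≠ w := fun h' => hadjwp.ne' h'
    have htne1 : w ^ (p:ℤ) ≠ u := by
      rw [hw]; intro h'; exact hpn (zpowInj hwu h')
    have := (hiff _ htne1 htne2).2 hadjwp
    rw [hw] at this
    rcases (adj_zpow hwu (by omega) (by exact_mod_cast hp.ne_zero)).1 this
      with ⟨-, hd | hd⟩
    · have := Int.natAbs_dvd_natAbs.2 hd
      simp at this
      rcases (Nat.Prime.eq_one_or_self_of_dvd hp _ this) with h' | h' <;> omega
    · have h2 := Int.natAbs_dvd_natAbs.2 hd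
      simp at h2
      have := Nat.le_of_dvd (by omega) h2
      omega


lemma ct_map {G H : Type*} [Group G] [Group H] (f : powerGraph G ≃g powerGraph H)
    {x w : G} (h : CT x w) : CT (f x) (f w) := by
  obtain ⟨hne, hadj, hiff⟩ := h
  refine ⟨fun h' => hne (f.injective h'), f.map_rel_iff.2 hadj, ?_⟩
  intro t' ht1 ht2
  have hrw : t' = f (f.symm t') := (f.apply_symm_apply t').symm
  rw [hrw, f.map_rel_iff, f.map_rel_iff]
  exact hiff _ (fun h' => ht1 (by rw [hrw, h'])) (fun h' => ht2 (by rw [hrw, h']))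

/-- generators of a finite cyclic group are closed twins. -/
lemma ct_gen {K : Type*} [Group K] {x : K} (hx : IsOfFinOrder x) {j : ℕ}
    (hcop : Nat.Coprime j (orderOf x)) (hne : x ^ j ≠ x) : CT x (x ^ j) := by
  have hk0 : 0 < orderOf x := hx.orderOf_pos
  have hk1 : 1 < orderOf x := by
    rcases Nat.lt_or_ge (orderOf x) 2 with h' | h'
    · exfalso
      have : orderOf x = 1 := by omega
      rw [orderOf_eq_one_iff] at this
      subst this; simp at hne
    · omega
  obtain ⟨j', -, hj'⟩ := Nat.exists_mul_mod_eq_one_of_coprime hcop hk1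
  have hj0 : j ≠ 0 := by
    rintro rfl
    rw [Nat.coprime_zero_left] at hcop; omega
  have hj'0 : j' ≠ 0 := by rintro rfl; rw [Nat.mul_zero, Nat.zero_mod] at hj'; omega
  have hjj' : x ^ (j * j') = x := by
    have : j * j' ≡ 1 [MOD orderOf x] := by
      unfold Nat.ModEq; rw [hj', Nat.mod_eq_of_lt hk1]
    calc x ^ (j * j') = x ^ 1 := pow_eq_pow_iff_modEq.2 this
      _ = x := pow_one x
  have key : ∀ m : ℤ, (x ^ j) ^ ((j' : ℤ) * m) = x ^ m := by
    intro m
    calc (x ^ j) ^ ((j':ℤ) * m) = (x ^ (j:ℤ)) ^ ((j':ℤ) * m) := by rw [zpow_natCast]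
      _ = x ^ ((j:ℤ) * ((j':ℤ) * m)) := by rw [← zpow_mul]
      _ = x ^ (((j * j' : ℕ) : ℤ) * m) := by push_cast; ring_nf
      _ = (x ^ ((j * j' : ℕ) : ℤ)) ^ m := by rw [zpow_mul]
      _ = (x ^ (j * j' : ℕ)) ^ m := by rw [zpow_natCast]
      _ = x ^ m := by rw [hjj']
  refine ⟨hne.symm, ⟨hne.symm, (j:ℤ), by exact_mod_cast hj0, Or.inl (zpow_natCast x j).symm⟩, ?_⟩
  intro t htx htj
  constructor
  · rintro ⟨hxt, n, hn, h | h⟩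
    · refine ⟨htj.symm, (j':ℤ) * n, mul_ne_zero (by exact_mod_cast hj'0) hn, Or.inl ?_⟩
      rw [key n, ← h]
    · refine ⟨htj.symm, n * (j:ℤ), mul_ne_zero hn (by exact_mod_cast hj0), Or.inr ?_⟩
      rw [zpow_mul, ← h, zpow_natCast]
  · rintro ⟨hjt, n, hn, h | h⟩
    · refine ⟨htx.symm, (j:ℤ) * n, mul_ne_zero (by exact_mod_cast hj0) hn, Or.inl ?_⟩
      rw [zpow_mul, zpow_natCast, ← h]
    · refine ⟨htx.symm, n * (j':ℤ), mul_ne_zero hn (by exact_mod_cast hj'0), Or.inr ?_⟩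
      have h1 : (x ^ j) ^ ((j':ℤ)) = x := by
        have := key 1; rwa [mul_one, zpow_one] at this
      rw [← h1, h, ← zpow_mul]
end CT

section NT

lemma nt_exists {k : ℕ} (hk : 7 ≤ k) :
    ∃ j : ℕ, 1 ≤ j ∧ Nat.Coprime j k ∧ ¬ (k ∣ j - 1) ∧ ¬ (k ∣ j + 1) := by
  by_cases h2 : 2 ∣ k
  · by_cases h3 : 3 ∣ k
    · by_cases h5 : 5 ∣ k
      · -- 30 ∣ k
        have h30 : 30 ∣ k := by omega
        obtain ⟨c, rfl⟩ := h30
        have hc : 1 ≤ c := by omega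
        obtain ⟨p, pp, hp1, hp2⟩ := Nat.exists_prime_lt_and_le_two_mul (15 * c - 1) (by omega)
        have hp2' : p ≤ 30 * c - 2 := by omega
        have hp15 : 15 * c ≤ p := by omega
        have hpk : ¬ p ∣ 30 * c := by
          rintro ⟨e, he⟩
          rcases Nat.lt_or_ge e 3 with he3 | he3
          · have he2 : e = 0 ∨ e = 1 ∨ e = 2 := by omega
            rcases he2 with rfl | rfl | rfl
            · omega
            · omega
            · -- p = 15 c, but 3 ∣ p
              have hp15e : p = 15 * c := by omega
              have h3p : (3:ℕ) ∣ p := ⟨5 * c, by omega⟩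
              rcases pp.eq_one_or_self_of_dvd 3 h3p with h' | h' <;> omega
          · have := Nat.mul_le_mul hp15 he3
            rw [← he] at this
            omega
        refine ⟨p, by omega, ((Nat.Prime.coprime_iff_not_dvd pp).2 hpk), ?_, ?_⟩
        · intro hd
          have := Nat.le_of_dvd (by omega) hd
          omega
        · intro hd
          have := Nat.le_of_dvd (by omega) hd
          omega
      · -- 6 ∣ k, ¬ 5 ∣ k : j = 5
        refine ⟨5, by omega, ((Nat.Prime.coprime_iff_not_dvd (by norm_num)).2 h5), ?_, ?_⟩
        · intro hd; have := Nat.le_of_dvd (by norm_num) hd; omega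
        · intro hd; have := Nat.le_of_dvd (by norm_num) hd; omega
    · -- ¬ 3 ∣ k : j = k - 3
      have hgcd : Nat.Coprime (k - 3) k := by
        have hd3 : Nat.gcd (k - 3) k ∣ 3 := by
          have h1 := Nat.gcd_dvd_left (k - 3) k
          have h2' := Nat.gcd_dvd_right (k - 3) k
          have : Nat.gcd (k - 3) k ∣ k - (k - 3) := Nat.dvd_sub h2' h1
          rwa [show k - (k - 3) = 3 by omega] at this
        rcases (Nat.prime_three).eq_one_or_self_of_dvd _ hd3 with h' | h'
        · exact h'
        · exfalso
          exact h3 (h' ▸ Nat.gcd_dvd_right (k - 3) k)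
      refine ⟨k - 3, by omega, hgcd, ?_, ?_⟩
      · intro hd
        have := Nat.le_of_dvd (show 0 < k - 3 - 1 by omega) hd
        omega
      · intro hd
        have := Nat.le_of_dvd (show 0 < k - 3 + 1 by omega) hd
        omega
  · -- k odd : j = 2
    refine ⟨2, by omega, ((Nat.Prime.coprime_iff_not_dvd (by norm_num)).2 h2), ?_, ?_⟩
    · intro hd; have := Nat.le_of_dvd (by norm_num) hd; omega
    · intro hd; have := Nat.le_of_dvd (by norm_num) hd; omega

end NT

section Infinite
open Subgroup

lemma fz_infinite {G H : Type*} [Group G] [Group H] (f : powerGraph G ≃g powerGraph H)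
    {z : G} (hz : ¬ IsOfFinOrder z) : ¬ IsOfFinOrder (f z) := by
  intro hfin
  set g : ℕ → G := fun i => z ^ (2 ^ i : ℕ) with hg
  have hginj : Function.Injective g := by
    intro i j h
    have h2 := (injective_pow_iff_not_isOfFinOrder.2 hz) h
    exact Nat.pow_right_injective (le_refl 2) h2
  have hgadj : ∀ i j, i < j → (powerGraph G).Adj (g i) (g j) := by
    intro i j hij
    refine ⟨fun h => absurd (hginj h) hij.ne, ((2 ^ (j - i) : ℕ) : ℤ),
      by positivity, Or.inl ?_⟩
    rw [zpow_natCast, ← pow_mul, ← pow_add]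
    congr 1
    omega
  have hg0 : g 0 = z := by simp [hg]
  have hto : ∀ i, IsOfFinOrder (f (g i)) := by
    intro i
    rcases Nat.eq_zero_or_pos i with rfl | hi
    · rw [hg0]; exact hfin
    · exact finOrder_of_adj (f.map_rel_iff.2 (hgadj 0 i hi)) (hg0 ▸ hfin)
  have hg_inf : ∀ i, ¬ IsOfFinOrder (g i) := by
    intro i hfo
    rcases Nat.eq_zero_or_pos i with rfl | hi
    · rw [hg0] at hfo; exact hz hfo
    · exact hz (hg0 ▸ finOrder_of_adj (hgadj 0 i hi).symm hfo)
  have horder : ∀ i, orderOf (f (g i)) ≤ 6 := by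
    intro i
    by_contra hgt
    push_neg at hgt
    set h := f (g i) with hh
    have hk7 : 7 ≤ orderOf h := hgt
    obtain ⟨j, hj1, hcop, hd1, hd2⟩ := nt_exists hk7
    have hne1 : h ^ j ≠ h := by
      intro he
      have hmod : j ≡ 1 [MOD orderOf h] :=
        pow_eq_pow_iff_modEq.1 (he.trans (pow_one h).symm)
      exact hd1 ((Nat.modEq_iff_dvd' hj1).1 hmod.symm)
    have hne2 : h ^ j ≠ h⁻¹ := by
      intro he
      have : h ^ (j + 1) = 1 := by rw [pow_succ, he, inv_mul_cancel]
      exact hd2 (orderOf_dvd_iff_pow_eq_one.2 this)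
    have hct1 : CT h (h ^ j) := ct_gen (hto i) hcop hne1
    have hct2 : CT h h⁻¹ := by
      apply ct_inv
      intro he
      have h2 : h ^ (2:ℕ) = 1 := by
        rw [pow_two]; nth_rewrite 2 [he]; exact mul_inv_cancel h
      have := Nat.le_of_dvd (by norm_num) (orderOf_dvd_iff_pow_eq_one.2 h2)
      omega
    have e1 : f.symm (h ^ j) = (g i)⁻¹ := by
      have hc := ct_map f.symm hct1
      rw [hh, f.symm_apply_apply] at hc
      exact ct_unique (hg_inf i) hc
    have e2 : f.symm (h⁻¹) = (g i)⁻¹ := by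
      have hc := ct_map f.symm hct2
      rw [hh, f.symm_apply_apply] at hc
      exact ct_unique (hg_inf i) hc
    exact hne2 (f.symm.injective (e1.trans e2.symm))
  have hcomp : ∀ i j, i ≠ j →
      f (g i) ∈ zpowers (f (g j)) ∨ f (g j) ∈ zpowers (f (g i)) := by
    intro i j hij
    have hadj : (powerGraph H).Adj (f (g i)) (f (g j)) := by
      rcases Nat.lt_or_ge i j with h' | h'
      · exact f.map_rel_iff.2 (hgadj i j h')
      · exact (f.map_rel_iff.2 (hgadj j i (by omega))).symm
    rcases adj_iff.1 hadj with ⟨-, n, -, hn⟩ | ⟨-, n, -, hn⟩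
    · exact Or.inr (mem_zpowers_iff.2 ⟨n, hn.symm⟩)
    · exact Or.inl (mem_zpowers_iff.2 ⟨n, hn.symm⟩)
  obtain ⟨m, hm_mem, hmax⟩ := Finset.exists_max_image (Finset.range 7)
    (fun i => orderOf (f (g i))) ⟨0, by simp⟩
  have hall : ∀ i ∈ Finset.range 7, f (g i) ∈ zpowers (f (g m)) := by
    intro i hi
    rcases eq_or_ne i m with rfl | hne
    · exact mem_zpowers _
    rcases hcomp i m hne with h' | h'
    · exact h'
    · have hle : (zpowers (f (g m)) : Set H) ⊆ (zpowers (f (g i)) : Set H) := by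
        intro t ht
        exact (zpowers_le.2 h') ht
      have hfin_i : (zpowers (f (g i)) : Set H).Finite := (hto i).finite_zpowers
      have hcard : (zpowers (f (g i)) : Set H).ncard ≤ (zpowers (f (g m)) : Set H).ncard := by
        have e1 : (zpowers (f (g i)) : Set H).ncard = orderOf (f (g i)) := by
          rw [← Nat.card_coe_set_eq]
          exact Nat.card_zpowers _
        have e2 : (zpowers (f (g m)) : Set H).ncard = orderOf (f (g m)) := by
          rw [← Nat.card_coe_set_eq]
          exact Nat.card_zpowers _
        rw [e1, e2]
        exact hmax i hi
      have heq := Set.eq_of_subset_of_ncard_le hle hcard hfin_i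
      have : f (g i) ∈ (zpowers (f (g i)) : Set H) := mem_zpowers _
      rwa [← heq] at this
  have hfinm : Finite ((zpowers (f (g m))) : Set H) := (hto m).finite_zpowers.to_subtype
  have hinj : Function.Injective
      (fun i : Fin 7 => (⟨f (g (i : ℕ)), hall i (by simp [i.isLt])⟩ :
        ((zpowers (f (g m))) : Set H))) := by
    intro a b hab
    have := congrArg Subtype.val hab
    simp only at this
    exact Fin.ext (hginj (f.injective this))
  have h7 : 7 ≤ Nat.card ((zpowers (f (g m))) : Set H) := by
    have := Nat.card_le_card_of_injective _ hinj
    simpa using this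
  have : Nat.card ((zpowers (f (g m))) : Set H) = orderOf (f (g m)) := by
    rw [← Nat.card_zpowers]
    rfl
  have := horder m
  omega

end Infinite

section Iso
variable {α β : Type*}

/-- Restriction of a graph isomorphism to matching induced subgraphs. -/
def isoRestrict {Γ : SimpleGraph α} {Δ : SimpleGraph β} (f : Γ ≃g Δ)
    (A : Set α) (A' : Set β) (h : ∀ x, x ∈ A ↔ f x ∈ A') :
    Γ.induce A ≃g Δ.induce A' where
  toEquiv := (f : α ≃ β).subtypeEquiv h
  map_rel_iff' := by
    intro a b
    simp only [Equiv.subtypeEquiv_apply, SimpleGraph.comap_adj, Function.Embedding.coe_subtype]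
    exact f.map_rel_iff

/-- Gluing two isomorphisms of induced subgraphs along fully-adjacent parts. -/
noncomputable def isoGlue (Γ : SimpleGraph α) (Δ : SimpleGraph β) (A B : Set α) (A' B' : Set β)
    (hd' : ∀ x, x ∈ A' → x ∈ B' → False)
    (e₁ : Γ.induce A ≃g Δ.induce A') (e₂ : Γ.induce B ≃g Δ.induce B')
    (cross : ∀ a ∈ A, ∀ b ∈ B, Γ.Adj a b) (cross' : ∀ a ∈ A', ∀ b ∈ B', Δ.Adj a b) :
    Γ.induce (A ∪ B) ≃g Δ.induce (A' ∪ B') := by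
  classical
  have hd : ∀ x, x ∈ A → x ∈ B → False := fun x hA hB => (cross x hA x hB).ne rfl
  refine ⟨Equiv.mk
    (fun v => if h : v.1 ∈ A then ⟨(e₁ ⟨v.1, h⟩).1, Or.inl (e₁ ⟨v.1, h⟩).2⟩
      else ⟨(e₂ ⟨v.1, v.2.resolve_left h⟩).1, Or.inr (e₂ ⟨v.1, v.2.resolve_left h⟩).2⟩)
    (fun v => if h : v.1 ∈ A' then ⟨(e₁.symm ⟨v.1, h⟩).1, Or.inl (e₁.symm ⟨v.1, h⟩).2⟩
      else ⟨(e₂.symm ⟨v.1, v.2.resolve_left h⟩).1, Or.inr (e₂.symm ⟨v.1, v.2.resolve_left h⟩).2⟩)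
    ?_ ?_, ?_⟩
  · intro v
    dsimp only
    by_cases h : v.1 ∈ A
    · rw [dif_pos h]
      rw [dif_pos (e₁ ⟨v.1, h⟩).2]
      exact Subtype.ext (by rw [RelIso.symm_apply_apply])
    · rw [dif_neg h]
      have hB := v.2.resolve_left h
      have hnotA' : (e₂ ⟨v.1, hB⟩).1 ∉ A' := fun hA' => hd' _ hA' (e₂ ⟨v.1, hB⟩).2
      rw [dif_neg hnotA']
      exact Subtype.ext (by rw [RelIso.symm_apply_apply])
  · intro v
    dsimp only
    by_cases h : v.1 ∈ A'
    · rw [dif_pos h]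
      rw [dif_pos (e₁.symm ⟨v.1, h⟩).2]
      exact Subtype.ext (by rw [RelIso.apply_symm_apply])
    · rw [dif_neg h]
      have hB := v.2.resolve_left h
      have hnotA : (e₂.symm ⟨v.1, hB⟩).1 ∉ A := fun hA => hd _ hA (e₂.symm ⟨v.1, hB⟩).2
      rw [dif_neg hnotA]
      exact Subtype.ext (by rw [RelIso.apply_symm_apply])
  · intro a b
    simp only [Equiv.coe_fn_mk, SimpleGraph.comap_adj, Function.Embedding.coe_subtype]
    by_cases ha : a.1 ∈ A <;> by_cases hb : b.1 ∈ A
    · rw [dif_pos ha, dif_pos hb]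
      exact e₁.map_rel_iff (a := ⟨a.1, ha⟩) (b := ⟨b.1, hb⟩)
    · rw [dif_pos ha, dif_neg hb]
      have hbB := b.2.resolve_left hb
      constructor
      · intro _; exact cross _ ha _ hbB
      · intro _; exact cross' _ (e₁ ⟨a.1, ha⟩).2 _ (e₂ ⟨b.1, hbB⟩).2
    · rw [dif_neg ha, dif_pos hb]
      have haB := a.2.resolve_left ha
      constructor
      · intro _; exact (cross _ hb _ haB).symm
      · intro _; exact (cross' _ (e₁ ⟨b.1, hb⟩).2 _ (e₂ ⟨a.1, haB⟩).2).symm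
    · rw [dif_neg ha, dif_neg hb]
      exact e₂.map_rel_iff (a := ⟨a.1, a.2.resolve_left ha⟩) (b := ⟨b.1, b.2.resolve_left hb⟩)

end Iso

section OutIso
variable {K K' : Type*} [Group K] [Group K']

noncomputable def expOut {u : K} (hu : ¬ IsOfFinOrder u) :
    {b : ℤ // b ≠ 0 ∧ b ≠ 1} ≃ ↥(outSet u) :=
  Equiv.ofBijective
    (fun b => ⟨u ^ b.1, (mem_outSet_iff hu).2 ⟨b.1, b.2.1, b.2.2, rfl⟩⟩)
    ⟨fun a b h => Subtype.ext (zpowInj hu (congrArg Subtype.val h)),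
     fun y => by
      obtain ⟨b, h0, h1, hy⟩ := (mem_outSet_iff hu).1 y.2
      exact ⟨⟨b, h0, h1⟩, Subtype.ext hy.symm⟩⟩

@[simp] lemma expOut_apply {u : K} (hu : ¬ IsOfFinOrder u) (b : {b : ℤ // b ≠ 0 ∧ b ≠ 1}) :
    (expOut hu b : K) = u ^ b.1 := rfl

noncomputable def outIso {u : K} {u' : K'} (hu : ¬ IsOfFinOrder u) (hu' : ¬ IsOfFinOrder u') :
    (powerGraph K).induce (outSet u) ≃g (powerGraph K').induce (outSet u') where
  toEquiv := (expOut hu).symm.trans (expOut hu')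
  map_rel_iff' := by
    intro a b
    obtain ⟨p, rfl⟩ := (expOut hu).surjective a
    obtain ⟨q, rfl⟩ := (expOut hu).surjective b
    simp only [Equiv.trans_apply, Equiv.symm_apply_apply, SimpleGraph.comap_adj,
      Function.Embedding.coe_subtype, expOut_apply]
    rw [adj_zpow hu' p.2.1 q.2.1, adj_zpow hu p.2.1 q.2.1]

noncomputable def expOutM {u : K} (hu : ¬ IsOfFinOrder u) :
    {b : ℤ // b ≠ 0 ∧ b ≠ 1 ∧ b ≠ -1} ≃ ↥(outSet u \ {u⁻¹}) :=
  Equiv.ofBijective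
    (fun b => ⟨u ^ b.1, (mem_outSetMinus_iff hu).2 ⟨b.1, b.2.1, b.2.2.1, b.2.2.2, rfl⟩⟩)
    ⟨fun a b h => Subtype.ext (zpowInj hu (congrArg Subtype.val h)),
     fun y => by
      obtain ⟨b, h0, h1, hm, hy⟩ := (mem_outSetMinus_iff hu).1 y.2
      exact ⟨⟨b, h0, h1, hm⟩, Subtype.ext hy.symm⟩⟩

@[simp] lemma expOutM_apply {u : K} (hu : ¬ IsOfFinOrder u)
    (b : {b : ℤ // b ≠ 0 ∧ b ≠ 1 ∧ b ≠ -1}) :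
    (expOutM hu b : K) = u ^ b.1 := rfl

noncomputable def outMIso {u : K} {u' : K'} (hu : ¬ IsOfFinOrder u) (hu' : ¬ IsOfFinOrder u') :
    (powerGraph K).induce (outSet u \ {u⁻¹}) ≃g (powerGraph K').induce (outSet u' \ {u'⁻¹}) where
  toEquiv := (expOutM hu).symm.trans (expOutM hu')
  map_rel_iff' := by
    intro a b
    obtain ⟨p, rfl⟩ := (expOutM hu).surjective a
    obtain ⟨q, rfl⟩ := (expOutM hu).surjective b
    simp only [Equiv.trans_apply, Equiv.symm_apply_apply, SimpleGraph.comap_adj,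
      Function.Embedding.coe_subtype, expOutM_apply]
    rw [adj_zpow hu' p.2.1 q.2.1, adj_zpow hu p.2.1 q.2.1]

end OutIso

section Walk
variable {K : Type*} [Group K]

lemma tri {u x : K} (hu : ¬ IsOfFinOrder u) (h : (powerGraph K).Adj u x) :
    x = u⁻¹ ∨ x ∈ outSet u \ {u⁻¹} ∨ x ∈ inSet u \ {u⁻¹} := by
  by_cases hx : x = u⁻¹
  · exact Or.inl hx
  · rcases adj_iff.1 h with h' | h'
    · exact Or.inr (Or.inl ⟨h', by simpa using hx⟩)
    · exact Or.inr (Or.inr ⟨h', by simpa using hx⟩)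

lemma adj_of_mem_outSet {u y : K} (h : y ∈ outSet u) : (powerGraph K).Adj u y :=
  adj_iff.2 (Or.inl h)

lemma adj_of_mem_inSet {u y : K} (h : y ∈ inSet u) : (powerGraph K).Adj u y :=
  adj_iff.2 (Or.inr h)

lemma key_walk {G H : Type*} [Group G] [Group H] (f : powerGraph G ≃g powerGraph H)
    {z : G} (hzo : ¬ IsOfFinOrder z) (hz'o : ¬ IsOfFinOrder (f z))
    (hinv : f z⁻¹ = (f z)⁻¹)
    (hex : ∃ y₀ ∈ outSet z \ {z⁻¹}, f y₀ ∈ inSet (f z) \ {(f z)⁻¹}) :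
    ∀ y ∈ outSet z \ {z⁻¹}, f y ∈ inSet (f z) \ {(f z)⁻¹} := by
  obtain ⟨y₀, hy₀, hfy₀⟩ := hex
  have hstep : ∀ y₁ y₂ : G, y₁ ∈ outSet z \ {z⁻¹} → y₂ ∈ outSet z \ {z⁻¹} →
      y₁ ≠ y₂ → ¬ (powerGraph G).Adj y₁ y₂ →
      f y₁ ∈ inSet (f z) \ {(f z)⁻¹} → f y₂ ∈ inSet (f z) \ {(f z)⁻¹} := by
    intro y₁ y₂ h1 h2 hne hnadj hf1
    have hf2i : f y₂ ≠ (f z)⁻¹ := by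
      intro h'
      have : y₂ = z⁻¹ := f.injective (by rw [h', ← hinv])
      exact h2.2 (by simpa using this)
    have hadjz : (powerGraph H).Adj (f z) (f y₂) :=
      f.map_rel_iff.2 (adj_of_mem_outSet h2.1)
    rcases tri hz'o hadjz with h' | h' | h'
    · exact absurd h' hf2i
    · exfalso
      have hadj12 : (powerGraph H).Adj (f y₁) (f y₂) :=
        adj_of_in_out hf1.1 h'.1 (fun h'' => hne (f.injective h''))
      exact hnadj (f.map_rel_iff.1 hadj12)
    · exact h'
  intro y hy
  obtain ⟨b₀, hb₀0, hb₀1, hb₀m, hy₀e⟩ := (mem_outSetMinus_iff hzo).1 hy₀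
  obtain ⟨b, hb0, hb1, hbm, hye⟩ := (mem_outSetMinus_iff hzo).1 hy
  obtain ⟨p, hple, hp⟩ := Nat.exists_infinite_primes (max b₀.natAbs b.natAbs + 2)
  have hp0 : ((p:ℤ)) ≠ 0 := by exact_mod_cast hp.ne_zero
  have hpmem : z ^ (p:ℤ) ∈ outSet z \ {z⁻¹} := by
    refine (mem_outSetMinus_iff hzo).2 ⟨(p:ℤ), hp0, ?_, ?_, rfl⟩
    · intro h'
      have : p = 1 := by exact_mod_cast h'
      have := hp.one_lt; omega
    · intro h'
      have h0' : (0:ℤ) ≤ (p:ℤ) := Int.natCast_nonneg p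
      omega
  have hinc : ∀ c : ℤ, c ≠ 0 → c ≠ 1 → c ≠ -1 → c.natAbs < p →
      z ^ c ≠ z ^ (p:ℤ) ∧ ¬ (powerGraph G).Adj (z ^ c) (z ^ (p:ℤ)) := by
    intro c h0 h1 hm hlt
    have hc2 : 2 ≤ c.natAbs := by omega
    constructor
    · intro h'
      have := zpowInj hzo h'
      omega
    · intro hadj
      rcases (adj_zpow hzo h0 hp0).1 hadj with ⟨-, hd | hd⟩
      · have hdn := Int.natAbs_dvd_natAbs.2 hd
        simp at hdn
        rcases hp.eq_one_or_self_of_dvd _ hdn with h' | h' <;> omega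
      · have hdn := Int.natAbs_dvd_natAbs.2 hd
        simp at hdn
        have := Nat.le_of_dvd (by omega) hdn
        omega
  have h1 := hinc b₀ hb₀0 hb₀1 hb₀m (by omega)
  have hmid : f (z ^ (p:ℤ)) ∈ inSet (f z) \ {(f z)⁻¹} := by
    refine hstep y₀ (z ^ (p:ℤ)) hy₀ hpmem ?_ ?_ hfy₀
    · rw [hy₀e]; exact h1.1
    · rw [hy₀e]; exact h1.2
  have h2 := hinc b hb0 hb1 hbm (by omega)
  refine hstep (z ^ (p:ℤ)) y hpmem hy ?_ ?_ hmid
  · rw [hye]; exact fun h' => h2.1 h'.symm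
  · rw [hye]; intro hadj; exact h2.2 hadj.symm

end Walk


/-- If `G` is torsion-free, `f : P(G) → P(H)` is a power graph isomorphism and
`z ≠ 1`, then the induced subgraphs on `I_G(z)` and `I_H(f z)` are isomorphic,
and likewise for `O_G(z)` and `O_H(f z)`. -/
theorem stmt_8 (G H : Type*) [Group G] [Group H]
    (htf : ∀ g : G, g ≠ 1 → ¬ IsOfFinOrder g)
    (f : powerGraph G ≃g powerGraph H) (z : G) (hz : z ≠ 1) :
    Nonempty ((powerGraph G).induce (inSet z) ≃g
        (powerGraph H).induce (inSet (f z))) ∧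
      Nonempty ((powerGraph G).induce (outSet z) ≃g
        (powerGraph H).induce (outSet (f z))) := by
  classical
  have hzo : ¬ IsOfFinOrder z := htf z hz
  have hz'o : ¬ IsOfFinOrder (f z) := fz_infinite f hzo
  refine ⟨?_, ⟨outIso hzo hz'o⟩⟩
  have hinv : f z⁻¹ = (f z)⁻¹ := ct_unique hz'o (ct_map f (ct_inv (ne_inv hzo)))
  have hsymm_z : f.symm (f z) = z := f.symm_apply_apply z
  have hinv' : f.symm ((f z)⁻¹) = z⁻¹ := by rw [← hinv, f.symm_apply_apply]
  have hfne : ∀ x : G, x ≠ z⁻¹ → f x ≠ (f z)⁻¹ := by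
    intro x hx h'
    exact hx (f.injective (by rw [h', ← hinv]))
  have hfne' : ∀ x' : H, x' ≠ (f z)⁻¹ → f.symm x' ≠ z⁻¹ := by
    intro x' hx h'
    exact hx (f.symm.injective (by rw [h', ← hinv']))
  by_cases hcase : ∃ y₀ ∈ outSet z \ {z⁻¹}, f y₀ ∈ inSet (f z) \ {(f z)⁻¹}
  · -- swapped case
    have hOI := key_walk f hzo hz'o hinv hcase
    have hOI' : ∀ y' ∈ outSet (f z) \ {(f z)⁻¹}, f.symm y' ∈ inSet z \ {z⁻¹} := by
      intro y' hy'
      have hadj : (powerGraph G).Adj z (f.symm y') := by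
        rw [← hsymm_z]
        exact f.symm.map_rel_iff.2 (adj_of_mem_outSet hy'.1)
      rcases tri hzo hadj with h' | h' | h'
      · exfalso
        apply hy'.2
        have h2 : f (f.symm y') = f z⁻¹ := congrArg f h'
        rw [f.apply_symm_apply, hinv] at h2
        simpa using h2
      · exfalso
        have h2 := hOI _ h'
        rw [f.apply_symm_apply] at h2
        have heq := eq_inv_of_mem_both hz'o h2.1 hy'.1
        exact hy'.2 (by simpa using heq)
      · exact h'
    set C : Set G := {x | f x ∈ outSet (f z) \ {(f z)⁻¹}} with hCdef
    set C' : Set H := {x' | f.symm x' ∈ outSet z \ {z⁻¹}} with hC'def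
    have hCsub : ∀ x ∈ C, x ∈ inSet z ∧ x ≠ z⁻¹ := by
      intro x hx
      have h2 := hOI' (f x) hx
      rw [f.symm_apply_apply] at h2
      exact ⟨h2.1, by simpa using h2.2⟩
    have hC'sub : ∀ x' ∈ C', x' ∈ inSet (f z) ∧ x' ≠ (f z)⁻¹ := by
      intro x' hx'
      have h2 := hOI _ hx'
      rw [f.apply_symm_apply] at h2
      exact ⟨h2.1, by simpa using h2.2⟩
    have hiff₁ : ∀ x : G, x ∈ inSet z \ C ↔ f x ∈ inSet (f z) \ C' := by
      intro x
      constructor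
      · rintro ⟨hxI, hxC⟩
        by_cases hxinv : x = z⁻¹
        · subst hxinv
          refine ⟨by rw [hinv]; exact inv_mem_inSet hz'o, ?_⟩
          intro hC'
          exact (hC'sub _ hC').2 hinv
        · have hadj' : (powerGraph H).Adj (f z) (f x) :=
            f.map_rel_iff.2 (adj_of_mem_inSet hxI)
          rcases tri hz'o hadj' with h' | h' | h'
          · exact absurd h' (hfne x hxinv)
          · exact absurd h' hxC
          · refine ⟨h'.1, ?_⟩
            intro hC'
            have hxOv : x ∈ outSet z \ {z⁻¹} := by
              have h3 : f.symm (f x) ∈ outSet z \ {z⁻¹} := hC'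
              rwa [f.symm_apply_apply] at h3
            exact hxinv (eq_inv_of_mem_both hzo hxI hxOv.1)
      · rintro ⟨hxI', hxC'⟩
        by_cases hfinv : f x = (f z)⁻¹
        · have hxinv : x = z⁻¹ := f.injective (by rw [hfinv, ← hinv])
          subst hxinv
          refine ⟨inv_mem_inSet hzo, ?_⟩
          intro hC
          have h3 : f z⁻¹ ∈ outSet (f z) \ {(f z)⁻¹} := hC
          exact h3.2 (by simpa using hinv)
        · have hadj : (powerGraph G).Adj z x :=
            f.map_rel_iff.1 (adj_of_mem_inSet hxI')
          rcases tri hzo hadj with h' | h' | h'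
          · exact absurd (by rw [h']; exact hinv) hfinv
          · exfalso
            apply hxC'
            show f.symm (f x) ∈ outSet z \ {z⁻¹}
            rwa [f.symm_apply_apply]
          · refine ⟨h'.1, fun hC => ?_⟩
            have h3 : f x ∈ outSet (f z) \ {(f z)⁻¹} := hC
            exact hfinv (eq_inv_of_mem_both hz'o hxI' h3.1)
    have iso₁ := isoRestrict f (inSet z \ C) (inSet (f z) \ C') hiff₁
    have hiso2a : ∀ x : G, x ∈ C ↔ f x ∈ outSet (f z) \ {(f z)⁻¹} := fun x => Iff.rfl
    have hiso2b : ∀ x : G, x ∈ outSet z \ {z⁻¹} ↔ f x ∈ C' := by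
      intro x
      constructor
      · intro h
        show f.symm (f x) ∈ outSet z \ {z⁻¹}
        rwa [f.symm_apply_apply]
      · intro h
        have h3 : f.symm (f x) ∈ outSet z \ {z⁻¹} := h
        rwa [f.symm_apply_apply] at h3
    have iso₂ := (isoRestrict f C (outSet (f z) \ {(f z)⁻¹}) hiso2a).trans
      ((outMIso hz'o hzo).trans (isoRestrict f (outSet z \ {z⁻¹}) C' hiso2b))
    have cross : ∀ a ∈ inSet z \ C, ∀ c ∈ C, (powerGraph G).Adj a c := by
      intro a ha c hc
      have hcI := hCsub c hc
      by_cases hainv : a = z⁻¹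
      · subst hainv
        obtain ⟨hcne, n, hn, hcz⟩ := hcI.1
        exact ⟨fun h' => hcI.2 h'.symm, -n, neg_ne_zero.2 hn,
          Or.inr (by rw [zpow_neg, ← hcz])⟩
      · have hfa := (hiff₁ a).1 ha
        have hane : a ≠ c := by
          intro h'
          exact ha.2 (h' ▸ hc)
        have hcOv : f c ∈ outSet (f z) \ {(f z)⁻¹} := hc
        have hadj' := adj_of_in_out hfa.1 hcOv.1 (fun h'' => hane (f.injective h''))
        exact f.map_rel_iff.1 hadj'
    have cross' : ∀ a' ∈ inSet (f z) \ C', ∀ c' ∈ C', (powerGraph H).Adj a' c' := by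
      intro a' ha' c' hc'
      have hcI' := hC'sub c' hc'
      by_cases hainv : a' = (f z)⁻¹
      · subst hainv
        obtain ⟨hcne, n, hn, hcz⟩ := hcI'.1
        exact ⟨fun h' => hcI'.2 h'.symm, -n, neg_ne_zero.2 hn,
          Or.inr (by rw [zpow_neg, ← hcz])⟩
      · have ha'I : f.symm a' ∈ inSet z \ C :=
          (hiff₁ (f.symm a')).2 (by rw [f.apply_symm_apply]; exact ha')
        have hane : a' ≠ c' := fun h' => ha'.2 (h' ▸ hc')
        have hadj := adj_of_in_out ha'I.1 ((hc' : f.symm c' ∈ outSet z \ {z⁻¹}).1)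
          (fun h'' => hane (f.symm.injective h''))
        exact f.symm.map_rel_iff.1 hadj
    have hd' : ∀ x', x' ∈ inSet (f z) \ C' → x' ∈ C' → False := fun x' h1 h2 => h1.2 h2
    have hU : (inSet z \ C) ∪ C = inSet z :=
      Set.diff_union_of_subset (fun x hx => (hCsub x hx).1)
    have hU' : (inSet (f z) \ C') ∪ C' = inSet (f z) :=
      Set.diff_union_of_subset (fun x hx => (hC'sub x hx).1)
    rw [← hU, ← hU']
    exact ⟨isoGlue _ _ _ _ _ _ hd' iso₁ iso₂ cross cross'⟩
  · -- straight case
    push_neg at hcase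
    have hOO : ∀ y ∈ outSet z \ {z⁻¹}, f y ∈ outSet (f z) \ {(f z)⁻¹} := by
      intro y hy
      have hadj' : (powerGraph H).Adj (f z) (f y) :=
        f.map_rel_iff.2 (adj_of_mem_outSet hy.1)
      rcases tri hz'o hadj' with h' | h' | h'
      · exact absurd h' (hfne y (by simpa using hy.2))
      · exact h'
      · exact absurd h' (hcase y hy)
    have hOO' : ∀ y' ∈ outSet (f z) \ {(f z)⁻¹}, f.symm y' ∈ outSet z \ {z⁻¹} := by
      intro y' hy'
      have hadj : (powerGraph G).Adj z (f.symm y') := by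
        rw [← hsymm_z]
        exact f.symm.map_rel_iff.2 (adj_of_mem_outSet hy'.1)
      rcases tri hzo hadj with h' | h' | h'
      · exact absurd h' (hfne' y' (by simpa using hy'.2))
      · exact h'
      · exfalso
        have hz2 : ¬ IsOfFinOrder (f.symm (f z)) := by rw [hsymm_z]; exact hzo
        have hinv2 : f.symm ((f z)⁻¹) = (f.symm (f z))⁻¹ := by rw [hinv', hsymm_z]
        have hex2 : ∃ y₀ ∈ outSet (f z) \ {(f z)⁻¹},
            f.symm y₀ ∈ inSet (f.symm (f z)) \ {(f.symm (f z))⁻¹} := by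
          rw [hsymm_z]
          exact ⟨y', hy', h'⟩
        have hkey := key_walk f.symm hz'o hz2 hinv2 hex2
        have h2mem : z ^ (2:ℤ) ∈ outSet z \ {z⁻¹} :=
          (mem_outSetMinus_iff hzo).2 ⟨2, by norm_num, by norm_num, by norm_num, rfl⟩
        have h3 := hkey _ (hOO _ h2mem)
        rw [hsymm_z, f.symm_apply_apply] at h3
        have heq := eq_inv_of_mem_both hzo h3.1 h2mem.1
        have : (2:ℤ) = -1 := zpowInj hzo (by rw [heq, zpow_neg, zpow_one])
        norm_num at this
    have hiff : ∀ x : G, x ∈ inSet z ↔ f x ∈ inSet (f z) := by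
      intro x
      constructor
      · intro hxI
        by_cases hxinv : x = z⁻¹
        · subst hxinv; rw [hinv]; exact inv_mem_inSet hz'o
        · have hadj' : (powerGraph H).Adj (f z) (f x) :=
            f.map_rel_iff.2 (adj_of_mem_inSet hxI)
          rcases tri hz'o hadj' with h' | h' | h'
          · exact absurd h' (hfne x hxinv)
          · exfalso
            have h2 := hOO' _ h'
            rw [f.symm_apply_apply] at h2
            exact hxinv (eq_inv_of_mem_both hzo hxI h2.1)
          · exact h'.1
      · intro hxI'
        by_cases hfinv : f x = (f z)⁻¹
        · have h2 : x = z⁻¹ := f.injective (by rw [hfinv, ← hinv])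
          rw [h2]; exact inv_mem_inSet hzo
        · have hadj : (powerGraph G).Adj z x :=
            f.map_rel_iff.1 (adj_of_mem_inSet hxI')
          rcases tri hzo hadj with h' | h' | h'
          · exact absurd (by rw [h']; exact hinv) hfinv
          · exfalso
            have h2 := hOO _ h'
            exact hfinv (eq_inv_of_mem_both hz'o hxI' h2.1)
          · exact h'.1
    exact ⟨isoRestrict f _ _ hiff⟩
end

section
/- Let a, b be integers that are adjacent in the power graph P(ℤ) of the additive group of integers, with a ≠ b and a ≠ -b. Then there is an arc a → b in the directed power graph of ℤ (i.e. b = n·a for some nonzero integer n) if and only if the set S_{a,b} is finite. -/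
/-- `S a b` is the set of integers adjacent to `b` but not to `a` in the power
graph of `ℤ`. -/
def S (a b : ℤ) : Set ℤ :=
  {c : ℤ | (addPowerGraph ℤ).Adj c b ∧ ¬ (addPowerGraph ℤ).Adj c a}

lemma adj_iff_s9 (x y : ℤ) : (addPowerGraph ℤ).Adj x y ↔
    x ≠ y ∧ ∃ n : ℤ, n ≠ 0 ∧ (y = n * x ∨ x = n * y) := by
  simp [addPowerGraph, zsmul_eq_mul, Int.cast_id]

/-- For adjacent integers `a, b` with `a ≠ b` and `a ≠ -b`: there is an arc
`a → b` in the directed power graph of `ℤ` iff `S a b` is finite. -/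
theorem stmt_9 (a b : ℤ) (hab : (addPowerGraph ℤ).Adj a b)
    (h1 : a ≠ b) (h2 : a ≠ -b) :
    addPowArc a b ↔ (S a b).Finite := by
  constructor
  · rintro ⟨-, n, hn, hb⟩
    rw [zsmul_eq_mul, Int.cast_id] at hb
    have hbne : b ≠ 0 := by
      rintro rfl
      rcases mul_eq_zero.1 hb.symm with h | h
      · exact hn h
      · exact h1 (h.symm ▸ rfl)
    apply Set.Finite.subset (Set.finite_Icc (-(b.natAbs : ℤ)) (b.natAbs : ℤ))
    rintro c ⟨hcb, hca⟩
    rw [adj_iff_s9] at hcb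
    obtain ⟨hne, m, hm, h | h⟩ := hcb
    · -- b = m * c, so c ∣ b
      have hdvd : c ∣ b := ⟨m, by rw [h, mul_comm]⟩
      have hd : c.natAbs ∣ b.natAbs := Int.natAbs_dvd_natAbs.2 hdvd
      have := Nat.le_of_dvd (by omega) hd
      simp only [Set.mem_Icc]
      omega
    · -- c = m * b = m * n * a, so c adjacent to a unless c = a
      have hc : c = (m * n) * a := by rw [h, hb]; ring
      have hca' : c = a := by
        by_contra hcane
        exact hca ((adj_iff_s9 c a).2 ⟨hcane, m * n, mul_ne_zero hm hn, Or.inr hc⟩)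
      have hdvd : a ∣ b := ⟨n, by rw [hb, mul_comm]⟩
      have hd : a.natAbs ∣ b.natAbs := Int.natAbs_dvd_natAbs.2 hdvd
      have := Nat.le_of_dvd (by omega) hd
      subst hca'
      simp only [Set.mem_Icc]
      omega
  · intro hfin
    by_contra harc
    rw [adj_iff_s9] at hab
    obtain ⟨-, n, hn, hb | ha⟩ := hab
    · exact harc ⟨h1, n, hn, by rw [zsmul_eq_mul, Int.cast_id]; exact hb⟩
    -- a = n * b, with |n| ≥ 2
    have hbne : b ≠ 0 := by
      rintro rfl; rw [mul_zero] at ha; exact h1 ha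
    have hn1 : n ≠ 1 := by rintro rfl; rw [one_mul] at ha; exact h1 ha
    have hn2 : n ≠ -1 := by rintro rfl; rw [neg_one_mul] at ha; exact h2 ha
    have hnabs : 2 ≤ n.natAbs := by omega
    have hT : {p : ℕ | p.Prime ∧ n.natAbs < p}.Infinite := by
      have : {p : ℕ | p.Prime ∧ n.natAbs < p} = {p : ℕ | p.Prime} \ Set.Iic n.natAbs := by
        ext p; simp only [Set.mem_setOf_eq, Set.mem_diff, Set.mem_Iic]; exact and_congr_right fun _ => by omega
      rw [this]
      exact Nat.infinite_setOf_prime.diff (Set.finite_Iic _)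
    have himg : ((fun p : ℕ => (p : ℤ) * b) '' {p : ℕ | p.Prime ∧ n.natAbs < p}).Infinite := by
      apply hT.image
      intro p _ q _ h
      have : (p : ℤ) = q := mul_right_cancel₀ hbne h
      exact_mod_cast this
    have hsub : ((fun p : ℕ => (p : ℤ) * b) '' {p : ℕ | p.Prime ∧ n.natAbs < p}) ⊆ S a b := by
      rintro x ⟨p, ⟨hp, hpn⟩, rfl⟩
      dsimp only
      have hp0 : (p : ℤ) ≠ 0 := by exact_mod_cast hp.ne_zero
      constructor
      · rw [adj_iff_s9]
        refine ⟨?_, p, hp0, Or.inr rfl⟩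
        intro h
        have h1' : (p : ℤ) * b = 1 * b := by rw [h, one_mul]
        have : (p : ℤ) = 1 := mul_right_cancel₀ hbne h1'
        exact hp.one_lt.ne' (by exact_mod_cast this)
      · rw [adj_iff_s9]
        rintro ⟨-, m, hm, h | h⟩
        · -- a = m * (p * b) : n = m * p, so p ∣ n, contradiction with p > |n|
          have heq : n * b = (m * p) * b := by rw [← ha, h]; ring
          have hn' : n = m * p := mul_right_cancel₀ hbne heq
          have hdvdZ : (p : ℤ) ∣ n := ⟨m, by rw [hn', mul_comm]⟩
          have hdvd : p ∣ n.natAbs := by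
            rwa [Int.natAbs_dvd_natAbs.symm, Int.natAbs_natCast] at hdvdZ
          have := Nat.le_of_dvd (by omega) hdvd
          omega
        · -- p * b = m * a = m * n * b : n ∣ p
          have heq : ((p : ℤ)) * b = (m * n) * b := by rw [h, ha]; ring
          have hp' : (p : ℤ) = m * n := mul_right_cancel₀ hbne heq
          have hdvdZ : n ∣ (p : ℤ) := ⟨m, by rw [hp', mul_comm]⟩
          have hdvd : n.natAbs ∣ p := by
            rwa [Int.natAbs_dvd_natAbs.symm, Int.natAbs_natCast] at hdvdZ
          rcases (Nat.Prime.eq_one_or_self_of_dvd hp _ hdvd) with h' | h' <;> omega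
    exact (himg.mono hsub) hfin
end

section
/- Let G be a torsion-free group of nilpotency class at most 2, and let a, b ∈ G be such that the cyclic subgroups ⟨a⟩ and ⟨b⟩ are distinct maximal cyclic subgroups of G. Then ⟨a⟩ ∩ ⟨b⟩ is the trivial subgroup. -/
private lemma tf_zpow {G : Type*} [Group G]
    (htf : ∀ g : G, g ≠ 1 → ¬ IsOfFinOrder g)
    {z : G} {k : ℤ} (hk : k ≠ 0) (h : z ^ k = 1) : z = 1 := by
  by_contra hz
  exact htf z hz (isOfFinOrder_iff_zpow_eq_one.mpr ⟨k, hk, h⟩)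

private lemma key_cyclic {G : Type*} [Group G]
    (htf : ∀ g : G, g ≠ 1 → ¬ IsOfFinOrder g)
    {a b : G} (hc : Commute a b) {m n : ℤ} (hm : m ≠ 0) (hn : n ≠ 0)
    (h : a ^ m = b ^ n) :
    ∃ c : G, a ∈ Subgroup.zpowers c ∧ b ∈ Subgroup.zpowers c := by
  set g : ℤ := (Int.gcd m n : ℤ) with hg
  have hg0 : g ≠ 0 := by
    rw [hg]
    simp only [ne_eq, Int.natCast_eq_zero, Int.gcd_eq_zero_iff]
    exact fun h => hm h.1
  set m₁ : ℤ := m / g with hm₁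
  set n₁ : ℤ := n / g with hn₁
  have hmd : m = g * m₁ := by
    rw [hm₁, Int.mul_ediv_cancel' (Int.gcd_dvd_left _ _)]
  have hnd : n = g * n₁ := by
    rw [hn₁, Int.mul_ediv_cancel' (Int.gcd_dvd_right _ _)]
  have hroot : a ^ m₁ = b ^ n₁ := by
    have h1 : (a ^ m₁ * (b ^ n₁)⁻¹) ^ g = 1 := by
      have hcc : Commute (a ^ m₁) ((b ^ n₁)⁻¹) :=
        ((hc.zpow_zpow m₁ n₁).inv_right)
      rw [hcc.mul_zpow, inv_zpow, ← zpow_mul, ← zpow_mul, mul_comm m₁ g, mul_comm n₁ g,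
        ← hmd, ← hnd, h]
      simp
    have := tf_zpow htf hg0 h1
    rwa [mul_inv_eq_one] at this
  have hcop : IsCoprime m₁ n₁ := by
    rw [Int.isCoprime_iff_gcd_eq_one, hm₁, hn₁]
    exact Int.gcd_div_gcd_div_gcd (Int.gcd_pos_iff.mpr (Or.inl hm))
  obtain ⟨u, v, huv⟩ := hcop
  -- u * m₁ + v * n₁ = 1
  refine ⟨a ^ v * b ^ u, ⟨n₁, ?_⟩, ⟨m₁, ?_⟩⟩
  · show (a ^ v * b ^ u) ^ n₁ = a
    have hcc : Commute (a ^ v) (b ^ u) := hc.zpow_zpow v u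
    rw [hcc.mul_zpow, ← zpow_mul, ← zpow_mul, mul_comm u n₁, zpow_mul b n₁ u,
      ← hroot, ← zpow_mul, ← zpow_add, mul_comm v n₁]
    rw [show n₁ * v + m₁ * u = 1 by linarith [huv]]
    exact zpow_one a
  · show (a ^ v * b ^ u) ^ m₁ = b
    have hcc : Commute (a ^ v) (b ^ u) := hc.zpow_zpow v u
    rw [hcc.mul_zpow, ← zpow_mul, ← zpow_mul, mul_comm v m₁, zpow_mul a m₁ v,
      hroot, ← zpow_mul, ← zpow_add]
    rw [show n₁ * v + u * m₁ = 1 by linarith [huv]]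
    exact zpow_one b

open scoped commutatorElement

/-- In a torsion-free group of nilpotency class at most 2, distinct maximal
cyclic subgroups `⟨a⟩` and `⟨b⟩` intersect trivially. -/
theorem stmt_11 (G : Type*) [Group G]
    (htf : ∀ g : G, g ≠ 1 → ¬ IsOfFinOrder g)
    (hnil : commutator G ≤ Subgroup.center G)
    (a b : G)
    (ha : IsMaxCyclic (Subgroup.zpowers a))
    (hb : IsMaxCyclic (Subgroup.zpowers b))
    (hab : Subgroup.zpowers a ≠ Subgroup.zpowers b) :
    Subgroup.zpowers a ⊓ Subgroup.zpowers b = ⊥ := by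
  rw [Subgroup.eq_bot_iff_forall]
  rintro x ⟨⟨m, hm⟩, ⟨n, hn⟩⟩
  by_contra hx
  have hm0 : m ≠ 0 := by rintro rfl; exact hx (by simpa using hm.symm)
  have hn0 : n ≠ 0 := by rintro rfl; exact hx (by simpa using hn.symm)
  have hpow : a ^ m = b ^ n := by
    have hm' : a ^ m = x := hm
    have hn' : b ^ n = x := hn
    rw [hm', hn']
  -- commutator of a and b is trivial
  have hzc : ⁅a, b⁆ ∈ Subgroup.center G := hnil (Subgroup.commutator_mem_commutator (Subgroup.mem_top a) (Subgroup.mem_top b))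
  rw [Subgroup.mem_center_iff] at hzc
  have hsemi : SemiconjBy a b (⁅a, b⁆ * b) := by
    unfold SemiconjBy
    group
  have hsemi' : SemiconjBy a (b ^ n) ((⁅a, b⁆ * b) ^ n) := hsemi.zpow_right n
  have hcomzb : Commute (⁅a, b⁆) b := (hzc b).symm
  have hab1 : ⁅a, b⁆ = 1 := by
    have hcn : Commute a (b ^ n) := by rw [← hpow]; exact (Commute.refl a).zpow_right m
    have key : (⁅a, b⁆) ^ n * (b ^ n * a) = b ^ n * a := by
      have h2 := hsemi'.eq
      rw [hcomzb.mul_zpow] at h2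
      rw [← mul_assoc, ← h2, hcn.eq]
    exact tf_zpow htf hn0 (mul_eq_right.mp key)
  have hc : Commute a b := commutatorElement_eq_one_iff_commute.mp hab1
  obtain ⟨c, hac, hbc⟩ := key_cyclic htf hc hm0 hn0 hpow
  have hcyc : IsCyclic (Subgroup.zpowers c) := by
    constructor
    refine ⟨⟨c, Subgroup.mem_zpowers c⟩, ?_⟩
    rintro ⟨x, hxc⟩
    obtain ⟨k, rfl⟩ := Subgroup.mem_zpowers_iff.mp hxc
    exact ⟨k, Subtype.ext (by simp)⟩
  obtain ⟨-, hamax⟩ := ha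
  obtain ⟨-, hbmax⟩ := hb
  have h1 : Subgroup.zpowers a = Subgroup.zpowers c :=
    hamax _ hcyc ((Subgroup.zpowers_le).mpr hac)
  have h2 : Subgroup.zpowers b = Subgroup.zpowers c :=
    hbmax _ hcyc ((Subgroup.zpowers_le).mpr hbc)
  exact hab (h1.trans h2.symm)
end
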